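/- arXiv:1902.08272 — 4 statements merged into one kernel-verified Lean document; each statement's English description precedes it below -/
import Mathlib

section
/- The language K over the alphabet {0,1,#} is recognised by some total parsing expression grammar; that is, K ∈ PEG. -/
/-! ## Parsing expression grammars -/

/-- Parsing expressions over terminal alphabet `α` and non-terminal alphabet `ν`. -/
inductive PExp (α : Type) (ν : Type) : Type where
  | eps : PExp α ν
  | fail : PExp α ν
  | term (a : α) : PExp α ν
  | nt (A : ν) : PExp α ν
  | notP (e : PExp α ν) : PExp α ν
  | andP (e : PExp α ν) : PExp α ν
  | seq (e₁ e₂ : PExp α ν) : PExp α ν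
  | choice (e₁ e₂ : PExp α ν) : PExp α ν

/-- Big-step semantics of the recognition map `Rec` of a PEG with rules `R`:
`PegRec R e x r` holds iff `Rec(e,x)` is defined and equals `r`, where
`r = none` codes `FAIL` and `r = some y` codes the consumed prefix `y` of `x`. -/
inductive PegRec {α ν : Type} (R : ν → PExp α ν) :
    PExp α ν → List α → Option (List α) → Prop where
  | eps (x : List α) : PegRec R .eps x (some [])
  | fail (x : List α) : PegRec R .fail x none
  | termOk (a : α) (z : List α) : PegRec R (.term a) (a :: z) (some [a])
  | termMismatch (a b : α) (z : List α) (h : a ≠ b) : PegRec R (.term a) (b :: z) none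
  | termNil (a : α) : PegRec R (.term a) [] none
  | notFail (e : PExp α ν) (x : List α) :
      PegRec R e x none → PegRec R (.notP e) x (some [])
  | notSucc (e : PExp α ν) (x y : List α) :
      PegRec R e x (some y) → PegRec R (.notP e) x none
  | andSucc (e : PExp α ν) (x y : List α) :
      PegRec R e x (some y) → PegRec R (.andP e) x (some [])
  | andFail (e : PExp α ν) (x : List α) :
      PegRec R e x none → PegRec R (.andP e) x none
  | seqOk (e₁ e₂ : PExp α ν) (y₁ z y₂ : List α) :
      PegRec R e₁ (y₁ ++ z) (some y₁) → PegRec R e₂ z (some y₂) →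
      PegRec R (.seq e₁ e₂) (y₁ ++ z) (some (y₁ ++ y₂))
  | seqFail₁ (e₁ e₂ : PExp α ν) (x : List α) :
      PegRec R e₁ x none → PegRec R (.seq e₁ e₂) x none
  | seqFail₂ (e₁ e₂ : PExp α ν) (y₁ z : List α) :
      PegRec R e₁ (y₁ ++ z) (some y₁) → PegRec R e₂ z none →
      PegRec R (.seq e₁ e₂) (y₁ ++ z) none
  | choice₁ (e₁ e₂ : PExp α ν) (x y : List α) :
      PegRec R e₁ x (some y) → PegRec R (.choice e₁ e₂) x (some y)
  | choice₂ (e₁ e₂ : PExp α ν) (x : List α) (r : Option (List α)) :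
      PegRec R e₁ x none → PegRec R e₂ x r → PegRec R (.choice e₁ e₂) x r
  | ntRule (A : ν) (x : List α) (r : Option (List α)) :
      PegRec R (R A) x r → PegRec R (.nt A) x r

/-- A parsing expression grammar over the (finite) terminal alphabet `α`:
a finite alphabet `ν` of non-terminals, a rule for each non-terminal,
and a starting non-terminal. -/
structure PEG (α : Type) : Type 1 where
  ν : Type
  finNT : Finite ν
  R : ν → PExp α ν
  S : ν

/-- A PEG is total if its recognition map is total (defined on every expression and input). -/
def PEG.Total {α : Type} (G : PEG α) : Prop :=
  ∀ (e : PExp α G.ν) (x : List α), ∃ r, PegRec G.R e x r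

/-- The language recognised by a PEG: strings on which the starting
non-terminal succeeds and consumes the whole input. -/
def PEG.Lang {α : Type} (G : PEG α) : Set (List α) :=
  { x | PegRec G.R (.nt G.S) x (some x) }

/-- A language is in the class `PEG` iff some total parsing expression grammar recognises it. -/
def IsPEGLang {α : Type} (L : Set (List α)) : Prop :=
  ∃ G : PEG α, G.Total ∧ G.Lang = L

/-- The three-symbol alphabet `{0, 1, #}`. -/
inductive HSym : Type where
  | b0 : HSym
  | b1 : HSym
  | hash : HSym
  deriving DecidableEq

instance : Fintype HSym :=
  ⟨{HSym.b0, HSym.b1, HSym.hash}, by intro x; cases x <;> simp⟩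

/-- A string over `{0,1,#}` is *binary* if it contains no `#`. -/
def HSym.IsBin (w : List HSym) : Prop := HSym.hash ∉ w

/-- The language `K = { w₁#w₂#⋯#w_N#x : N ≥ 1, w₁,…,w_N,x ∈ {0,1}*, ∃ i, xʳ = wᵢ }`
over the alphabet `{0,1,#}`. -/
def LangK : Set (List HSym) :=
  { s | ∃ (ws : List (List HSym)) (x : List HSym),
      ws ≠ [] ∧ (∀ w ∈ ws, HSym.IsBin w) ∧ HSym.IsBin x ∧
      s = (ws.map (fun w => w ++ [HSym.hash])).flatten ++ x ∧
      x.reverse ∈ ws }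

namespace KPEG

variable {α ν : Type} {R : ν → PExp α ν}

/-- Success consumes a prefix. -/
theorem prefix_of_some {e : PExp α ν} {x y : List α}
    (h : PegRec R e x (some y)) : ∃ z, x = y ++ z := by
  generalize hr : some y = r at h
  induction h generalizing y with
  | eps x => exact ⟨x, by simpa using (Option.some.inj hr) ▸ rfl⟩
  | fail => exact absurd hr (by simp)
  | termOk a z => cases hr; exact ⟨z, rfl⟩
  | termMismatch => exact absurd hr (by simp)
  | termNil => exact absurd hr (by simp)
  | notFail e x _ => cases hr; exact ⟨x, rfl⟩
  | notSucc => exact absurd hr (by simp)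
  | andSucc e x y _ => cases hr; exact ⟨x, rfl⟩
  | andFail => exact absurd hr (by simp)
  | seqOk e₁ e₂ y₁ z y₂ h1 h2 ih1 ih2 =>
      cases hr
      obtain ⟨z₂, hz₂⟩ := ih2 rfl
      exact ⟨z₂, by simp [hz₂]⟩
  | seqFail₁ => exact absurd hr (by simp)
  | seqFail₂ => exact absurd hr (by simp)
  | choice₁ e₁ e₂ x y h ih => exact ih hr
  | choice₂ e₁ e₂ x r h1 h2 ih1 ih2 => exact ih2 hr
  | ntRule A x r h ih => exact ih hr

/-- The recognition relation is deterministic. -/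
theorem pegDet {e : PExp α ν} {x : List α} {r₁ r₂ : Option (List α)}
    (h₁ : PegRec R e x r₁) (h₂ : PegRec R e x r₂) : r₁ = r₂ := by
  induction h₁ generalizing r₂ with
  | eps x => cases h₂; rfl
  | fail x => cases h₂; rfl
  | termOk a z => cases h₂ with
      | termOk => rfl
      | termMismatch _ _ _ h => exact absurd rfl h
  | termMismatch a b z h => cases h₂ with
      | termOk => exact absurd rfl h
      | termMismatch => rfl
  | termNil a => cases h₂; rfl
  | notFail e x h ih => cases h₂ with
      | notFail => rfl
      | notSucc _ _ y h' => exact absurd (ih h') (by simp)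
  | notSucc e x y h ih => cases h₂ with
      | notFail _ _ h' => exact absurd (ih h') (by simp)
      | notSucc => rfl
  | andSucc e x y h ih => cases h₂ with
      | andSucc => rfl
      | andFail _ _ h' => exact absurd (ih h') (by simp)
  | andFail e x h ih => cases h₂ with
      | andSucc _ _ y h' => exact absurd (ih h') (by simp)
      | andFail => rfl
  | seqOk e₁ e₂ y₁ z y₂ h1 h2 ih1 ih2 =>
      generalize hx : y₁ ++ z = w at h₂
      cases h₂ with
      | seqOk e₁ e₂ y₁' z' y₂' h1' h2' =>
          have hy : some y₁ = some y₁' := ih1 (hx.symm ▸ h1')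
          cases hy
          have hz : z = z' := List.append_cancel_left hx
          cases hz
          have := ih2 h2'
          simp_all
      | seqFail₁ _ _ _ h' => exact absurd (ih1 (hx.symm ▸ h')) (by simp)
      | seqFail₂ e₁ e₂ y₁' z' h1' h2' =>
          have hy : some y₁ = some y₁' := ih1 (hx.symm ▸ h1')
          cases hy
          have hz : z = z' := List.append_cancel_left hx
          cases hz
          exact absurd (ih2 h2') (by simp)
  | seqFail₁ e₁ e₂ x h ih =>
      cases h₂ with
      | seqOk e₁ e₂ y₁' z' y₂' h1' h2' => exact absurd (ih h1') (by simp)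
      | seqFail₁ => rfl
      | seqFail₂ e₁ e₂ y₁' z' h1' h2' => exact absurd (ih h1') (by simp)
  | seqFail₂ e₁ e₂ y₁ z h1 h2 ih1 ih2 =>
      generalize hx : y₁ ++ z = w at h₂
      cases h₂ with
      | seqOk e₁ e₂ y₁' z' y₂' h1' h2' =>
          have hy : some y₁ = some y₁' := ih1 (hx.symm ▸ h1')
          cases hy
          have hz : z = z' := List.append_cancel_left hx
          cases hz
          exact absurd (ih2 h2') (by simp)
      | seqFail₁ _ _ _ h' => exact absurd (ih1 (hx.symm ▸ h')) (by simp)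
      | seqFail₂ e₁ e₂ y₁' z' h1' h2' =>
          have hy : some y₁ = some y₁' := ih1 (hx.symm ▸ h1')
          cases hy
          have hz : z = z' := List.append_cancel_left hx
          cases hz
          rfl
  | choice₁ e₁ e₂ x y h ih =>
      cases h₂ with
      | choice₁ _ _ _ _ h' => exact ih h'
      | choice₂ _ _ _ _ h' _ => exact absurd (ih h') (by simp)
  | choice₂ e₁ e₂ x r h1 h2 ih1 ih2 =>
      cases h₂ with
      | choice₁ _ _ _ y h' => exact absurd (ih1 h') (by simp)
      | choice₂ _ _ _ _ _ h' => exact ih2 h'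
  | ntRule A x r h ih =>
      cases h₂ with
      | ntRule _ _ _ h' => exact ih h'

end KPEG
namespace KPEG
open HSym

inductive NT : Type | S | A | M | B
  deriving DecidableEq

instance : Fintype NT :=
  ⟨{NT.S, NT.A, NT.M, NT.B}, by intro x; cases x <;> simp⟩

abbrev P := PExp HSym NT

/-- end-of-input test -/
def Eend : P := .seq (.notP (.term b0)) (.seq (.notP (.term b1)) (.notP (.term hash)))

def Rul : NT → P
  | .B => .choice (.seq (.term b0) (.nt .B)) (.choice (.seq (.term b1) (.nt .B)) .eps)
  | .M => .choice (.seq (.nt .B) (.seq (.term hash) (.nt .M))) .eps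
  | .A => .choice (.seq (.term b0) (.seq (.nt .A) (.term b0)))
          (.choice (.seq (.term b1) (.seq (.nt .A) (.term b1)))
                   (.seq (.term hash) (.nt .M)))
  | .S => .choice (.seq (.nt .A) Eend) (.seq (.nt .B) (.seq (.term hash) (.nt .S)))

abbrev Rec (e : P) (x : List HSym) (r : Option (List HSym)) : Prop := PegRec Rul e x r

/-- maximal binary (hash-free) prefix -/
def binPre : List HSym → List HSym
  | [] => []
  | .hash :: _ => []
  | .b0 :: t => .b0 :: binPre t
  | .b1 :: t => .b1 :: binPre t

def binSuf : List HSym → List HSym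
  | [] => []
  | .hash :: t => .hash :: t
  | .b0 :: t => binSuf t
  | .b1 :: t => binSuf t

theorem binPre_append_binSuf : ∀ x, binPre x ++ binSuf x = x
  | [] => rfl
  | .hash :: t => rfl
  | .b0 :: t => by simp [binPre, binSuf, binPre_append_binSuf t]
  | .b1 :: t => by simp [binPre, binSuf, binPre_append_binSuf t]

theorem isBin_binPre : ∀ x, IsBin (binPre x)
  | [] => by simp [IsBin, binPre]
  | .hash :: t => by simp [IsBin, binPre]
  | .b0 :: t => by
      have := isBin_binPre t
      simp_all [IsBin, binPre]
  | .b1 :: t => by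
      have := isBin_binPre t
      simp_all [IsBin, binPre]

theorem binSuf_cases : ∀ x, binSuf x = [] ∨ ∃ t, binSuf x = .hash :: t
  | [] => Or.inl rfl
  | .hash :: t => Or.inr ⟨t, rfl⟩
  | .b0 :: t => binSuf_cases t
  | .b1 :: t => binSuf_cases t

theorem binPre_bin {w : List HSym} (hw : IsBin w) : binPre w = w := by
  induction w with
  | nil => rfl
  | cons c t ih =>
      cases c with
      | hash => exact absurd (List.mem_cons_self) hw
      | b0 => simp only [binPre]; rw [ih (fun h => hw (List.mem_cons_of_mem _ h))]
      | b1 => simp only [binPre]; rw [ih (fun h => hw (List.mem_cons_of_mem _ h))]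

theorem binPre_bin_append {w : List HSym} (hw : IsBin w) (t : List HSym) :
    binPre (w ++ .hash :: t) = w := by
  induction w with
  | nil => rfl
  | cons c u ih =>
      cases c with
      | hash => exact absurd (List.mem_cons_self) hw
      | b0 => simpa [List.cons_append, binPre] using ih (fun h => hw (List.mem_cons_of_mem _ h))
      | b1 => simpa [List.cons_append, binPre] using ih (fun h => hw (List.mem_cons_of_mem _ h))

theorem binSuf_bin_append {w : List HSym} (hw : IsBin w) (t : List HSym) :
    binSuf (w ++ .hash :: t) = .hash :: t := by
  induction w with
  | nil => rfl
  | cons c u ih =>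
      cases c with
      | hash => exact absurd (List.mem_cons_self) hw
      | b0 => simpa [binSuf] using ih (fun h => hw (List.mem_cons_of_mem _ h))
      | b1 => simpa [binSuf] using ih (fun h => hw (List.mem_cons_of_mem _ h))

theorem binSuf_bin {w : List HSym} (hw : IsBin w) : binSuf w = [] := by
  induction w with
  | nil => rfl
  | cons c u ih =>
      cases c with
      | hash => exact absurd (List.mem_cons_self) hw
      | b0 => simpa [binSuf] using ih (fun h => hw (List.mem_cons_of_mem _ h))
      | b1 => simpa [binSuf] using ih (fun h => hw (List.mem_cons_of_mem _ h))

/-- B consumes exactly the maximal binary prefix, on any input. -/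
theorem Brun : ∀ x, Rec (.nt .B) x (some (binPre x))
  | [] => by
      refine .ntRule _ _ _ ?_
      show Rec (.choice _ _) [] _
      exact .choice₂ _ _ _ _ (.seqFail₁ _ _ _ (.termNil _))
        (.choice₂ _ _ _ _ (.seqFail₁ _ _ _ (.termNil _)) (.eps _))
  | .hash :: t => by
      refine .ntRule _ _ _ ?_
      exact .choice₂ _ _ _ _ (.seqFail₁ _ _ _ (.termMismatch _ _ _ (by simp)))
        (.choice₂ _ _ _ _ (.seqFail₁ _ _ _ (.termMismatch _ _ _ (by simp))) (.eps _))
  | .b0 :: t => by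
      refine .ntRule _ _ _ ?_
      refine .choice₁ _ _ _ _ ?_
      have h := PegRec.seqOk (R := Rul) (.term b0) (.nt .B) [b0] t (binPre t)
        (.termOk _ _) (Brun t)
      simpa [binPre] using h
  | .b1 :: t => by
      refine .ntRule _ _ _ ?_
      refine .choice₂ _ _ _ _ (.seqFail₁ _ _ _ (.termMismatch _ _ _ (by simp))) ?_
      refine .choice₁ _ _ _ _ ?_
      have h := PegRec.seqOk (R := Rul) (.term b1) (.nt .B) [b1] t (binPre t)
        (.termOk _ _) (Brun t)
      simpa [binPre] using h

end KPEG
namespace KPEG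

variable {α ν : Type} {R : ν → PExp α ν}

theorem term_some_inv {a : α} {x y : List α} (h : PegRec R (.term a) x (some y)) :
    ∃ z, x = a :: z ∧ y = [a] := by
  cases h; exact ⟨_, rfl, rfl⟩

theorem eps_inv {x : List α} {r} (h : PegRec R .eps x r) : r = some [] := by
  cases h; rfl

theorem seq_some_inv {e₁ e₂ : PExp α ν} {x y : List α}
    (h : PegRec R (.seq e₁ e₂) x (some y)) :
    ∃ y₁ z y₂, x = y₁ ++ z ∧ y = y₁ ++ y₂ ∧
      PegRec R e₁ x (some y₁) ∧ PegRec R e₂ z (some y₂) := by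
  cases h with
  | seqOk e₁ e₂ y₁ z y₂ h1 h2 => exact ⟨y₁, z, y₂, rfl, rfl, h1, h2⟩

theorem choice_inv {e₁ e₂ : PExp α ν} {x : List α} {r}
    (h : PegRec R (.choice e₁ e₂) x r) :
    PegRec R e₁ x r ∨ (PegRec R e₁ x none ∧ PegRec R e₂ x r) := by
  cases h with
  | choice₁ _ _ _ _ h => exact Or.inl h
  | choice₂ _ _ _ _ h1 h2 => exact Or.inr ⟨h1, h2⟩

theorem nt_inv {A : ν} {x : List α} {r} (h : PegRec R (.nt A) x r) :
    PegRec R (R A) x r := by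
  cases h with
  | ntRule _ _ _ h => exact h

open HSym

def flat (ws : List (List HSym)) : List HSym :=
  (ws.map (fun w => w ++ [HSym.hash])).flatten

@[simp] theorem flat_nil : flat [] = [] := rfl
@[simp] theorem flat_cons (w ws) : flat (w :: ws) = w ++ hash :: flat ws := by
  simp [flat]

/-- if no block ahead, M succeeds consuming nothing -/
theorem M_base {x : List HSym} (hx : binSuf x = []) : Rec (.nt .M) x (some []) := by
  have hxb : binPre x = x := by
    have := binPre_append_binSuf x; rwa [hx, List.append_nil] at this
  have hB : Rec (.nt .B) (x ++ []) (some x) := by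
    simpa [hxb] using Brun x
  have hfail : Rec (.seq (.nt .B) (.seq (.term hash) (.nt .M))) (x ++ []) none :=
    .seqFail₂ _ _ x [] hB (.seqFail₁ _ _ _ (.termNil _))
  exact .ntRule _ _ _ (.choice₂ _ _ _ _ (by simpa using hfail) (.eps _))

/-- if a full block is ahead, M consumes it and continues -/
theorem M_step {p t m : List HSym} (hp : IsBin p)
    (h : Rec (.nt .M) t (some m)) :
    Rec (.nt .M) (p ++ hash :: t) (some (p ++ hash :: m)) := by
  have hB : Rec (.nt .B) (p ++ hash :: t) (some p) := by
    have := Brun (p ++ hash :: t)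
    rwa [binPre_bin_append hp t] at this
  have hin : Rec (.seq (.term hash) (.nt .M)) (hash :: t) (some (hash :: m)) := by
    have := PegRec.seqOk (R := Rul) (.term hash) (.nt .M) [hash] t m (.termOk _ _) h
    simpa using this
  have hout := PegRec.seqOk (R := Rul) (.nt .B) (.seq (.term hash) (.nt .M))
    p (hash :: t) (hash :: m) hB hin
  exact .ntRule _ _ _ (.choice₁ _ _ _ _ hout)

theorem Msucc : ∀ (ws : List (List HSym)) (t : List HSym),
    (∀ w ∈ ws, IsBin w) → IsBin t → Rec (.nt .M) (flat ws ++ t) (some (flat ws))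
  | [], t, _, ht => by simpa using M_base (binSuf_bin ht)
  | w :: ws, t, hws, ht => by
      have hw : IsBin w := hws w (List.mem_cons_self)
      have ih := Msucc ws t (fun b hb => hws b (List.mem_cons_of_mem _ hb)) ht
      have := M_step hw ih
      simpa using this

theorem Mtot : ∀ (n : ℕ) (x : List HSym), x.length ≤ n → ∃ m, Rec (.nt .M) x (some m) := by
  intro n
  induction n with
  | zero =>
      intro x hx
      have : x = [] := List.length_eq_zero_iff.mp (Nat.le_zero.mp hx)
      subst this
      exact ⟨[], M_base rfl⟩
  | succ n ih =>
      intro x hx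
      rcases binSuf_cases x with h | ⟨t, h⟩
      · exact ⟨[], M_base h⟩
      · have hsplit : x = binPre x ++ hash :: t := by
          rw [← h, binPre_append_binSuf]
        have hlen : t.length ≤ n := by
          have := congrArg List.length hsplit
          simp only [List.length_append, List.length_cons] at this
          omega
        obtain ⟨m, hm⟩ := ih t hlen
        have hstep := M_step (isBin_binPre x) hm
        rw [← hsplit] at hstep
        exact ⟨_, hstep⟩

/-- Inversion for M: what it consumes is a sequence of blocks, and the
remainder is hash-free. -/
theorem Minv : ∀ (n : ℕ) (x m : List HSym), x.length ≤ n →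
    Rec (.nt .M) x (some m) →
    ∃ bs rem, (∀ b ∈ bs, IsBin b) ∧ IsBin rem ∧ x = m ++ rem ∧ m = flat bs := by
  intro n
  induction n with
  | zero =>
      intro x m hx h
      have : x = [] := List.length_eq_zero_iff.mp (Nat.le_zero.mp hx)
      subst this
      have := pegDet h (M_base (x := []) rfl)
      cases this
      exact ⟨[], [], by simp, by simp [IsBin], rfl, rfl⟩
  | succ n ih =>
      intro x m hx h
      have h' := nt_inv h
      rcases choice_inv h' with h1 | ⟨h1, h2⟩
      · -- block consumed
        obtain ⟨y₁, z, y₂, hxz, hm, hB, hin⟩ := seq_some_inv h1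
        have hy₁ : y₁ = binPre x := by
          have := pegDet hB (Brun x); simpa using this
        obtain ⟨z₂, w₂, y₂₂, hz2, hy2, hterm, hM⟩ := seq_some_inv hin
        obtain ⟨z', hz', hw⟩ := term_some_inv hterm
        subst hw hy₁
        have hzw : z = hash :: w₂ := by simpa using hz2
        subst hzw
        have hlen : w₂.length ≤ n := by
          have := congrArg List.length hxz
          simp only [List.length_append, List.length_cons] at this
          omega
        obtain ⟨bs, rem, hbs, hrem, hsplit, hflat⟩ := ih w₂ y₂₂ hlen hM
        refine ⟨binPre x :: bs, rem, ?_, hrem, ?_, ?_⟩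
        · intro b hb
          rcases List.mem_cons.mp hb with rfl | hb
          · exact isBin_binPre x
          · exact hbs b hb
        · rw [hxz, hsplit, hm, hy2]; simp
        · rw [hm, hy2, hflat]; simp
      · -- second alternative: no block, m = []
        have hm : m = [] := by simpa using eps_inv h2
        subst hm
        rcases binSuf_cases x with hsuf | ⟨t, hsuf⟩
        · have hxb : binPre x = x := by
            have := binPre_append_binSuf x; rwa [hsuf, List.append_nil] at this
          refine ⟨[], x, by simp, ?_, by simp, rfl⟩
          · rw [← hxb]; exact isBin_binPre x
        · -- contradiction: the first alternative would succeed
          have hsplit : x = binPre x ++ hash :: t := by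
            rw [← hsuf, binPre_append_binSuf]
          obtain ⟨mt, hmt⟩ := Mtot t.length t le_rfl
          have hstep := M_step (isBin_binPre x) hmt
          rw [← hsplit] at hstep
          have h1' := nt_inv hstep
          rcases choice_inv h1' with hgood | ⟨hbad, heps⟩
          · exact absurd (pegDet h1 hgood) (by simp)
          · have := eps_inv heps
            simp at this

end KPEG
namespace KPEG
open HSym

theorem Eend_nil : Rec Eend [] (some []) := by
  have h0 : Rec (.notP (.term b0)) [] (some []) := .notFail _ _ (.termNil _)
  have h1 : Rec (.notP (.term b1)) [] (some []) := .notFail _ _ (.termNil _)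
  have h2 : Rec (.notP (.term hash)) [] (some []) := .notFail _ _ (.termNil _)
  have hin := PegRec.seqOk (R := Rul) (.notP (.term b1)) (.notP (.term hash))
    [] [] [] h1 h2
  have hout := PegRec.seqOk (R := Rul) (.notP (.term b0))
    (.seq (.notP (.term b1)) (.notP (.term hash))) [] [] [] h0 hin
  simpa [Eend] using hout

theorem Eend_cons (c : HSym) (z : List HSym) : Rec Eend (c :: z) none := by
  cases c with
  | b0 => exact .seqFail₁ _ _ _ (.notSucc _ _ _ (.termOk _ _))
  | b1 =>
      have h0 : Rec (.notP (.term b0)) (b1 :: z) (some []) :=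
        .notFail _ _ (.termMismatch _ _ _ (by simp))
      have hin : Rec (.seq (.notP (.term b1)) (.notP (.term hash))) (b1 :: z) none :=
        .seqFail₁ _ _ _ (.notSucc _ _ _ (.termOk _ _))
      have := PegRec.seqFail₂ (R := Rul) (.notP (.term b0))
        (.seq (.notP (.term b1)) (.notP (.term hash))) [] (b1 :: z) (by simpa using h0) hin
      simpa [Eend] using this
  | hash =>
      have h0 : Rec (.notP (.term b0)) (hash :: z) (some []) :=
        .notFail _ _ (.termMismatch _ _ _ (by simp))
      have h1 : Rec (.notP (.term b1)) (hash :: z) (some []) :=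
        .notFail _ _ (.termMismatch _ _ _ (by simp))
      have hin : Rec (.seq (.notP (.term b1)) (.notP (.term hash))) (hash :: z) none :=
        PegRec.seqFail₂ _ _ [] (hash :: z) (by simpa using h1)
          (.notSucc _ _ _ (.termOk _ _))
      have := PegRec.seqFail₂ (R := Rul) (.notP (.term b0))
        (.seq (.notP (.term b1)) (.notP (.term hash))) [] (hash :: z) (by simpa using h0) hin
      simpa [Eend] using this

theorem Eend_tot (x : List HSym) : ∃ r, Rec Eend x r := by
  cases x with
  | nil => exact ⟨_, Eend_nil⟩
  | cons c z => exact ⟨_, Eend_cons c z⟩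

theorem Eend_some_inv {x y : List HSym} (h : Rec Eend x (some y)) : x = [] ∧ y = [] := by
  cases x with
  | nil =>
      have := pegDet h Eend_nil
      simp_all
  | cons c z =>
      have := pegDet h (Eend_cons c z)
      simp_all

/-- Construction: A matches a "deep palindrome" `w # mid wʳ`. -/
theorem Asucc : ∀ (w : List HSym), IsBin w → ∀ (mid t : List HSym),
    Rec (.nt .M) (mid ++ (w.reverse ++ t)) (some mid) →
    Rec (.nt .A) (w ++ hash :: (mid ++ (w.reverse ++ t)))
      (some (w ++ hash :: (mid ++ w.reverse)))
  | [], _, mid, t, hM => by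
      have hin := PegRec.seqOk (R := Rul) (.term hash) (.nt .M)
        [hash] (mid ++ ([] ++ t)) mid (.termOk _ _) hM
      refine .ntRule _ _ _ ?_
      refine .choice₂ _ _ _ _ (.seqFail₁ _ _ _ (.termMismatch _ _ _ (by simp))) ?_
      refine .choice₂ _ _ _ _ (.seqFail₁ _ _ _ (.termMismatch _ _ _ (by simp))) ?_
      simpa using hin
  | c :: w, hw, mid, t, hM => by
      have hwbin : IsBin w := fun h => hw (List.mem_cons_of_mem _ h)
      have hM' : Rec (.nt .M) (mid ++ (w.reverse ++ (c :: t))) (some mid) := by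
        have : mid ++ ((c :: w).reverse ++ t) = mid ++ (w.reverse ++ (c :: t)) := by
          simp
        rwa [this] at hM
      have ih := Asucc w hwbin mid (c :: t) hM'
      -- inner A consumes  w ++ hash :: (mid ++ w.reverse), leaving  c :: t
      have hsplit : w ++ hash :: (mid ++ (w.reverse ++ (c :: t)))
          = (w ++ hash :: (mid ++ w.reverse)) ++ (c :: t) := by simp
      cases c with
      | hash => exact absurd (List.mem_cons_self) hw
      | b0 =>
          have ih' : Rec (.nt .A) ((w ++ hash :: (mid ++ w.reverse)) ++ (b0 :: t))
              (some (w ++ hash :: (mid ++ w.reverse))) := by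
            rw [← hsplit]; exact ih
          have hin := PegRec.seqOk (R := Rul) (.nt .A) (.term b0)
            (w ++ hash :: (mid ++ w.reverse)) (b0 :: t) [b0] ih' (.termOk _ _)
          have hout := PegRec.seqOk (R := Rul) (.term b0) (.seq (.nt .A) (.term b0))
            [b0] (w ++ hash :: (mid ++ (w.reverse ++ (b0 :: t))))
            ((w ++ hash :: (mid ++ w.reverse)) ++ [b0]) (.termOk _ _)
            (by rw [hsplit]; exact hin)
          refine .ntRule _ _ _ (.choice₁ _ _ _ _ ?_)
          simpa using hout
      | b1 =>
          have ih' : Rec (.nt .A) ((w ++ hash :: (mid ++ w.reverse)) ++ (b1 :: t))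
              (some (w ++ hash :: (mid ++ w.reverse))) := by
            rw [← hsplit]; exact ih
          have hin := PegRec.seqOk (R := Rul) (.nt .A) (.term b1)
            (w ++ hash :: (mid ++ w.reverse)) (b1 :: t) [b1] ih' (.termOk _ _)
          have hout := PegRec.seqOk (R := Rul) (.term b1) (.seq (.nt .A) (.term b1))
            [b1] (w ++ hash :: (mid ++ (w.reverse ++ (b1 :: t))))
            ((w ++ hash :: (mid ++ w.reverse)) ++ [b1]) (.termOk _ _)
            (by rw [hsplit]; exact hin)
          refine .ntRule _ _ _ (.choice₂ _ _ _ _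
            (.seqFail₁ _ _ _ (.termMismatch _ _ _ (by simp))) (.choice₁ _ _ _ _ ?_))
          simpa using hout

end KPEG
namespace KPEG
open HSym

theorem A_nil : Rec (.nt .A) [] none :=
  .ntRule _ _ _ (.choice₂ _ _ _ _ (.seqFail₁ _ _ _ (.termNil _))
    (.choice₂ _ _ _ _ (.seqFail₁ _ _ _ (.termNil _)) (.seqFail₁ _ _ _ (.termNil _))))

theorem Ainv : ∀ (n : ℕ) (u y : List HSym), u.length ≤ n →
    Rec (.nt .A) u (some y) →
    ∃ w m rest, IsBin w ∧ y = w ++ hash :: (m ++ w.reverse) ∧ u = y ++ rest ∧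
      Rec (.nt .M) (m ++ (w.reverse ++ rest)) (some m) := by
  intro n
  induction n with
  | zero =>
      intro u y hu h
      have : u = [] := List.length_eq_zero_iff.mp (Nat.le_zero.mp hu)
      subst this
      exact absurd (pegDet h A_nil) (by simp)
  | succ n ih =>
      intro u y hu h
      have h' := nt_inv h
      rcases choice_inv h' with h1 | ⟨_, h23⟩
      · -- 0 A 0 branch
        obtain ⟨y₁, z, y₂, hu1, hy, hterm, hin⟩ := seq_some_inv h1
        obtain ⟨u', hu', hy₁⟩ := term_some_inv hterm
        subst hy₁
        have huz : u' = z := by rw [hu'] at hu1; simpa using hu1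
        subst huz
        obtain ⟨ya, zb, yb, hz2, hy2, hA, hterm2⟩ := seq_some_inv hin
        obtain ⟨rest', hzb, hyb⟩ := term_some_inv hterm2
        have hlen : u'.length ≤ n := by
          have := congrArg List.length hu'
          simp only [List.length_cons] at this
          omega
        obtain ⟨w', m, rest₁, hbw, hya, hzr, hM⟩ := ih u' ya hlen hA
        have hrest₁ : rest₁ = zb :=
          List.append_cancel_left (hzr.symm.trans hz2)
        refine ⟨b0 :: w', m, rest', ?_, ?_, ?_, ?_⟩
        · intro hc; rcases List.mem_cons.mp hc with hc | hc
          · exact absurd hc.symm (by simp)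
          · exact hbw hc
        · rw [hy, hy2, hyb, hya]; simp
        · rw [hu1, hz2, hzb, hy, hy2, hyb, hya]; simp
        · have hcast : m ++ ((b0 :: w').reverse ++ rest') = m ++ (w'.reverse ++ rest₁) := by
            rw [hrest₁, hzb]; simp
          rw [hcast]; exact hM
      rcases choice_inv h23 with h2 | ⟨_, h3⟩
      · -- 1 A 1 branch
        obtain ⟨y₁, z, y₂, hu1, hy, hterm, hin⟩ := seq_some_inv h2
        obtain ⟨u', hu', hy₁⟩ := term_some_inv hterm
        subst hy₁
        have huz : u' = z := by rw [hu'] at hu1; simpa using hu1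
        subst huz
        obtain ⟨ya, zb, yb, hz2, hy2, hA, hterm2⟩ := seq_some_inv hin
        obtain ⟨rest', hzb, hyb⟩ := term_some_inv hterm2
        have hlen : u'.length ≤ n := by
          have := congrArg List.length hu'
          simp only [List.length_cons] at this
          omega
        obtain ⟨w', m, rest₁, hbw, hya, hzr, hM⟩ := ih u' ya hlen hA
        have hrest₁ : rest₁ = zb :=
          List.append_cancel_left (hzr.symm.trans hz2)
        refine ⟨b1 :: w', m, rest', ?_, ?_, ?_, ?_⟩
        · intro hc; rcases List.mem_cons.mp hc with hc | hc
          · exact absurd hc.symm (by simp)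
          · exact hbw hc
        · rw [hy, hy2, hyb, hya]; simp
        · rw [hu1, hz2, hzb, hy, hy2, hyb, hya]; simp
        · have hcast : m ++ ((b1 :: w').reverse ++ rest') = m ++ (w'.reverse ++ rest₁) := by
            rw [hrest₁, hzb]; simp
          rw [hcast]; exact hM
      · -- # M branch
        obtain ⟨y₁, z, y₂, hu1, hy, hterm, hM⟩ := seq_some_inv h3
        obtain ⟨u', hu', hy₁⟩ := term_some_inv hterm
        subst hy₁
        obtain ⟨rest, hrest⟩ := prefix_of_some hM
        refine ⟨[], y₂, rest, by simp [IsBin], by simpa using hy, ?_, ?_⟩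
        · rw [hu1, hrest, hy]; simp
        · simpa [hrest] using hM

end KPEG
namespace KPEG
open HSym

theorem Atot_fail0 {z : List HSym} (hfail : Rec (.seq (.nt .A) (.term b0)) z none) :
    Rec (.nt .A) (b0 :: z) none := by
  have h1 : Rec (.seq (.term b0) (.seq (.nt .A) (.term b0))) ([b0] ++ z) none :=
    .seqFail₂ _ _ [b0] z (.termOk _ _) hfail
  exact .ntRule _ _ _ (.choice₂ _ _ _ _ (by simpa using h1)
    (.choice₂ _ _ _ _ (.seqFail₁ _ _ _ (.termMismatch _ _ _ (by simp)))
      (.seqFail₁ _ _ _ (.termMismatch _ _ _ (by simp)))))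

theorem Atot_fail1 {z : List HSym} (hfail : Rec (.seq (.nt .A) (.term b1)) z none) :
    Rec (.nt .A) (b1 :: z) none := by
  have h1 : Rec (.seq (.term b1) (.seq (.nt .A) (.term b1))) ([b1] ++ z) none :=
    .seqFail₂ _ _ [b1] z (.termOk _ _) hfail
  exact .ntRule _ _ _ (.choice₂ _ _ _ _ (.seqFail₁ _ _ _ (.termMismatch _ _ _ (by simp)))
    (.choice₂ _ _ _ _ (by simpa using h1)
      (.seqFail₁ _ _ _ (.termMismatch _ _ _ (by simp)))))

theorem Atot_suc0 {z y : List HSym} (hin : Rec (.seq (.nt .A) (.term b0)) z (some y)) :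
    Rec (.nt .A) (b0 :: z) (some (b0 :: y)) := by
  have h := PegRec.seqOk (R := Rul) (.term b0) (.seq (.nt .A) (.term b0)) [b0] z y
    (.termOk _ _) hin
  exact .ntRule _ _ _ (.choice₁ _ _ _ _ (by simpa using h))

theorem Atot_suc1 {z y : List HSym} (hin : Rec (.seq (.nt .A) (.term b1)) z (some y)) :
    Rec (.nt .A) (b1 :: z) (some (b1 :: y)) := by
  have h := PegRec.seqOk (R := Rul) (.term b1) (.seq (.nt .A) (.term b1)) [b1] z y
    (.termOk _ _) hin
  exact .ntRule _ _ _ (.choice₂ _ _ _ _ (.seqFail₁ _ _ _ (.termMismatch _ _ _ (by simp)))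
    (.choice₁ _ _ _ _ (by simpa using h)))

/-- the inner sequence `A c` always has a result, given that `A` does -/
theorem Ainner_tot (c : HSym) {z : List HSym} {ra : Option (List HSym)}
    (hA : Rec (.nt .A) z ra) :
    ∃ r, Rec (.seq (.nt .A) (.term c)) z r := by
  cases ra with
  | none => exact ⟨none, .seqFail₁ _ _ _ hA⟩
  | some ya =>
      obtain ⟨zb, hzb⟩ := prefix_of_some hA
      subst hzb
      cases zb with
      | nil => exact ⟨none, .seqFail₂ _ _ ya [] hA (.termNil _)⟩
      | cons d zb' =>
          by_cases hd : c = d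
          · subst hd
            exact ⟨_, .seqOk _ _ ya (c :: zb') [c] hA (.termOk _ _)⟩
          · exact ⟨none, .seqFail₂ _ _ ya (d :: zb') hA (.termMismatch _ _ _ hd)⟩

theorem Atot : ∀ (n : ℕ) (u : List HSym), u.length ≤ n → ∃ r, Rec (.nt .A) u r := by
  intro n
  induction n with
  | zero =>
      intro u hu
      have : u = [] := List.length_eq_zero_iff.mp (Nat.le_zero.mp hu)
      subst this
      exact ⟨none, A_nil⟩
  | succ n ih =>
      intro u hu
      cases u with
      | nil => exact ⟨none, A_nil⟩
      | cons c z =>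
          have hlen : z.length ≤ n := by
            simp only [List.length_cons] at hu; omega
          cases c with
          | hash =>
              obtain ⟨m, hm⟩ := Mtot z.length z le_rfl
              have h := PegRec.seqOk (R := Rul) (.term hash) (.nt .M) [hash] z m
                (.termOk _ _) hm
              exact ⟨_, .ntRule _ _ _
                (.choice₂ _ _ _ _ (.seqFail₁ _ _ _ (.termMismatch _ _ _ (by simp)))
                  (.choice₂ _ _ _ _ (.seqFail₁ _ _ _ (.termMismatch _ _ _ (by simp)))
                    (by simpa using h)))⟩
          | b0 =>
              obtain ⟨ra, hA⟩ := ih z hlen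
              obtain ⟨r, hr⟩ := Ainner_tot b0 hA
              cases r with
              | none => exact ⟨none, Atot_fail0 hr⟩
              | some y => exact ⟨_, Atot_suc0 hr⟩
          | b1 =>
              obtain ⟨ra, hA⟩ := ih z hlen
              obtain ⟨r, hr⟩ := Ainner_tot b1 hA
              cases r with
              | none => exact ⟨none, Atot_fail1 hr⟩
              | some y => exact ⟨_, Atot_suc1 hr⟩

/-- branch 2 of `S` always has a result -/
theorem Sb2 (u : List HSym)
    (ihS : ∀ v : List HSym, v.length < u.length → ∃ r, Rec (.nt .S) v r) :
    ∃ r, Rec (.seq (.nt .B) (.seq (.term hash) (.nt .S))) u r := by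
  rcases binSuf_cases u with hsuf | ⟨t, hsuf⟩
  · have hxb : binPre u = u := by
      have := binPre_append_binSuf u; rwa [hsuf, List.append_nil] at this
    have hB : Rec (.nt .B) (u ++ []) (some u) := by
      simpa [hxb] using Brun u
    have h := PegRec.seqFail₂ (R := Rul) (.nt .B) (.seq (.term hash) (.nt .S)) u [] hB
      (.seqFail₁ _ _ _ (.termNil _))
    exact ⟨none, by simpa using h⟩
  · have hsplit : u = binPre u ++ hash :: t := by
      rw [← hsuf, binPre_append_binSuf]
    have hB : Rec (.nt .B) (binPre u ++ hash :: t) (some (binPre u)) := by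
      have := Brun u
      rw [hsplit, binPre_bin_append (isBin_binPre u) t] at this
      exact this
    have hlt : t.length < u.length := by
      have := congrArg List.length hsplit
      simp only [List.length_append, List.length_cons] at this
      omega
    obtain ⟨r, hS⟩ := ihS t hlt
    cases r with
    | none =>
        have hin : Rec (.seq (.term hash) (.nt .S)) (hash :: t) none :=
          PegRec.seqFail₂ _ _ [hash] t (.termOk _ _) hS
        refine ⟨none, ?_⟩
        rw [hsplit]
        exact .seqFail₂ _ _ _ _ hB hin
    | some ys =>
        have hin : Rec (.seq (.term hash) (.nt .S)) (hash :: t) (some (hash :: ys)) := by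
          have := PegRec.seqOk (R := Rul) (.term hash) (.nt .S) [hash] t ys
            (.termOk _ _) hS
          simpa using this
        have h := PegRec.seqOk (R := Rul) (.nt .B) (.seq (.term hash) (.nt .S))
          (binPre u) (hash :: t) (hash :: ys) hB hin
        rw [← hsplit] at h
        exact ⟨_, h⟩

theorem Stot : ∀ (n : ℕ) (u : List HSym), u.length ≤ n → ∃ r, Rec (.nt .S) u r := by
  intro n
  induction n with
  | zero =>
      intro u hu
      have : u = [] := List.length_eq_zero_iff.mp (Nat.le_zero.mp hu)
      subst this
      obtain ⟨r2, h2⟩ := Sb2 [] (fun v hv => absurd hv (by simp))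
      exact ⟨r2, .ntRule _ _ _ (.choice₂ _ _ _ _ (.seqFail₁ _ _ _ A_nil) h2)⟩
  | succ n ih =>
      intro u hu
      have hSb2 : ∃ r, Rec (.seq (.nt .B) (.seq (.term hash) (.nt .S))) u r :=
        Sb2 u (fun v hv => ih v (by omega))
      obtain ⟨ra, hA⟩ := Atot u.length u le_rfl
      cases ra with
      | none =>
          obtain ⟨r2, h2⟩ := hSb2
          exact ⟨r2, .ntRule _ _ _ (.choice₂ _ _ _ _ (.seqFail₁ _ _ _ hA) h2)⟩
      | some ya =>
          obtain ⟨zb, hzb⟩ := prefix_of_some hA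
          obtain ⟨re, hE⟩ := Eend_tot zb
          cases re with
          | some ye =>
              refine ⟨some (ya ++ ye), .ntRule _ _ _ (.choice₁ _ _ _ _ ?_)⟩
              rw [hzb]
              exact .seqOk _ _ _ _ _ (hzb ▸ hA) hE
          | none =>
              obtain ⟨r2, h2⟩ := hSb2
              refine ⟨r2, .ntRule _ _ _ (.choice₂ _ _ _ _ ?_ h2)⟩
              rw [hzb]
              exact .seqFail₂ _ _ _ _ (hzb ▸ hA) hE

/-- Full totality of the grammar. -/
theorem tot : ∀ (e : P) (x : List HSym), ∃ r, Rec e x r := by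
  intro e
  induction e with
  | eps => intro x; exact ⟨_, .eps x⟩
  | fail => intro x; exact ⟨_, .fail x⟩
  | term a =>
      intro x
      cases x with
      | nil => exact ⟨_, .termNil a⟩
      | cons b z =>
          by_cases h : a = b
          · subst h; exact ⟨_, .termOk a z⟩
          · exact ⟨_, .termMismatch a b z h⟩
  | nt A =>
      intro x
      cases A with
      | S => exact Stot x.length x le_rfl
      | A => exact Atot x.length x le_rfl
      | M => obtain ⟨m, hm⟩ := Mtot x.length x le_rfl; exact ⟨_, hm⟩
      | B => exact ⟨_, Brun x⟩
  | notP e ih =>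
      intro x
      obtain ⟨r, hr⟩ := ih x
      cases r with
      | none => exact ⟨_, .notFail _ _ hr⟩
      | some y => exact ⟨_, .notSucc _ _ _ hr⟩
  | andP e ih =>
      intro x
      obtain ⟨r, hr⟩ := ih x
      cases r with
      | none => exact ⟨_, .andFail _ _ hr⟩
      | some y => exact ⟨_, .andSucc _ _ _ hr⟩
  | seq e₁ e₂ ih₁ ih₂ =>
      intro x
      obtain ⟨r₁, h₁⟩ := ih₁ x
      cases r₁ with
      | none => exact ⟨_, .seqFail₁ _ _ _ h₁⟩
      | some y =>
          obtain ⟨z, hz⟩ := prefix_of_some h₁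
          subst hz
          obtain ⟨r₂, h₂⟩ := ih₂ z
          cases r₂ with
          | none => exact ⟨_, .seqFail₂ _ _ _ _ h₁ h₂⟩
          | some y₂ => exact ⟨_, .seqOk _ _ _ _ _ h₁ h₂⟩
  | choice e₁ e₂ ih₁ ih₂ =>
      intro x
      obtain ⟨r₁, h₁⟩ := ih₁ x
      cases r₁ with
      | some y => exact ⟨_, .choice₁ _ _ _ _ h₁⟩
      | none =>
          obtain ⟨r₂, h₂⟩ := ih₂ x
          exact ⟨_, .choice₂ _ _ _ _ h₁ h₂⟩

end KPEG
namespace KPEG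
open HSym

theorem isBin_reverse {w : List HSym} (h : IsBin w) : IsBin w.reverse := by
  simpa [IsBin, List.mem_reverse] using h

/-- Backward direction: every string of `K` is accepted. -/
theorem Ssucc : ∀ (ws : List (List HSym)) (x : List HSym),
    (∀ w ∈ ws, IsBin w) → IsBin x → x.reverse ∈ ws →
    Rec (.nt .S) (flat ws ++ x) (some (flat ws ++ x))
  | [], x, _, _, hmem => absurd hmem (by simp)
  | w :: ws, x, hws, hx, hmem => by
      have hw : IsBin w := hws w (List.mem_cons_self)
      rcases List.mem_cons.mp hmem with hxw | hmem'
      · -- the head block matches the tail: A succeeds here and eats everything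
        have hxval : x = w.reverse := by rw [← hxw, List.reverse_reverse]
        subst hxval
        have hM : Rec (.nt .M) (flat ws ++ (w.reverse ++ []))
            (some (flat ws)) := by
          simpa using Msucc ws w.reverse
            (fun b hb => hws b (List.mem_cons_of_mem _ hb)) (isBin_reverse hw)
        have hA := Asucc w hw (flat ws) [] hM
        have hA' : Rec (.nt .A) ((flat (w :: ws) ++ w.reverse) ++ [])
            (some (flat (w :: ws) ++ w.reverse)) := by
          have h1 : w ++ hash :: (flat ws ++ (w.reverse ++ []))
              = (flat (w :: ws) ++ w.reverse) ++ [] := by simp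
          have h2 : w ++ hash :: (flat ws ++ w.reverse)
              = flat (w :: ws) ++ w.reverse := by simp
          rw [h1, h2] at hA
          exact hA
        have hseq := PegRec.seqOk (R := Rul) (.nt .A) Eend
          (flat (w :: ws) ++ w.reverse) [] [] hA' Eend_nil
        refine .ntRule _ _ _ (.choice₁ _ _ _ _ ?_)
        simpa using hseq
      · -- recurse on the remaining blocks; first find out what `A Eend` does here
        obtain ⟨r, hr⟩ := tot (.seq (.nt .A) Eend) (flat (w :: ws) ++ x)
        cases r with
        | some y =>
            obtain ⟨y₁, z, y₂, huz, hy, _, hE⟩ := seq_some_inv hr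
            obtain ⟨hz, hy₂⟩ := Eend_some_inv hE
            subst hz hy₂
            have huy : flat (w :: ws) ++ x = y := by rw [hy, huz]
            exact .ntRule _ _ _ (.choice₁ _ _ _ _ (huy ▸ hr))
        | none =>
            have hS' := Ssucc ws x (fun b hb => hws b (List.mem_cons_of_mem _ hb)) hx hmem'
            have hB : Rec (.nt .B) (w ++ hash :: (flat ws ++ x)) (some w) := by
              have := Brun (w ++ hash :: (flat ws ++ x))
              rwa [binPre_bin_append hw] at this
            have hin : Rec (.seq (.term hash) (.nt .S)) (hash :: (flat ws ++ x))
                (some (hash :: (flat ws ++ x))) := by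
              have := PegRec.seqOk (R := Rul) (.term hash) (.nt .S)
                [hash] (flat ws ++ x) (flat ws ++ x) (.termOk _ _) hS'
              simpa using this
            have hseq := PegRec.seqOk (R := Rul) (.nt .B)
              (.seq (.term hash) (.nt .S)) w (hash :: (flat ws ++ x))
              (hash :: (flat ws ++ x)) hB hin
            have hkey : w ++ hash :: (flat ws ++ x) = flat (w :: ws) ++ x := by simp
            rw [hkey] at hseq
            exact .ntRule _ _ _ (.choice₂ _ _ _ _ hr hseq)

/-- Forward direction: accepted strings are in `K`. -/
theorem Sfwd : ∀ (n : ℕ) (s : List HSym), s.length ≤ n →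
    Rec (.nt .S) s (some s) → s ∈ LangK := by
  intro n
  induction n with
  | zero =>
      intro s hs h
      have hnil : s = [] := List.length_eq_zero_iff.mp (Nat.le_zero.mp hs)
      subst hnil
      rcases choice_inv (nt_inv h) with h1 | ⟨_, h2⟩
      · obtain ⟨y₁, z, y₂, huz, hy, hA, hE⟩ := seq_some_inv h1
        have hy₁ : y₁ = [] := (List.append_eq_nil_iff.mp huz.symm).1
        rw [hy₁] at hA
        exact absurd (pegDet hA A_nil) (by simp)
      · obtain ⟨y₁, z, y₂, huz, hy, hB, hin⟩ := seq_some_inv h2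
        obtain ⟨za, zb, yb, hz2, _, hterm, _⟩ := seq_some_inv hin
        obtain ⟨z', hz', _⟩ := term_some_inv hterm
        rw [hz'] at huz
        simp at huz
  | succ n ih =>
      intro s hs h
      rcases choice_inv (nt_inv h) with h1 | ⟨_, h2⟩
      · -- A succeeded and consumed everything
        obtain ⟨y₁, z, y₂, huz, hy, hA, hE⟩ := seq_some_inv h1
        obtain ⟨hz, hy₂⟩ := Eend_some_inv hE
        subst hz hy₂
        have hy₁ : y₁ = s := by simpa using huz.symm
        rw [hy₁] at hA
        obtain ⟨w, m, rest, hbw, hyw, hsr, hM⟩ := Ainv s.length s s le_rfl hA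
        have hrest : rest = [] := by
          have := congrArg List.length hsr
          simp only [List.length_append] at this
          have h0 : rest.length = 0 := by omega
          exact List.eq_nil_of_length_eq_zero h0
        subst hrest
        obtain ⟨bs, rem, hbs, hrem, hsp, hfl⟩ :=
          Minv (m ++ (w.reverse ++ [])).length (m ++ (w.reverse ++ [])) m le_rfl hM
        refine ⟨w :: bs, w.reverse, by simp, ?_, isBin_reverse hbw, ?_, ?_⟩
        · intro b hb
          rcases List.mem_cons.mp hb with rfl | hb
          · exact hbw
          · exact hbs b hb
        · rw [hyw, hfl]
          simp [flat]
        · simp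
      · -- a block was skipped
        obtain ⟨y₁, z, y₂, huz, hy, hB, hin⟩ := seq_some_inv h2
        have hy₁ : y₁ = binPre s := by
          have := pegDet hB (Brun s); simpa using this
        have hbin₁ : IsBin y₁ := hy₁ ▸ isBin_binPre s
        obtain ⟨za, zb, yb, hz2, hy2, hterm, hS⟩ := seq_some_inv hin
        obtain ⟨z', hz', hza⟩ := term_some_inv hterm
        subst hza
        have hy₂z : y₂ = z := List.append_cancel_left (hy.symm.trans huz)
        have hzb : zb = z' := by
          have := hz'.symm.trans hz2
          exact (by simpa using this : z' = zb).symm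
        have hyb : yb = z' := by
          have := (hy2.symm.trans hy₂z).trans hz'
          simpa using this
        rw [hzb, hyb] at hS
        have hlen : z'.length ≤ n := by
          have := congrArg List.length huz
          rw [hz'] at this
          simp only [List.length_append, List.length_cons] at this
          omega
        obtain ⟨ws, x, hne, hbs, hbx, hsx, hmem⟩ := ih z' hlen hS
        refine ⟨y₁ :: ws, x, by simp, ?_, hbx, ?_, List.mem_cons_of_mem _ hmem⟩
        · intro b hb
          rcases List.mem_cons.mp hb with rfl | hb
          · exact hbin₁
          · exact hbs b hb
        · rw [huz, hz', hsx]
          simp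

end KPEG

/-- the grammar -/
def KPEG.G : PEG HSym := ⟨KPEG.NT, inferInstance, KPEG.Rul, KPEG.NT.S⟩

/-- The language `K` over `{0,1,#}` is recognised by some
total parsing expression grammar. -/
theorem K_isPEG : IsPEGLang LangK := by
  refine ⟨KPEG.G, fun e x => KPEG.tot e x, ?_⟩
  ext s
  constructor
  · intro hs
    exact KPEG.Sfwd s.length s le_rfl hs
  · intro hs
    obtain ⟨ws, x, hne, hbs, hbx, hsx, hmem⟩ := hs
    have h := KPEG.Ssucc ws x hbs hbx hmem
    rw [hsx]
    exact h
end

section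
/- For every function t : ℕ → ℕ with t(n) = o(n/(log n)²), the language K over the alphabet {0,1,#} does not belong to Online(t(n)). -/
/-! ## Online Turing machines and the equivalence-class counting method -/

/-- A head move of a Turing machine. -/
inductive TMMove : Type where
  | left : TMMove
  | stay : TMMove
  | right : TMMove

/-- The displacement of a head move. -/
def TMMove.offset : TMMove → ℤ
  | .left => -1
  | .stay => 0
  | .right => 1

/-- The shortest (most-significant-bit-first) binary representation of a
natural number, as a list of booleans; by convention `0` is represented by `"0"`. -/
def natBinRep (n : ℕ) : List Bool :=
  if n = 0 then [false] else (Nat.bits n).reverse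

/-- An online (multi-tape) Turing machine with input alphabet `σ`: it has
`tapes + 1` work tapes (tape `0` being the auxiliary tape that initially holds
the input length in binary), and a one-way read-only input tape.  At each step
the transition function sees the current state, the input symbol under the
input head (`none` when past the end of the input) and the symbols under the
work-tape heads, and produces a new state, a flag telling whether to advance
the input head (thereby reading a new input symbol), and a write/move action
for each work tape. -/
structure OnlineTM (σ : Type) : Type 1 where
  Q : Type
  finQ : Finite Q
  Γ : Type
  finΓ : Finite Γ
  blank : Γ
  sym0 : Γ
  sym1 : Γ
  tapes : ℕ
  q0 : Q
  Halt : Set Q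
  F : Set Q
  δ : Q → Option σ → (Fin (tapes + 1) → Γ) →
        Q × Bool × (Fin (tapes + 1) → Γ × TMMove)

/-- A configuration of an online Turing machine. -/
structure OCfg {σ : Type} (M : OnlineTM σ) : Type where
  q : M.Q
  ipos : ℕ
  hd : Fin (M.tapes + 1) → ℤ
  tape : Fin (M.tapes + 1) → ℤ → M.Γ

/-- The initial configuration on an input of length `n`: initial state, input
head at the start, work tapes blank except the auxiliary tape `0`, which holds
the binary representation of `n` in cells `0, …`. -/
def OnlineTM.initCfg {σ : Type} (M : OnlineTM σ) (n : ℕ) : OCfg M :=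
  { q := M.q0
    ipos := 0
    hd := fun _ => 0
    tape := fun i p =>
      if i = 0 ∧ 0 ≤ p ∧ p < (natBinRep n).length then
        (if (natBinRep n).getD p.toNat false then M.sym1 else M.sym0)
      else M.blank }

open scoped Classical in
/-- A single computation step of an online Turing machine on input `x`
(halting states are absorbing). -/
noncomputable def OnlineTM.stepCfg {σ : Type} (M : OnlineTM σ) (x : List σ)
    (c : OCfg M) : OCfg M :=
  if c.q ∈ M.Halt then c
  else
    let t := M.δ c.q x[c.ipos]? (fun i => c.tape i (c.hd i))
    { q := t.1
      ipos := if t.2.1 then c.ipos + 1 else c.ipos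
      hd := fun i => c.hd i + (t.2.2 i).2.offset
      tape := fun i p => if p = c.hd i then (t.2.2 i).1 else c.tape i p }

/-- The configuration of `M` on input `x` after `i` steps. -/
noncomputable def OnlineTM.runCfg {σ : Type} (M : OnlineTM σ) (x : List σ)
    (i : ℕ) : OCfg M :=
  (M.stepCfg x)^[i] (M.initCfg x.length)

/-- `M` decides `L` doing at most `t(n)` steps of computation per input symbol:
on every input `x` of length `n`, the machine halts after having read the whole
input, it accepts iff `x ∈ L`, and during the computation the input head never
stays put for more than `t(n)` consecutive steps (i.e. at most `t(n)` steps are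
performed between consecutive readings of input symbols, before the first
reading and after the last one). -/
def OnlineTM.DecidesIn {σ : Type} (M : OnlineTM σ) (L : Set (List σ))
    (t : ℕ → ℕ) : Prop :=
  ∀ x : List σ, ∃ N : ℕ,
    (M.runCfg x N).q ∈ M.Halt ∧
    (∀ i < N, (M.runCfg x i).q ∉ M.Halt) ∧
    (M.runCfg x N).ipos = x.length ∧
    ((M.runCfg x N).q ∈ M.F ↔ x ∈ L) ∧
    (∀ i j : ℕ, i ≤ j → j ≤ N →
      (M.runCfg x i).ipos = (M.runCfg x j).ipos → j - i ≤ t x.length)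

/-- The class `Online(t(n))` of languages over `σ` decidable by an online
Turing machine doing at most `t(n)` steps of computation per input symbol. -/
def OnlineClass (σ : Type) (t : ℕ → ℕ) : Set (Set (List σ)) :=
  { L | ∃ M : OnlineTM σ, M.DecidesIn L t }

/-- `(L,ℓ,m)`-equivalence (the parameter `ℓ` is implicit in the domain):
`y₁ ≡ y₂` iff appending any string of length `m` leads to the same
membership in `L`. -/
def LEquiv {σ : Type} (L : Set (List σ)) (m : ℕ) (y₁ y₂ : List σ) : Prop :=
  ∀ x : List σ, x.length = m → (y₁ ++ x ∈ L ↔ y₂ ++ x ∈ L)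

/-- `E_L(ℓ,m)`: the number of equivalence classes of strings of length `ℓ`
under `(L,ℓ,m)`-equivalence. -/
noncomputable def numClasses {σ : Type} (L : Set (List σ)) (ℓ m : ℕ) : ℕ :=
  Nat.card (Quot (fun y₁ y₂ : { y : List σ // y.length = ℓ } =>
    LEquiv L m y₁.1 y₂.1))

/-- `t(n) ∈ o(n/(log n)²)`, i.e. `t(n)·(log n)²/n → 0` as `n → ∞`. -/
def LittleOOfNOverLogSq (t : ℕ → ℕ) : Prop :=
  Filter.Tendsto (fun n : ℕ => (t n : ℝ) * (Real.log n) ^ 2 / n)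
    Filter.atTop (nhds 0)

/-! ### Basic dynamics lemmas -/

namespace OnlineTM

variable {σ : Type} (M : OnlineTM σ) (z : List σ)

lemma stepCfg_halt {c : OCfg M} (h : c.q ∈ M.Halt) : M.stepCfg z c = c := by
  unfold OnlineTM.stepCfg; rw [if_pos h]

lemma stepCfg_not_halt {c : OCfg M} (h : c.q ∉ M.Halt) :
    M.stepCfg z c =
      { q := (M.δ c.q z[c.ipos]? (fun i => c.tape i (c.hd i))).1
        ipos := if (M.δ c.q z[c.ipos]? (fun i => c.tape i (c.hd i))).2.1
                then c.ipos + 1 else c.ipos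
        hd := fun i => c.hd i +
          ((M.δ c.q z[c.ipos]? (fun i => c.tape i (c.hd i))).2.2 i).2.offset
        tape := fun i p => if p = c.hd i
          then ((M.δ c.q z[c.ipos]? (fun i => c.tape i (c.hd i))).2.2 i).1
          else c.tape i p } := by
  unfold OnlineTM.stepCfg; rw [if_neg h]

lemma stepCfg_congr (z₁ z₂ : List σ) (c : OCfg M) (h : z₁[c.ipos]? = z₂[c.ipos]?) :
    M.stepCfg z₁ c = M.stepCfg z₂ c := by
  unfold OnlineTM.stepCfg; rw [h]

lemma runCfg_zero : M.runCfg z 0 = M.initCfg z.length := rfl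

lemma runCfg_succ (i : ℕ) : M.runCfg z (i + 1) = M.stepCfg z (M.runCfg z i) := by
  unfold OnlineTM.runCfg; rw [Function.iterate_succ_apply']

lemma ipos_step (c : OCfg M) :
    (M.stepCfg z c).ipos = c.ipos ∨ (M.stepCfg z c).ipos = c.ipos + 1 := by
  by_cases h : c.q ∈ M.Halt
  · rw [stepCfg_halt M z h]; exact Or.inl rfl
  · rw [stepCfg_not_halt M z h]
    dsimp only
    split_ifs
    · exact Or.inr rfl
    · exact Or.inl rfl

lemma ipos_zero : (M.runCfg z 0).ipos = 0 := rfl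

lemma ipos_mono : Monotone fun i => (M.runCfg z i).ipos := by
  apply monotone_nat_of_le_succ
  intro i
  rw [runCfg_succ]
  rcases ipos_step M z (M.runCfg z i) with h | h <;> omega

lemma ipos_succ_le (i : ℕ) :
    (M.runCfg z (i + 1)).ipos ≤ (M.runCfg z i).ipos + 1 := by
  rw [runCfg_succ]
  rcases ipos_step M z (M.runCfg z i) with h | h <;> omega

lemma exists_hit (N ℓ : ℕ) (h : ℓ ≤ (M.runCfg z N).ipos) :
    ∃ i ≤ N, (M.runCfg z i).ipos = ℓ := by
  induction N with
  | zero =>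
    refine ⟨0, le_rfl, ?_⟩
    have h0 := ipos_zero M z
    omega
  | succ N ih =>
    by_cases h' : ℓ ≤ (M.runCfg z N).ipos
    · obtain ⟨i, hi, he⟩ := ih h'
      exact ⟨i, hi.trans (Nat.le_succ N), he⟩
    · refine ⟨N + 1, le_rfl, ?_⟩
      have hs := ipos_succ_le M z N
      omega

lemma runCfg_prefix (z₁ z₂ : List σ) (hlen : z₁.length = z₂.length) (ℓ : ℕ)
    (hag : ∀ p < ℓ, z₁[p]? = z₂[p]?) :
    ∀ i, (∀ j < i, (M.runCfg z₁ j).ipos < ℓ) → M.runCfg z₁ i = M.runCfg z₂ i := by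
  intro i
  induction i with
  | zero => intro _; unfold OnlineTM.runCfg; rw [hlen]; rfl
  | succ i ih =>
    intro hb
    have hi := ih (fun j hj => hb j (hj.trans (Nat.lt_succ_self i)))
    rw [runCfg_succ, runCfg_succ, hi]
    exact stepCfg_congr M z₁ z₂ _ (hag _ (hi ▸ hb i (Nat.lt_succ_self i)))

end OnlineTM
/-! ### The per-symbol time bound gives a bound on the length of runs -/

lemma level_bound (f : ℕ → ℕ) (t N : ℕ)
    (hmono : Monotone f)
    (hstep : ∀ i, f (i + 1) ≤ f i + 1)
    (hlev : ∀ i j, i ≤ j → j ≤ N → f i = f j → j - i ≤ t) :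
    ∀ d a b, a ≤ b → b ≤ N → f b ≤ f a + d → b - a ≤ (d + 1) * (t + 1) - 1 := by
  intro d
  induction d with
  | zero =>
    intro a b hab hbN hfb
    have h0 : f a ≤ f b := hmono hab
    have h1 : f a = f b := by omega
    have h2 := hlev a b hab hbN h1
    rw [show (0 + 1) * (t + 1) = t + 1 from by ring]
    omega
  | succ d ih =>
    intro a b hab hbN hfb
    rw [show (d + 1 + 1) * (t + 1) = (d + 1) * (t + 1) + (t + 1) from by ring]
    by_cases hc : f b ≤ f a
    · have h0 : f a ≤ f b := hmono hab
      have h1 : f a = f b := by omega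
      have h2 := hlev a b hab hbN h1
      omega
    · push_neg at hc
      have hab' : a < b := by
        rcases Nat.lt_or_ge a b with h | h
        · exact h
        · exfalso
          have h0 : f b ≤ f a := hmono h
          omega
      have hex : ∃ i, a < i ∧ f a < f i := ⟨b, hab', hc⟩
      classical
      obtain ⟨hai₀, hfi₀⟩ := Nat.find_spec hex
      set i₀ := Nat.find hex with hi₀def
      have hi₀b : i₀ ≤ b := Nat.find_min' hex ⟨hab', hc⟩
      have hprev : f (i₀ - 1) = f a := by
        by_cases h : a = i₀ - 1
        · rw [← h]
        · have h1 : a < i₀ - 1 := by omega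
          have h2 := Nat.find_min hex (m := i₀ - 1) (by omega)
          push_neg at h2
          have h3 := h2 h1
          have h4 : f a ≤ f (i₀ - 1) := hmono (by omega)
          omega
      have hstep' : f i₀ ≤ f (i₀ - 1) + 1 := by
        have he : i₀ - 1 + 1 = i₀ := by omega
        have h5 := hstep (i₀ - 1)
        rw [he] at h5
        omega
      have hfi₀' : f i₀ = f a + 1 := by omega
      have hseg : i₀ - 1 - a ≤ t :=
        hlev a (i₀ - 1) (by omega) (by omega) hprev.symm
      have hrec : b - i₀ ≤ (d + 1) * (t + 1) - 1 :=
        ih i₀ b hi₀b hbN (by omega)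
      have hpos : 1 ≤ (d + 1) * (t + 1) := Nat.one_le_iff_ne_zero.mpr (by positivity)
      generalize (d + 1) * (t + 1) = X at hrec hpos ⊢
      omega

/-! ### The simulation invariant -/

namespace OnlineTM

variable {σ : Type} (M : OnlineTM σ)

lemma offset_abs (mv : TMMove) : |mv.offset| ≤ 1 := by
  cases mv <;> simp [TMMove.offset]

/-- The invariant relating two runs whose configurations at times `a`, `b`
agree in state, input position, and on windows of radius `T` around the heads. -/
def SimInv (z₁ z₂ : List σ) (a b T s : ℕ) : Prop :=
  (M.runCfg z₁ (a + s)).q = (M.runCfg z₂ (b + s)).q ∧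
  (M.runCfg z₁ (a + s)).ipos = (M.runCfg z₂ (b + s)).ipos ∧
  (∀ i, (M.runCfg z₁ (a + s)).hd i - (M.runCfg z₁ a).hd i
      = (M.runCfg z₂ (b + s)).hd i - (M.runCfg z₂ b).hd i) ∧
  (∀ i, |(M.runCfg z₁ (a + s)).hd i - (M.runCfg z₁ a).hd i| ≤ (s : ℤ)) ∧
  (∀ i p, |p| ≤ (T : ℤ) →
    (M.runCfg z₁ (a + s)).tape i ((M.runCfg z₁ a).hd i + p)
      = (M.runCfg z₂ (b + s)).tape i ((M.runCfg z₂ b).hd i + p))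

lemma sim (z₁ z₂ : List σ) (ℓ : ℕ)
    (hsuf : ∀ p, ℓ ≤ p → z₁[p]? = z₂[p]?) (a b T : ℕ)
    (hq : (M.runCfg z₁ a).q = (M.runCfg z₂ b).q)
    (hip1 : (M.runCfg z₁ a).ipos = ℓ) (hip2 : (M.runCfg z₂ b).ipos = ℓ)
    (htape : ∀ i p, |p| ≤ (T : ℤ) →
      (M.runCfg z₁ a).tape i ((M.runCfg z₁ a).hd i + p)
        = (M.runCfg z₂ b).tape i ((M.runCfg z₂ b).hd i + p)) :
    ∀ s, s ≤ T → M.SimInv z₁ z₂ a b T s := by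
  intro s
  induction s with
  | zero =>
    intro _
    refine ⟨hq, by rw [Nat.add_zero, Nat.add_zero, hip1, hip2], ?_, ?_, ?_⟩
    · intro i; simp
    · intro i; simp
    · intro i p hp; rw [Nat.add_zero, Nat.add_zero]; exact htape i p hp
  | succ s ih =>
    intro hsT
    obtain ⟨hq', hip', hoff, hbd, htp⟩ := ih (by omega)
    set c₁ := M.runCfg z₁ (a + s) with hc₁
    set c₂ := M.runCfg z₂ (b + s) with hc₂
    have hrun1 : M.runCfg z₁ (a + (s + 1)) = M.stepCfg z₁ c₁ := by
      rw [show a + (s + 1) = (a + s) + 1 by omega, runCfg_succ]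
    have hrun2 : M.runCfg z₂ (b + (s + 1)) = M.stepCfg z₂ c₂ := by
      rw [show b + (s + 1) = (b + s) + 1 by omega, runCfg_succ]
    by_cases hhalt : c₁.q ∈ M.Halt
    · have hhalt2 : c₂.q ∈ M.Halt := hq' ▸ hhalt
      have e1 : M.stepCfg z₁ c₁ = c₁ := stepCfg_halt M z₁ hhalt
      have e2 : M.stepCfg z₂ c₂ = c₂ := stepCfg_halt M z₂ hhalt2
      rw [SimInv, hrun1, hrun2, e1, e2]
      refine ⟨hq', hip', hoff, fun i => (hbd i).trans (by push_cast; omega), htp⟩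
    · have hhalt2 : c₂.q ∉ M.Halt := hq' ▸ hhalt
      -- the two machines read the same input symbol
      have hipℓ : ℓ ≤ c₁.ipos := by
        have := M.ipos_mono z₁ (Nat.le_add_right a s)
        simpa [hip1] using this
      have hsym : z₁[c₁.ipos]? = z₂[c₂.ipos]? := by
        rw [← hip']; exact hsuf _ hipℓ
      -- the two machines see the same work-tape symbols
      have hwork : (fun i => c₁.tape i (c₁.hd i)) = (fun i => c₂.tape i (c₂.hd i)) := by
        funext i
        have he := hoff i
        have hb := hbd i
        have h1 : c₁.hd i = (M.runCfg z₁ a).hd i + (c₁.hd i - (M.runCfg z₁ a).hd i) := by ring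
        have h2 : c₂.hd i = (M.runCfg z₂ b).hd i + (c₁.hd i - (M.runCfg z₁ a).hd i) := by
          rw [he]; ring
        rw [h1, h2]
        exact htp i _ (le_trans hb (by omega : (s : ℤ) ≤ (T : ℤ)))
      have hδ : M.δ c₁.q z₁[c₁.ipos]? (fun i => c₁.tape i (c₁.hd i))
              = M.δ c₂.q z₂[c₂.ipos]? (fun i => c₂.tape i (c₂.hd i)) := by
        rw [hq', hsym, hwork]
      have e1 := M.stepCfg_not_halt z₁ hhalt
      have e2 := M.stepCfg_not_halt z₂ hhalt2
      rw [hδ] at e1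
      set D := M.δ c₂.q z₂[c₂.ipos]? (fun i => c₂.tape i (c₂.hd i)) with hD
      rw [SimInv, hrun1, hrun2, e1, e2]
      refine ⟨rfl, ?_, ?_, ?_, ?_⟩
      · dsimp only; rw [hip']
      · intro i; dsimp only; have := hoff i; omega
      · intro i
        dsimp only
        have h1 := hbd i
        have h2 := offset_abs (D.2.2 i).2
        have : |c₁.hd i + (D.2.2 i).2.offset - (M.runCfg z₁ a).hd i|
            ≤ |c₁.hd i - (M.runCfg z₁ a).hd i| + |(D.2.2 i).2.offset| := by
          have := abs_add_le (c₁.hd i - (M.runCfg z₁ a).hd i) ((D.2.2 i).2.offset)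
          have he : c₁.hd i + (D.2.2 i).2.offset - (M.runCfg z₁ a).hd i
              = (c₁.hd i - (M.runCfg z₁ a).hd i) + (D.2.2 i).2.offset := by ring
          rw [he]; exact this
        push_cast
        omega
      · intro i p hp
        dsimp only
        have he := hoff i
        by_cases hcase : (M.runCfg z₁ a).hd i + p = c₁.hd i
        · have hcase2 : (M.runCfg z₂ b).hd i + p = c₂.hd i := by omega
          rw [if_pos hcase, if_pos hcase2]
        · have hcase2 : ¬ ((M.runCfg z₂ b).hd i + p = c₂.hd i) := by omega
          rw [if_neg hcase, if_neg hcase2]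
          exact htp i p hp

end OnlineTM
/-! ### Acceptance is determined by the window around the heads -/

namespace OnlineTM

lemma key {σ : Type} (M : OnlineTM σ) (L : Set (List σ)) (t : ℕ → ℕ)
    (hM : M.DecidesIn L t) (ℓ m T : ℕ)
    (hT : (m + 1) * (t (ℓ + m) + 1) - 1 ≤ T)
    (z₁ z₂ : List σ) (hl1 : z₁.length = ℓ + m) (hl2 : z₂.length = ℓ + m)
    (hsuf : ∀ p, ℓ ≤ p → z₁[p]? = z₂[p]?)
    (a b : ℕ)
    (ha : (M.runCfg z₁ a).ipos = ℓ) (hamin : ∀ j < a, (M.runCfg z₁ j).ipos ≠ ℓ)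
    (hb : (M.runCfg z₂ b).ipos = ℓ) (hbmin : ∀ j < b, (M.runCfg z₂ j).ipos ≠ ℓ)
    (hq : (M.runCfg z₁ a).q = (M.runCfg z₂ b).q)
    (htape : ∀ i p, |p| ≤ (T : ℤ) →
      (M.runCfg z₁ a).tape i ((M.runCfg z₁ a).hd i + p)
        = (M.runCfg z₂ b).tape i ((M.runCfg z₂ b).hd i + p)) :
    (z₁ ∈ L ↔ z₂ ∈ L) := by
  obtain ⟨N₁, hH1, hNH1, hip1, hF1, hlev1⟩ := hM z₁
  obtain ⟨N₂, hH2, hNH2, hip2, hF2, hlev2⟩ := hM z₂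
  rw [hl1] at hip1 hlev1
  rw [hl2] at hip2 hlev2
  -- a ≤ N₁, b ≤ N₂
  have haN : a ≤ N₁ := by
    obtain ⟨i, hiN, hie⟩ := M.exists_hit z₁ N₁ ℓ (by omega)
    by_contra hcon
    push_neg at hcon
    rcases Nat.lt_or_ge i a with h | h
    · exact hamin i h hie
    · omega
  have hbN : b ≤ N₂ := by
    obtain ⟨i, hiN, hie⟩ := M.exists_hit z₂ N₂ ℓ (by omega)
    by_contra hcon
    push_neg at hcon
    rcases Nat.lt_or_ge i b with h | h
    · exact hbmin i h hie
    · omega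
  -- bound on the remaining time
  have hbound1 : N₁ - a ≤ T := by
    have := level_bound (fun i => (M.runCfg z₁ i).ipos) (t (ℓ + m)) N₁
      (M.ipos_mono z₁) (M.ipos_succ_le z₁)
      (fun i j hij hjN he => hlev1 i j hij hjN he) m a N₁ haN le_rfl (by omega)
    omega
  set s₀ := N₁ - a with hs₀
  have hsim := M.sim z₁ z₂ ℓ hsuf a b T hq ha hb htape
  -- at time b + s₀ the second machine is in a halting state
  have h1 := hsim s₀ hbound1
  obtain ⟨hq₀, -, -, -, -⟩ := h1
  rw [show a + s₀ = N₁ by omega] at hq₀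
  have hhalt2 : (M.runCfg z₂ (b + s₀)).q ∈ M.Halt := hq₀ ▸ hH1
  have hN2le : N₂ ≤ b + s₀ := by
    by_contra hcon
    push_neg at hcon
    exact hNH2 (b + s₀) hcon hhalt2
  set s₂ := N₂ - b with hs₂
  have hs₂le : s₂ ≤ s₀ := by omega
  have h2 := hsim s₂ (hs₂le.trans hbound1)
  obtain ⟨hq₂, -, -, -, -⟩ := h2
  rw [show b + s₂ = N₂ by omega] at hq₂
  have hhalt1 : (M.runCfg z₁ (a + s₂)).q ∈ M.Halt := hq₂ ▸ hH2
  have hN1le : N₁ ≤ a + s₂ := by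
    by_contra hcon
    push_neg at hcon
    exact hNH1 (a + s₂) hcon hhalt1
  have hs : s₂ = s₀ := by omega
  rw [show b + s₀ = N₂ by omega] at hq₀
  rw [← hF1, ← hF2, hq₀]

end OnlineTM
/-! ### Parsing lemmas for the language `K` -/

lemma hash_eq_split : ∀ (w w' a b : List HSym), HSym.hash ∉ w → HSym.hash ∉ w' →
    w ++ HSym.hash :: a = w' ++ HSym.hash :: b → w = w' ∧ a = b := by
  intro w
  induction w with
  | nil =>
    intro w' a b _ hw' h
    cases w' with
    | nil => simpa using h
    | cons c w'' =>
      exfalso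
      rw [List.nil_append, List.cons_append, List.cons.injEq] at h
      exact hw' (h.1 ▸ List.mem_cons_self (a := c) (l := w''))
  | cons c w ih =>
    intro w' a b hw hw' h
    cases w' with
    | nil =>
      exfalso
      rw [List.nil_append, List.cons_append, List.cons.injEq] at h
      exact hw (h.1.symm ▸ List.mem_cons_self (a := c) (l := w))
    | cons c' w'' =>
      rw [List.cons_append, List.cons_append, List.cons.injEq] at h
      obtain ⟨rfl, h2⟩ := h
      have hw2 : HSym.hash ∉ w := fun hx => hw (List.mem_cons_of_mem _ hx)
      have hw2' : HSym.hash ∉ w'' := fun hx => hw' (List.mem_cons_of_mem _ hx)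
      obtain ⟨rfl, rfl⟩ := ih w'' a b hw2 hw2' h2
      exact ⟨rfl, rfl⟩

lemma flatten_hash_eq : ∀ (ws ws' : List (List HSym)) (x x' : List HSym),
    (∀ w ∈ ws, HSym.IsBin w) → (∀ w ∈ ws', HSym.IsBin w) →
    HSym.IsBin x → HSym.IsBin x' →
    (ws.map (fun w => w ++ [HSym.hash])).flatten ++ x
      = (ws'.map (fun w => w ++ [HSym.hash])).flatten ++ x' →
    ws = ws' ∧ x = x' := by
  intro ws
  induction ws with
  | nil =>
    intro ws' x x' _ hb' hx hx' h
    cases ws' with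
    | nil => simpa using h
    | cons w' t' =>
      exfalso
      simp only [List.map_nil, List.flatten_nil, List.nil_append, List.map_cons,
        List.flatten_cons, List.append_assoc] at h
      apply hx
      rw [h]
      simp
  | cons w tl ih =>
    intro ws' x x' hb hb' hx hx' h
    cases ws' with
    | nil =>
      exfalso
      simp only [List.map_nil, List.flatten_nil, List.nil_append, List.map_cons,
        List.flatten_cons, List.append_assoc] at h
      apply hx'
      rw [← h]
      simp
    | cons w' tl' =>
      simp only [List.map_cons, List.flatten_cons, List.append_assoc,
        List.singleton_append] at h
      obtain ⟨rfl, h2⟩ := hash_eq_split w w' _ _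
        (hb w List.mem_cons_self) (hb' w' List.mem_cons_self) h
      obtain ⟨rfl, rfl⟩ := ih tl' x x'
        (fun u hu => hb u (List.mem_cons_of_mem _ hu))
        (fun u hu => hb' u (List.mem_cons_of_mem _ hu)) hx hx' h2
      exact ⟨rfl, rfl⟩

lemma mem_LangK_iff (ws : List (List HSym)) (hws : ∀ w ∈ ws, HSym.IsBin w)
    (hne : ws ≠ []) (x : List HSym) (hx : HSym.IsBin x) :
    (ws.map (fun w => w ++ [HSym.hash])).flatten ++ x ∈ LangK ↔ x.reverse ∈ ws := by
  constructor
  · rintro ⟨ws', x', hne', hb', hx', heq, hmem⟩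
    obtain ⟨rfl, rfl⟩ := flatten_hash_eq ws ws' x x' hws hb' hx hx' heq
    exact hmem
  · intro h
    exact ⟨ws, x, hne, hws, hx, rfl, h⟩

/-! ### Encoding of binary strings -/

def bitSym (b : Bool) : HSym := if b then HSym.b1 else HSym.b0

lemma bitSym_ne_hash (b : Bool) : bitSym b ≠ HSym.hash := by
  cases b <;> simp [bitSym]

lemma bitSym_inj {b b' : Bool} (h : bitSym b = bitSym b') : b = b' := by
  cases b <;> cases b' <;> simp [bitSym] at h ⊢

def encB (m : ℕ) (v : Fin m → Bool) : List HSym := List.ofFn fun i => bitSym (v i)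

lemma encB_len (m : ℕ) (v : Fin m → Bool) : (encB m v).length = m := by
  simp [encB]

lemma encB_bin (m : ℕ) (v : Fin m → Bool) : HSym.IsBin (encB m v) := by
  intro h
  rw [encB, List.mem_ofFn] at h
  obtain ⟨i, hi⟩ := h
  exact bitSym_ne_hash (v i) hi

lemma encB_inj {m : ℕ} {v v' : Fin m → Bool} (h : encB m v = encB m v') : v = v' := by
  rw [encB, encB, List.ofFn_inj] at h
  funext i
  exact bitSym_inj (congrFun h i)

lemma flatten_words_len (m : ℕ) (l : List (Fin m → Bool)) (f : (Fin m → Bool) → (Fin m → Bool)) :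
    ((l.map (fun v => encB m (f v) ++ [HSym.hash])).flatten).length = l.length * (m + 1) := by
  induction l with
  | nil => simp
  | cons v tl ih => simp [ih, encB_len]; ring
/-! ### The counting argument: many inequivalent prefixes force a large machine -/

lemma main_count (M : OnlineTM HSym) (t : ℕ → ℕ) (hM : M.DecidesIn LangK t) (m : ℕ) :
    2 ^ (2 ^ m - 1) ≤ Nat.card M.Q *
      Nat.card M.Γ ^ ((M.tapes + 1) * (2 * ((m + 1) * (t (2 ^ m * (m + 1) + m) + 1)) + 1)) := by
  classical
  haveI := M.finQ
  haveI := M.finΓ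
  set ℓ : ℕ := 2 ^ m * (m + 1) with hℓ
  set n : ℕ := ℓ + m with hn
  set T : ℕ := (m + 1) * (t n + 1) with hT
  set pad : List HSym := List.replicate m HSym.b0 with hpad
  have hpadlen : pad.length = m := List.length_replicate
  have htau0 : ∀ y : List HSym, y.length = ℓ → ∃ i, (M.runCfg (y ++ pad) i).ipos = ℓ := by
    intro y hy
    obtain ⟨N, -, -, hip, -, -⟩ := hM (y ++ pad)
    have hlen : (y ++ pad).length = n := by rw [List.length_append, hy, hpadlen]
    rw [hlen] at hip
    obtain ⟨i, -, hie⟩ := M.exists_hit (y ++ pad) N ℓ (by omega)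
    exact ⟨i, hie⟩
  have htau1 : ∀ (y : List HSym), y.length = ℓ →
      ∃ i, (M.runCfg (y ++ pad) i).ipos = ℓ ∧
        ∀ j < i, (M.runCfg (y ++ pad) j).ipos ≠ ℓ := by
    intro y hy
    exact ⟨Nat.find (htau0 y hy), Nat.find_spec (htau0 y hy),
      fun j hj => Nat.find_min (htau0 y hy) hj⟩
  choose τ hτspec hτmin using htau1
  set v₀ : Fin m → Bool := fun _ => false with hv₀
  set G := ({v : Fin m → Bool // v ≠ v₀} → Bool) with hG
  set fg : G → (Fin m → Bool) → (Fin m → Bool) :=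
    fun g v => if h : v = v₀ then v₀ else (if g ⟨v, h⟩ then v else v₀) with hfg
  set lst : List (Fin m → Bool) := (Finset.univ : Finset (Fin m → Bool)).toList with hlst
  set wsg : G → List (List HSym) := fun g => lst.map (fun v => encB m (fg g v)) with hwsg
  set yg : G → List HSym := fun g => ((wsg g).map (fun w => w ++ [HSym.hash])).flatten with hyg
  have hlstlen : lst.length = 2 ^ m := by
    rw [hlst, Finset.length_toList, Finset.card_univ]
    simp
  have hlstne : lst ≠ [] := by
    rw [hlst, Ne, Finset.toList_eq_nil]
    exact Finset.univ_nonempty.ne_empty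
  have hyglen : ∀ g, (yg g).length = ℓ := by
    intro g
    rw [hyg, hwsg]
    dsimp only
    rw [List.map_map]
    simp only [Function.comp_def]
    rw [flatten_words_len m lst (fg g), hlstlen]
  -- membership characterization of the chosen prefixes
  have hmemg : ∀ (g : G) (u : {v : Fin m → Bool // v ≠ v₀}),
      (yg g ++ (encB m u.1).reverse ∈ LangK ↔ g u = true) := by
    intro g u
    have hb : ∀ w ∈ wsg g, HSym.IsBin w := by
      intro w hw
      rw [hwsg] at hw
      dsimp only at hw
      rw [List.mem_map] at hw
      obtain ⟨v, -, rfl⟩ := hw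
      exact encB_bin m (fg g v)
    have hne : wsg g ≠ [] := by
      rw [hwsg]
      dsimp only
      simp [hlstne]
    have hx : HSym.IsBin (encB m u.1).reverse := by
      intro hmem
      rw [List.mem_reverse] at hmem
      exact encB_bin m u.1 hmem
    rw [hyg]
    dsimp only
    rw [mem_LangK_iff (wsg g) hb hne _ hx, List.reverse_reverse, hwsg]
    dsimp only
    rw [List.mem_map]
    constructor
    · rintro ⟨v, -, hv⟩
      have hv' := encB_inj hv
      rw [hfg] at hv'
      dsimp only at hv'
      split_ifs at hv' with h1 h2
      · exact absurd hv'.symm u.2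
      · have he : (⟨v, h1⟩ : {v : Fin m → Bool // v ≠ v₀}) = u := Subtype.ext hv'
        rw [← he]
        exact h2
      · exact absurd hv'.symm u.2
    · intro hgu
      refine ⟨u.1, by simp [hlst], ?_⟩
      congr 1
      rw [hfg]
      dsimp only
      rw [dif_neg u.2]
      rw [show (⟨u.1, u.2⟩ : {v : Fin m → Bool // v ≠ v₀}) = u from Subtype.ext rfl]
      rw [hgu, if_pos rfl]
  -- the signature map
  set Sig := M.Q × (Fin (M.tapes + 1) → Fin (2 * T + 1) → M.Γ) with hSig
  set cfg : G → OCfg M := fun g => M.runCfg (yg g ++ pad) (τ (yg g) (hyglen g))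
    with hcfg
  set Φ : G → Sig := fun g =>
    ((cfg g).q, fun i j => (cfg g).tape i ((cfg g).hd i + ((j : ℕ) : ℤ) - (T : ℤ))) with hΦ
  -- injectivity of the signature map
  have hinj : Function.Injective Φ := by
    intro g g' hgg'
    have hqe : (cfg g).q = (cfg g').q := congrArg Prod.fst hgg'
    have htpe : ∀ (i : Fin (M.tapes + 1)) (p : ℤ), |p| ≤ (T : ℤ) →
        (cfg g).tape i ((cfg g).hd i + p) = (cfg g').tape i ((cfg g').hd i + p) := by
      intro i p hp
      rw [abs_le] at hp
      have hj : (p + (T : ℤ)).toNat < 2 * T + 1 := by omega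
      have := congrFun (congrFun (congrArg Prod.snd hgg') i)
        (⟨(p + (T : ℤ)).toNat, hj⟩ : Fin (2 * T + 1))
      simp only [hΦ] at this
      have he1 : (cfg g).hd i + (((p + (T : ℤ)).toNat : ℕ) : ℤ) - (T : ℤ)
          = (cfg g).hd i + p := by omega
      have he2 : (cfg g').hd i + (((p + (T : ℤ)).toNat : ℕ) : ℤ) - (T : ℤ)
          = (cfg g').hd i + p := by omega
      rw [he1, he2] at this
      exact this
    -- acceptance on all suffixes of length m is determined by the signature
    have hacc : ∀ x : List HSym, x.length = m →
        ((yg g ++ x ∈ LangK) ↔ (yg g' ++ x ∈ LangK)) := by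
      intro x hx
      have htrans : ∀ (y : List HSym) (hy : y.length = ℓ) (j : ℕ),
          j ≤ τ y hy → M.runCfg (y ++ x) j = M.runCfg (y ++ pad) j := by
        intro y hy j hj
        refine (M.runCfg_prefix (y ++ pad) (y ++ x)
          (by rw [List.length_append, List.length_append, hx, hpadlen]) ℓ ?_ j ?_).symm
        · intro p hp
          rw [List.getElem?_append_left (by omega : p < y.length),
            List.getElem?_append_left (by omega : p < y.length)]
        · intro j' hj'
          have h1 : (M.runCfg (y ++ pad) j').ipos ≠ ℓ := hτmin y hy j' (by omega)
          have h2 := M.ipos_mono (y ++ pad) (show j' ≤ τ y hy by omega)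
          simp only [] at h2
          rw [hτspec y hy] at h2
          omega
      set a := τ (yg g) (hyglen g) with hadef
      set b := τ (yg g') (hyglen g') with hbdef
      have hca : M.runCfg (yg g ++ x) a = cfg g := by
        rw [htrans (yg g) (hyglen g) a le_rfl, hcfg]
      have hcb : M.runCfg (yg g' ++ x) b = cfg g' := by
        rw [htrans (yg g') (hyglen g') b le_rfl, hcfg]
      refine OnlineTM.key M LangK t hM ℓ m T (by rw [← hn]; omega) (yg g ++ x) (yg g' ++ x)
        (by rw [List.length_append, hyglen g, hx])
        (by rw [List.length_append, hyglen g', hx]) ?_ a b ?_ ?_ ?_ ?_ ?_ ?_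
      · intro p hp
        have hp1 : (yg g).length ≤ p := by rw [hyglen g]; omega
        have hp2 : (yg g').length ≤ p := by rw [hyglen g']; omega
        rw [List.getElem?_append_right hp1, List.getElem?_append_right hp2,
          hyglen g, hyglen g']
      · rw [hca]
        exact hτspec (yg g) (hyglen g)
      · intro j hjlt
        rw [htrans (yg g) (hyglen g) j (by omega)]
        exact hτmin (yg g) (hyglen g) j hjlt
      · rw [hcb]
        exact hτspec (yg g') (hyglen g')
      · intro j hjlt
        rw [htrans (yg g') (hyglen g') j (by omega)]
        exact hτmin (yg g') (hyglen g') j hjlt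
      · rw [hca, hcb]; exact hqe
      · rw [hca, hcb]; exact htpe
    funext u
    have hx : ((encB m u.1).reverse).length = m := by
      rw [List.length_reverse, encB_len]
    have h := hacc ((encB m u.1).reverse) hx
    rw [hmemg g u, hmemg g' u] at h
    cases hgu : g u <;> cases hgu' : g' u <;> simp [hgu, hgu'] at h ⊢
  -- cardinalities
  haveI : Finite Sig := by
    rw [hSig]
    infer_instance
  have hcard := Nat.card_le_card_of_injective Φ hinj
  have hcardG : Nat.card G = 2 ^ (2 ^ m - 1) := by
    rw [hG]
    simp [Nat.card_eq_fintype_card, Fintype.card_fun, Fintype.card_subtype_compl]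
  have hcardSig : Nat.card Sig = Nat.card M.Q *
      Nat.card M.Γ ^ ((M.tapes + 1) * (2 * T + 1)) := by
    haveI : Fintype M.Γ := Fintype.ofFinite _
    haveI : Fintype M.Q := Fintype.ofFinite _
    rw [hSig, Nat.card_prod]
    congr 1
    rw [Nat.card_eq_fintype_card, Fintype.card_fun, Fintype.card_fun,
      Nat.card_eq_fintype_card, Fintype.card_fin, Fintype.card_fin, ← pow_mul]
    congr 1
    ring
  rw [hcardG, hcardSig] at hcard
  exact hcard
/-! ### Numeric auxiliary lemmas -/

lemma mul_pow_le_two_pow (q g E : ℕ) : q * g ^ E ≤ 2 ^ (q + g * E) := by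
  calc q * g ^ E ≤ 2 ^ q * (2 ^ g) ^ E :=
        Nat.mul_le_mul (Nat.le_of_lt (Nat.lt_two_pow_self (n := q)))
          (Nat.pow_le_pow_left (Nat.le_of_lt (Nat.lt_two_pow_self (n := g))) E)
    _ = 2 ^ (q + g * E) := by rw [← pow_mul, ← pow_add]

lemma sq_le_two_pow' : ∀ m, 4 ≤ m → m ^ 2 ≤ 2 ^ m := by
  intro m
  induction m with
  | zero => omega
  | succ k ih =>
    intro hm
    rcases Nat.lt_or_ge k 4 with h | h
    · have : k = 3 := by omega
      subst this
      norm_num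
    · have ihh := ih h
      have h1 : (k + 1) ^ 2 = k ^ 2 + 2 * k + 1 := by ring
      have h2 : 2 * k + 1 ≤ k ^ 2 := by nlinarith
      have h3 : 2 ^ (k + 1) = 2 * 2 ^ k := by rw [pow_succ]; ring
      omega
/-- For every `t : ℕ → ℕ` with `t(n) = o(n/(log n)²)`,
the language `K` over `{0,1,#}` is not in `Online(t(n))`. -/
theorem K_not_online (t : ℕ → ℕ) (ht : LittleOOfNOverLogSq t) :
    LangK ∉ OnlineClass HSym t := by
  rintro ⟨M, hM⟩
  haveI := M.finQ
  haveI := M.finΓ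
  set q := Nat.card M.Q with hqdef
  set g := Nat.card M.Γ with hgdef
  set kk := M.tapes + 1 with hkkdef
  set c := q + g * kk + 1 with hcdef
  have hc1 : 1 ≤ c := by omega
  set nseq : ℕ → ℕ := fun m => 2 ^ m * (m + 1) + m with hnseq
  have hnseq_tendsto : Filter.Tendsto nseq Filter.atTop Filter.atTop :=
    Filter.tendsto_atTop_mono (fun m => Nat.le_add_left m (2 ^ m * (m + 1)))
      Filter.tendsto_id
  have hlog2 : (0 : ℝ) < Real.log 2 := Real.log_pos (by norm_num)
  have hε : (0 : ℝ) < (Real.log 2) ^ 2 / (32 * c) := by positivity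
  have h1 : ∀ᶠ m : ℕ in Filter.atTop,
      (t (nseq m) : ℝ) * (Real.log (nseq m)) ^ 2 / (nseq m)
        < (Real.log 2) ^ 2 / (32 * c) := by
    have hcomp := ht.comp hnseq_tendsto
    exact hcomp.eventually_lt_const hε
  have hmain : ∀ᶠ m : ℕ in Filter.atTop,
      8 * c * (m + 1) * (t (nseq m) + 1) ≤ 2 ^ m ∧ 2 ≤ m := by
    filter_upwards [h1, Filter.eventually_ge_atTop 4,
      Filter.eventually_ge_atTop (64 * c)] with m hm1 hm4 hm64
    have hm2 : 2 ≤ m := by omega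
    refine ⟨?_, hm2⟩
    -- part (ii): 32 c (m+1) ≤ 2^m
    have hsq : m ^ 2 ≤ 2 ^ m := sq_le_two_pow' m hm4
    have hii : 32 * c * (m + 1) ≤ 2 ^ m := by
      have h5 : 32 * c * (m + 1) ≤ 64 * c * m := by nlinarith
      have h6 : 64 * c * m ≤ m ^ 2 := by nlinarith
      exact le_trans h5 (le_trans h6 hsq)
    -- part (i): real estimate on t (nseq m)
    have hmnat : 2 ≤ nseq m := by
      have : m ≤ nseq m := Nat.le_add_left m (2 ^ m * (m + 1))
      omega
    have hnm_pos : (0 : ℝ) < (nseq m : ℝ) := by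
      exact_mod_cast Nat.lt_of_lt_of_le (by norm_num) hmnat
    have hpow_le : (2 : ℕ) ^ m ≤ nseq m := by
      show (2 : ℕ) ^ m ≤ 2 ^ m * (m + 1) + m
      have : 2 ^ m ≤ 2 ^ m * (m + 1) := Nat.le_mul_of_pos_right _ (by omega)
      omega
    have hlog_ge : (m : ℝ) * Real.log 2 ≤ Real.log (nseq m) := by
      rw [← Real.log_pow]
      apply Real.log_le_log (by positivity)
      exact_mod_cast hpow_le
    have hnm_le : (nseq m : ℝ) ≤ (2 : ℝ) ^ m * (2 * m) := by
      have hmle : m ≤ 2 ^ m := Nat.le_of_lt (Nat.lt_two_pow_self (n := m))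
      have hstep : nseq m ≤ 2 ^ m * (2 * m) := by
        calc nseq m = 2 ^ m * (m + 1) + m := rfl
          _ ≤ 2 ^ m * (m + 1) + 2 ^ m := by omega
          _ = 2 ^ m * (m + 2) := by ring
          _ ≤ 2 ^ m * (2 * m) := Nat.mul_le_mul_left _ (by omega)
      exact_mod_cast hstep
    rw [div_lt_iff₀ hnm_pos] at hm1
    have hlog0 : (0 : ℝ) ≤ (m : ℝ) * Real.log 2 := by positivity
    have ht0 : (0 : ℝ) ≤ (t (nseq m) : ℝ) := Nat.cast_nonneg _
    have step3 : (t (nseq m) : ℝ) * ((m : ℝ) * Real.log 2) ^ 2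
        ≤ (t (nseq m) : ℝ) * (Real.log (nseq m)) ^ 2 :=
      mul_le_mul_of_nonneg_left (pow_le_pow_left₀ hlog0 hlog_ge 2) ht0
    have step4 : (Real.log 2) ^ 2 / (32 * c) * (nseq m : ℝ)
        ≤ (Real.log 2) ^ 2 / (32 * c) * ((2 : ℝ) ^ m * (2 * m)) :=
      mul_le_mul_of_nonneg_left hnm_le (le_of_lt hε)
    have step5 : (t (nseq m) : ℝ) * ((m : ℝ) * Real.log 2) ^ 2
        ≤ (Real.log 2) ^ 2 / (32 * c) * ((2 : ℝ) ^ m * (2 * m)) :=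
      le_trans step3 (le_trans (le_of_lt hm1) step4)
    have hcpos : (0 : ℝ) < (c : ℝ) := by exact_mod_cast hc1
    have hmpos : (0 : ℝ) < (m : ℝ) := by
      exact_mod_cast Nat.lt_of_lt_of_le (by norm_num) hm2
    have step5' : (t (nseq m) : ℝ) * ((m : ℝ) * Real.log 2) ^ 2 * (32 * c)
        ≤ (Real.log 2) ^ 2 * ((2 : ℝ) ^ m * (2 * m)) := by
      rw [div_mul_eq_mul_div, le_div_iff₀ (by positivity)] at step5
      exact step5
    have step6 : 16 * (c : ℝ) * (t (nseq m) : ℝ) * (m : ℝ) ≤ (2 : ℝ) ^ m := by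
      have hpos : (0 : ℝ) < (m : ℝ) * (Real.log 2) ^ 2 := by positivity
      rw [← mul_le_mul_iff_of_pos_right hpos]
      nlinarith [step5']
    -- combine
    have hDr : 32 * (c : ℝ) * ((m : ℝ) + 1) ≤ (2 : ℝ) ^ m := by
      exact_mod_cast hii
    have hgoal : 8 * (c : ℝ) * ((m : ℝ) + 1) * ((t (nseq m) : ℝ) + 1) ≤ (2 : ℝ) ^ m := by
      have hm2r : (2 : ℝ) ≤ (m : ℝ) := by exact_mod_cast hm2
      have hf0 : (0 : ℝ) ≤ (c : ℝ) * (t (nseq m) : ℝ) * ((m : ℝ) - 2) :=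
        mul_nonneg (mul_nonneg (le_of_lt hcpos) ht0) (by linarith)
      have hf1 : 8 * (c : ℝ) * (t (nseq m) : ℝ) ≤ 4 * c * (t (nseq m) : ℝ) * m := by
        nlinarith [hf0]
      linarith [step6, hDr, hf1]
    exact_mod_cast hgoal
  obtain ⟨m, hm8, hm2⟩ := hmain.exists
  -- instantiate the counting lemma at m
  have hcount := main_count M t hM m
  have hnm : nseq m = 2 ^ m * (m + 1) + m := rfl
  rw [← hnm] at hcount
  rw [← hqdef, ← hgdef] at hcount
  set tm := t (nseq m) with htm
  set X := (m + 1) * (tm + 1) with hX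
  set E := kk * (2 * X + 1) with hE
  have hcount' : 2 ^ (2 ^ m - 1) ≤ q * g ^ E := hcount
  -- the upper bound on the number of signatures
  have hX1 : 1 ≤ X := by
    rw [hX]; exact Nat.one_le_iff_ne_zero.mpr (by positivity)
  have h8 : 8 * (c * X) ≤ 2 ^ m := by
    have : 8 * c * (m + 1) * (tm + 1) = 8 * (c * X) := by rw [hX]; ring
    rw [← this]
    exact hm8
  have hcX : c ≤ c * X := Nat.le_mul_of_pos_right c (by omega)
  have hgE : g * E ≤ c * (2 * X + 1) := by
    rw [hE, ← Nat.mul_assoc]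
    exact Nat.mul_le_mul_right _ (by omega)
  have hup : q + g * E ≤ 2 * (c * X) + 2 * c := by
    have : c * (2 * X + 1) = 2 * (c * X) + c := by ring
    omega
  have hlt : q + g * E < 2 ^ m - 1 := by omega
  have hfinal : q * g ^ E < 2 ^ (2 ^ m - 1) :=
    lt_of_le_of_lt (mul_pow_le_two_pow q g E)
      (Nat.pow_lt_pow_right (by norm_num) hlt)
  omega
end

section
/- Let Σ be a finite alphabet and L ⊆ Σ*. Suppose there is a constant C ∈ ℕ such that for every D ≥ 1 there exists a length ℓ_D ≤ C·D·2^D with E_L(ℓ_D, D) ≥ 2^(2^D). Then for every function t : ℕ → ℕ with t(n) = o(n/(log n)²), L does not belong to Online(t(n)). -/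
namespace Rosenberg

open OnlineTM

variable {σ : Type}

lemma stepCfg_congr (M : OnlineTM σ) (z z' : List σ) (c : OCfg M)
    (h : z[c.ipos]? = z'[c.ipos]?) : M.stepCfg z c = M.stepCfg z' c := by
  unfold OnlineTM.stepCfg
  rw [h]

lemma ipos_le_step (M : OnlineTM σ) (z : List σ) (c : OCfg M) :
    c.ipos ≤ (M.stepCfg z c).ipos := by
  unfold OnlineTM.stepCfg
  split
  · exact le_refl _
  · simp only
    split <;> omega

lemma step_ipos_le (M : OnlineTM σ) (z : List σ) (c : OCfg M) :
    (M.stepCfg z c).ipos ≤ c.ipos + 1 := by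
  unfold OnlineTM.stepCfg
  split
  · omega
  · simp only
    split <;> omega

lemma runCfg_zero (M : OnlineTM σ) (z : List σ) :
    M.runCfg z 0 = M.initCfg z.length := rfl

lemma runCfg_succ (M : OnlineTM σ) (z : List σ) (k : ℕ) :
    M.runCfg z (k + 1) = M.stepCfg z (M.runCfg z k) := by
  unfold OnlineTM.runCfg
  rw [Function.iterate_succ_apply']

lemma runCfg_add (M : OnlineTM σ) (z : List σ) (T s : ℕ) :
    M.runCfg z (T + s) = (M.stepCfg z)^[s] (M.runCfg z T) := by
  unfold OnlineTM.runCfg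
  rw [add_comm, Function.iterate_add_apply]

lemma ipos_mono (M : OnlineTM σ) (z : List σ) :
    Monotone fun k => (M.runCfg z k).ipos := by
  apply monotone_nat_of_le_succ
  intro k
  rw [runCfg_succ]
  exact ipos_le_step M z _

lemma nat_ivt (f : ℕ → ℕ) (hf : ∀ k, f (k + 1) ≤ f k + 1) (h0 : f 0 = 0)
    (v N : ℕ) (hN : v ≤ f N) : ∃ k ≤ N, f k = v := by
  induction N with
  | zero => exact ⟨0, le_refl _, by omega⟩
  | succ N ih =>
    by_cases h : v ≤ f N
    · obtain ⟨k, hk, hfk⟩ := ih h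
      exact ⟨k, by omega, hfk⟩
    · exact ⟨N + 1, le_refl _, by have := hf N; omega⟩

lemma exists_ipos_eq (M : OnlineTM σ) (z : List σ) (v N : ℕ)
    (h : v ≤ (M.runCfg z N).ipos) : ∃ k ≤ N, (M.runCfg z k).ipos = v := by
  refine nat_ivt _ (fun k => ?_) rfl v N h
  rw [runCfg_succ]
  exact step_ipos_le M z _

lemma run_prefix_eq (M : OnlineTM σ) (y x x' : List σ) (hx : x.length = x'.length)
    (k : ℕ) (hk : ∀ j < k, (M.runCfg (y ++ x') j).ipos < y.length) :
    M.runCfg (y ++ x) k = M.runCfg (y ++ x') k := by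
  induction k with
  | zero =>
    unfold OnlineTM.runCfg
    simp [hx]
  | succ k ih =>
    have hkk := ih (fun j hj => hk j (by omega))
    rw [runCfg_succ, runCfg_succ, hkk]
    apply stepCfg_congr
    have hip : (M.runCfg (y ++ x') k).ipos < y.length := hk k (by omega)
    rw [List.getElem?_append, List.getElem?_append, if_pos hip, if_pos hip]

end Rosenberg
namespace Rosenberg

open OnlineTM

variable {σ : Type}

/-- Two configurations agree on state, input position, and the tape windows of
radius `r` around the heads. -/
def EqWin (M : OnlineTM σ) (r : ℕ) (c1 c2 : OCfg M) : Prop :=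
  c1.q = c2.q ∧ c1.ipos = c2.ipos ∧
    ∀ (i : Fin (M.tapes + 1)) (d : ℤ), |d| ≤ (r : ℤ) →
      c1.tape i (c1.hd i + d) = c2.tape i (c2.hd i + d)

lemma eqWin_mono (M : OnlineTM σ) {r r' : ℕ} (h : r' ≤ r) {c1 c2 : OCfg M}
    (hw : EqWin M r c1 c2) : EqWin M r' c1 c2 :=
  ⟨hw.1, hw.2.1, fun i d hd => hw.2.2 i d (le_trans hd (by exact_mod_cast h))⟩

lemma stepCfg_of_not_halt (M : OnlineTM σ) (z : List σ) (c : OCfg M)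
    (h : c.q ∉ M.Halt) :
    M.stepCfg z c =
      { q := (M.δ c.q z[c.ipos]? (fun i => c.tape i (c.hd i))).1
        ipos := if (M.δ c.q z[c.ipos]? (fun i => c.tape i (c.hd i))).2.1
          then c.ipos + 1 else c.ipos
        hd := fun i => c.hd i
          + ((M.δ c.q z[c.ipos]? (fun i => c.tape i (c.hd i))).2.2 i).2.offset
        tape := fun i p => if p = c.hd i
          then ((M.δ c.q z[c.ipos]? (fun i => c.tape i (c.hd i))).2.2 i).1
          else c.tape i p } := by
  rw [OnlineTM.stepCfg, if_neg h]

lemma offset_abs_le (m : TMMove) : |m.offset| ≤ 1 := by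
  cases m <;> simp [TMMove.offset]

lemma eqWin_step (M : OnlineTM σ) (z1 z2 : List σ) (c1 c2 : OCfg M) (r : ℕ)
    (h : EqWin M (r + 1) c1 c2) (hz : z1[c1.ipos]? = z2[c2.ipos]?) :
    EqWin M r (M.stepCfg z1 c1) (M.stepCfg z2 c2) := by
  obtain ⟨hq, hi, htp⟩ := h
  have h0 : (fun i => c1.tape i (c1.hd i)) = fun i => c2.tape i (c2.hd i) := by
    funext i
    have := htp i 0 (by simp; positivity)
    simpa using this
  by_cases hH : c1.q ∈ M.Halt
  · rw [OnlineTM.stepCfg, OnlineTM.stepCfg, if_pos hH, if_pos (hq ▸ hH)]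
    exact ⟨hq, hi, fun i d hd => htp i d (le_trans hd (by push_cast; omega))⟩
  · have hδ : M.δ c1.q z1[c1.ipos]? (fun i => c1.tape i (c1.hd i))
        = M.δ c2.q z2[c2.ipos]? (fun i => c2.tape i (c2.hd i)) := by
      rw [hq, hz, h0]
    rw [stepCfg_of_not_halt M z1 c1 hH, stepCfg_of_not_halt M z2 c2 (hq ▸ hH), hδ]
    set u := M.δ c2.q z2[c2.ipos]? (fun i => c2.tape i (c2.hd i)) with hu
    refine ⟨rfl, by simp only [hi], ?_⟩
    intro i d hd
    simp only
    by_cases hc : (u.2.2 i).2.offset + d = 0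
    · rw [if_pos (by omega), if_pos (by omega)]
    · rw [if_neg (by omega), if_neg (by omega)]
      have e1 : c1.hd i + (u.2.2 i).2.offset + d = c1.hd i + ((u.2.2 i).2.offset + d) := by
        ring
      have e2 : c2.hd i + (u.2.2 i).2.offset + d = c2.hd i + ((u.2.2 i).2.offset + d) := by
        ring
      rw [e1, e2]
      apply htp
      have h1 := abs_add_le ((u.2.2 i).2.offset) d
      have h2 := offset_abs_le ((u.2.2 i).2)
      push_cast
      linarith

end Rosenberg
namespace Rosenberg

open OnlineTM

variable {σ : Type}

lemma eqWin_iterate (M : OnlineTM σ) (z1 z2 : List σ) (m : ℕ)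
    (hz : ∀ p, m ≤ p → z1[p]? = z2[p]?) :
    ∀ (s r : ℕ) (c1 c2 : OCfg M), EqWin M (r + s) c1 c2 → m ≤ c1.ipos →
      EqWin M r ((M.stepCfg z1)^[s] c1) ((M.stepCfg z2)^[s] c2) := by
  intro s
  induction s with
  | zero => intro r c1 c2 h _; exact h
  | succ s ih =>
    intro r c1 c2 h hm
    rw [Function.iterate_succ_apply, Function.iterate_succ_apply]
    have hstep : EqWin M (r + s) (M.stepCfg z1 c1) (M.stepCfg z2 c2) := by
      apply eqWin_step M z1 z2 c1 c2 (r + s)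
      · have : r + s + 1 = r + (s + 1) := by omega
        rw [this]; exact h
      · rw [← h.2.1]; exact hz _ hm
    exact ih r _ _ hstep (le_trans hm (ipos_le_step M z1 c1))

lemma time_bound (M : OnlineTM σ) (z : List σ) (N tn : ℕ)
    (hgap : ∀ i j : ℕ, i ≤ j → j ≤ N →
      (M.runCfg z i).ipos = (M.runCfg z j).ipos → j - i ≤ tn)
    (T : ℕ) (hTN : T ≤ N) :
    ∀ (v j : ℕ), T ≤ j → j ≤ N →
      (M.runCfg z j).ipos ≤ (M.runCfg z T).ipos + v →
      j ≤ T + v * (tn + 1) + tn := by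
  intro v
  induction v with
  | zero =>
    intro j hTj hjN hle
    have hmono : (M.runCfg z T).ipos ≤ (M.runCfg z j).ipos := ipos_mono M z hTj
    have heq : (M.runCfg z T).ipos = (M.runCfg z j).ipos := by omega
    have := hgap T j hTj hjN heq
    omega
  | succ v ih =>
    intro j hTj hjN hle
    by_cases hcase : (M.runCfg z j).ipos ≤ (M.runCfg z T).ipos + v
    · have := ih j hTj hjN hcase
      have hmul : (v + 1) * (tn + 1) = v * (tn + 1) + (tn + 1) := by ring
      omega
    · have hex : ∃ k : ℕ, (M.runCfg z k).ipos = (M.runCfg z j).ipos := ⟨j, rfl⟩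
      set i := Nat.find hex with hidef
      have hspec : (M.runCfg z i).ipos = (M.runCfg z j).ipos := Nat.find_spec hex
      have hij : i ≤ j := Nat.find_le rfl
      have hspec' : (M.runCfg z i).ipos = (M.runCfg z j).ipos := hspec
      have hji := hgap i j hij hjN hspec
      have hTi : T < i := by
        by_contra hcon
        have hmono2 : (M.runCfg z i).ipos ≤ (M.runCfg z T).ipos :=
          ipos_mono M z (show i ≤ T by omega)
        omega
      have hi1 : (M.runCfg z (i - 1)).ipos ≤ (M.runCfg z T).ipos + v := by
        have hne : (M.runCfg z (i - 1)).ipos ≠ (M.runCfg z j).ipos :=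
          Nat.find_min hex (by omega)
        have hmono3 : (M.runCfg z (i - 1)).ipos ≤ (M.runCfg z i).ipos :=
          ipos_mono M z (show i - 1 ≤ i by omega)
        omega
      have := ih (i - 1) (by omega) (by omega) hi1
      have hmul : (v + 1) * (tn + 1) = v * (tn + 1) + (tn + 1) := by ring
      omega

end Rosenberg
namespace Rosenberg

open OnlineTM

variable {σ : Type}

instance listFin (ℓ : ℕ) [Fintype σ] : Finite { y : List σ // y.length = ℓ } :=
  inferInstanceAs (Finite (List.Vector σ ℓ))

lemma numClasses_le_of_sig [Fintype σ] {α : Type*} [Finite α] (L : Set (List σ))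
    (ℓ m : ℕ) (sig : { y : List σ // y.length = ℓ } → α)
    (hsig : ∀ y1 y2, sig y1 = sig y2 → LEquiv L m y1.1 y2.1) :
    numClasses L ℓ m ≤ Nat.card α := by
  classical
  unfold numClasses
  by_cases hY : Nonempty { y : List σ // y.length = ℓ }
  · set r := fun y1 y2 : { y : List σ // y.length = ℓ } => LEquiv L m y1.1 y2.1 with hr
    have : Nonempty (Quot r) := ⟨Quot.mk r (Classical.arbitrary _)⟩
    refine Nat.card_le_card_of_surjective
      (fun a : α => if hx : ∃ y, sig y = a then Quot.mk r hx.choose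
        else Quot.mk r (Classical.arbitrary _)) ?_
    intro c
    induction c using Quot.ind with
    | _ y =>
      refine ⟨sig y, ?_⟩
      have hx : ∃ y', sig y' = sig y := ⟨y, rfl⟩
      simp only [dif_pos hx]
      exact Quot.sound (hsig _ _ hx.choose_spec)
  · have : IsEmpty { y : List σ // y.length = ℓ } := not_nonempty_iff.1 hY
    have : IsEmpty (Quot (fun y1 y2 : { y : List σ // y.length = ℓ } =>
        LEquiv L m y1.1 y2.1)) := by
      constructor
      intro c
      induction c using Quot.ind with
      | _ y => exact this.false y
    simp [Nat.card_of_isEmpty]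

lemma numClasses_le_pow [Fintype σ] (L : Set (List σ)) (ℓ m : ℕ) :
    numClasses L ℓ m ≤ Fintype.card σ ^ ℓ := by
  have h := numClasses_le_of_sig L ℓ m (fun y => y)
    (fun y1 y2 h => by
      have : y1 = y2 := h
      subst this
      exact fun x hx => Iff.rfl)
  refine le_trans h ?_
  have hcard : Nat.card { y : List σ // y.length = ℓ } = Fintype.card σ ^ ℓ := by
    have h1 : Nat.card { y : List σ // y.length = ℓ } = Nat.card (List.Vector σ ℓ) := rfl
    rw [h1, Nat.card_eq_fintype_card, card_vector]
  omega

end Rosenberg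
namespace Rosenberg

open OnlineTM

variable {σ : Type}

lemma key [Fintype σ] (M : OnlineTM σ) (L : Set (List σ)) (t : ℕ → ℕ)
    (hM : M.DecidesIn L t) (a : σ) (ℓ D : ℕ) (hD : 1 ≤ D) :
    numClasses L ℓ D ≤
      Nat.card M.Q *
        Nat.card M.Γ ^ ((M.tapes + 1) * (2 * ((D + 1) * (t (ℓ + D) + 1)) + 1)) := by
  classical
  haveI := M.finQ
  haveI := M.finΓ
  set n := ℓ + D with hn
  set R := (D + 1) * (t n + 1) with hRdef
  set x₀ : List σ := List.replicate D a with hx₀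
  have hx₀len : x₀.length = D := List.length_replicate
  have hex : ∀ y : { y : List σ // y.length = ℓ },
      ∃ k, (M.runCfg (y.1 ++ x₀) k).ipos = ℓ := by
    intro y
    obtain ⟨N, hNhalt, hNmin, hNpos, hNacc, hNgap⟩ := hM (y.1 ++ x₀)
    have hlen : (y.1 ++ x₀).length = n := by
      rw [List.length_append, y.2, hx₀len]
    obtain ⟨k, hk, hkeq⟩ := exists_ipos_eq M (y.1 ++ x₀) ℓ N
      (by rw [hNpos, hlen]; omega)
    exact ⟨k, hkeq⟩
  set T : { y : List σ // y.length = ℓ } → ℕ := fun y => Nat.find (hex y) with hT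
  set cfg : { y : List σ // y.length = ℓ } → OCfg M :=
    fun y => M.runCfg (y.1 ++ x₀) (T y) with hcfg
  have hF1 : ∀ y, ∀ j < T y, (M.runCfg (y.1 ++ x₀) j).ipos < ℓ := by
    intro y j hj
    by_contra hcon
    push_neg at hcon
    obtain ⟨k, hk, hkeq⟩ := exists_ipos_eq M (y.1 ++ x₀) ℓ j hcon
    have hTy : T y = Nat.find (hex y) := rfl
    exact Nat.find_min (hex y) (by omega) hkeq
  have hF2 : ∀ y, ∀ x : List σ, x.length = D → ∀ k ≤ T y,
      M.runCfg (y.1 ++ x) k = M.runCfg (y.1 ++ x₀) k := by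
    intro y x hx k hk
    apply run_prefix_eq M y.1 x x₀ (by rw [hx, hx₀len])
    intro j hj
    rw [y.2]
    exact hF1 y j (by omega)
  have hF3 : ∀ y, (cfg y).ipos = ℓ := fun y => Nat.find_spec (hex y)
  set sig : { y : List σ // y.length = ℓ } →
      M.Q × (Fin (M.tapes + 1) → Fin (2 * R + 1) → M.Γ) :=
    fun y => ((cfg y).q,
      fun i d => (cfg y).tape i ((cfg y).hd i + ((d.1 : ℤ) - R))) with hsigdef
  have hmain : ∀ y1 y2, sig y1 = sig y2 → LEquiv L D y1.1 y2.1 := by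
    intro y1 y2 hs x hx
    have hwin : EqWin M R (cfg y1) (cfg y2) := by
      refine ⟨congrArg Prod.fst hs, by rw [hF3, hF3], ?_⟩
      intro i d hd
      obtain ⟨hd1, hd2⟩ := abs_le.1 hd
      have hnn : (0 : ℤ) ≤ d + R := by omega
      have htoNat : ((d + R).toNat : ℤ) = d + R := Int.toNat_of_nonneg hnn
      have hlt : (d + R).toNat < 2 * R + 1 := by omega
      set d' : Fin (2 * R + 1) := ⟨(d + R).toNat, hlt⟩ with hd'
      have hs2 := congrFun (congrFun (congrArg Prod.snd hs) i) d'
      simp only [hsigdef] at hs2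
      have hval : ((d'.1 : ℤ) - R) = d := by
        rw [hd']
        simp only
        omega
      rwa [hval] at hs2
    set z1 := y1.1 ++ x with hz1
    set z2 := y2.1 ++ x with hz2
    have hlen1 : z1.length = n := by rw [hz1, List.length_append, y1.2, hx]
    have hlen2 : z2.length = n := by rw [hz2, List.length_append, y2.2, hx]
    obtain ⟨N1, h1halt, h1min, h1pos, h1acc, h1gap⟩ := hM z1
    obtain ⟨N2, h2halt, h2min, h2pos, h2acc, h2gap⟩ := hM z2
    rw [hlen1] at h1gap h1pos
    rw [hlen2] at h2gap h2pos
    have hrun1 : ∀ k ≤ T y1, M.runCfg z1 k = M.runCfg (y1.1 ++ x₀) k := hF2 y1 x hx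
    have hrun2 : ∀ k ≤ T y2, M.runCfg z2 k = M.runCfg (y2.1 ++ x₀) k := hF2 y2 x hx
    have hipos1 : (M.runCfg z1 (T y1)).ipos = ℓ := by
      rw [hrun1 (T y1) le_rfl]; exact hF3 y1
    have hipos2 : (M.runCfg z2 (T y2)).ipos = ℓ := by
      rw [hrun2 (T y2) le_rfl]; exact hF3 y2
    have hT1N1 : T y1 ≤ N1 := by
      by_contra hcon
      push_neg at hcon
      have h1 := hF1 y1 N1 hcon
      rw [← hrun1 N1 (by omega)] at h1
      rw [h1pos] at h1
      omega
    have hT2N2 : T y2 ≤ N2 := by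
      by_contra hcon
      push_neg at hcon
      have h2 := hF1 y2 N2 hcon
      rw [← hrun2 N2 (by omega)] at h2
      rw [h2pos] at h2
      omega
    have htb1 : N1 ≤ T y1 + D * (t n + 1) + t n := by
      apply time_bound M z1 N1 (t n) h1gap (T y1) hT1N1 D N1 hT1N1 le_rfl
      rw [h1pos, hipos1, hn]
    have hs1R : N1 - T y1 ≤ R := by
      have hmul : (D + 1) * (t n + 1) = D * (t n + 1) + (t n + 1) := by ring
      omega
    have hzagree : ∀ p, ℓ ≤ p → z1[p]? = z2[p]? := by
      intro p hp
      rw [hz1, hz2, List.getElem?_append_right (by rw [y1.2]; omega),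
        List.getElem?_append_right (by rw [y2.2]; omega), y1.2, y2.2]
    have hstates : ∀ s ≤ R,
        (M.runCfg z1 (T y1 + s)).q = (M.runCfg z2 (T y2 + s)).q := by
      intro s hs
      have hW : EqWin M (R - s) ((M.stepCfg z1)^[s] (M.runCfg z1 (T y1)))
          ((M.stepCfg z2)^[s] (M.runCfg z2 (T y2))) := by
        apply eqWin_iterate M z1 z2 ℓ hzagree s (R - s)
        · have hRs : R - s + s = R := by omega
          rw [hRs, hrun1 (T y1) le_rfl, hrun2 (T y2) le_rfl]
          exact hwin
        · exact le_of_eq hipos1.symm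
      rw [runCfg_add, runCfg_add]
      exact hW.1
    set s1 := N1 - T y1 with hs1def
    have hN1eq : N1 = T y1 + s1 := by omega
    have hq1halt : (M.runCfg z1 (T y1 + s1)).q ∈ M.Halt := by
      rw [← hN1eq]; exact h1halt
    have h2haltAt : (M.runCfg z2 (T y2 + s1)).q ∈ M.Halt := by
      rw [← hstates s1 hs1R]; exact hq1halt
    have hN2le : N2 ≤ T y2 + s1 := by
      by_contra hcon
      push_neg at hcon
      exact h2min (T y2 + s1) hcon h2haltAt
    have hs2le : N2 - T y2 ≤ s1 := by omega
    have h1haltAt : (M.runCfg z1 (T y1 + (N2 - T y2))).q ∈ M.Halt := by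
      rw [hstates (N2 - T y2) (le_trans hs2le hs1R)]
      have he : T y2 + (N2 - T y2) = N2 := by omega
      rw [he]
      exact h2halt
    have hN1le : N1 ≤ T y1 + (N2 - T y2) := by
      by_contra hcon
      push_neg at hcon
      exact h1min _ hcon h1haltAt
    have hseq : N2 = T y2 + s1 := by omega
    have hfinal : (M.runCfg z1 N1).q = (M.runCfg z2 N2).q := by
      rw [hN1eq, hseq]
      exact hstates s1 hs1R
    rw [← h1acc, ← h2acc, hfinal]
  have hcount := numClasses_le_of_sig L ℓ D sig hmain
  refine le_trans hcount (le_of_eq ?_)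
  rw [Nat.card_prod, Nat.card_fun, Nat.card_fun, Nat.card_eq_fintype_card (α := Fin (M.tapes + 1)),
    Nat.card_eq_fintype_card (α := Fin (2 * R + 1)), Fintype.card_fin, Fintype.card_fin,
    ← pow_mul]
  ring

end Rosenberg

namespace Rosenberg

lemma sq_le_two_pow (n : ℕ) (hn : 4 ≤ n) : n ^ 2 ≤ 2 ^ n := by
  induction n with
  | zero => omega
  | succ m ih =>
    by_cases h : 4 ≤ m
    · have h1 := ih h
      have h2 : (m + 1) ^ 2 ≤ 2 * m ^ 2 := by nlinarith
      have h3 : 2 ^ (m + 1) = 2 * 2 ^ m := by ring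
      omega
    · have hm : m = 3 := by omega
      subst hm
      norm_num

end Rosenberg


set_option maxHeartbeats 1000000 in
/-- Rosenberg's method. Let `L` be a language over a finite
alphabet.  If there is a constant `C` such that for every `D ≥ 1` there is a
length `ℓ_D ≤ C·D·2^D` with `E_L(ℓ_D, D) ≥ 2^(2^D)`, then for every
`t : ℕ → ℕ` with `t(n) = o(n/(log n)²)`, `L ∉ Online(t(n))`. -/
theorem many_classes_not_online (σ : Type) [Fintype σ] (L : Set (List σ))
    (C : ℕ) (hC : ∀ D : ℕ, 1 ≤ D → ∃ ℓD : ℕ, ℓD ≤ C * D * 2 ^ D ∧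
      2 ^ 2 ^ D ≤ numClasses L ℓD D)
    (t : ℕ → ℕ) (ht : LittleOOfNOverLogSq t) :
    L ∉ OnlineClass σ t := by
  classical
  rintro ⟨M, hM⟩
  haveI := M.finQ
  haveI := M.finΓ
  haveI : Nonempty M.Q := ⟨M.q0⟩
  haveI : Nonempty M.Γ := ⟨M.blank⟩
  set s := Fintype.card σ with hs
  by_cases hs1 : s ≤ 1
  · obtain ⟨ℓ, hℓ, hcl⟩ := hC 1 le_rfl
    have h1 := Rosenberg.numClasses_le_pow L ℓ 1
    rw [← hs] at h1
    have h2 : s ^ ℓ ≤ 1 := by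
      calc s ^ ℓ ≤ 1 ^ ℓ := Nat.pow_le_pow_left hs1 ℓ
      _ = 1 := one_pow ℓ
    norm_num at hcl
    omega
  push_neg at hs1
  have hσ : Nonempty σ := Fintype.card_pos_iff.1 (by omega)
  obtain ⟨a⟩ := hσ
  set q := Nat.card M.Q with hqdef
  set g := Nat.card M.Γ with hgdef
  have hq1 : 1 ≤ q := Nat.card_pos
  have hg1 : 1 ≤ g := Nat.card_pos
  set A := g * (M.tapes + 1) with hA
  have hA1 : 1 ≤ A := by
    rw [hA]
    exact Nat.one_le_iff_ne_zero.2 (Nat.mul_ne_zero (by omega) (by omega))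
  set ε := (Real.log 2) ^ 2 / (64 * (C + 1) * A) with hε
  have hlg : (0 : ℝ) < Real.log 2 := Real.log_pos one_lt_two
  have hεpos : 0 < ε := div_pos (by positivity) (by positivity)
  have hev := ht.eventually (gt_mem_nhds hεpos)
  obtain ⟨n₀, hn₀⟩ := Filter.eventually_atTop.1 hev
  set c₁ := s * n₀ + 2 * q + 10 * A with hc₁
  set Dlog := Nat.ceil (2 * Real.log s / Real.log 2) with hDlog
  set D := max (max 4 (2 * c₁ + 1)) (Dlog + 1) with hD
  have hD4 : 4 ≤ D := le_trans (le_max_left 4 _) (le_max_left _ _)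
  have hD1 : 1 ≤ D := by omega
  have hDc : 2 * c₁ + 1 ≤ D := le_trans (le_max_right 4 _) (le_max_left _ _)
  have hDlog1 : Dlog + 1 ≤ D := le_max_right _ _
  clear_value D
  clear hD
  have hsq : D ^ 2 ≤ 2 ^ D := Rosenberg.sq_le_two_pow D hD4
  have hc₁D : c₁ * (D + 1) ≤ 2 ^ D := by
    have h1 : c₁ * (D + 1) ≤ 2 * c₁ * D := by nlinarith
    have h2 : 2 * c₁ * D ≤ D * D := by nlinarith
    have h3 : D * D = D ^ 2 := by ring
    omega
  clear_value c₁
  obtain ⟨ℓ, hℓle, hcl⟩ := hC D hD1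
  set n := ℓ + D with hn
  have hkey := Rosenberg.key M L t hM a ℓ D hD1
  rw [← hqdef, ← hgdef] at hkey
  clear_value q g A
  set X := t n with hX
  set E := (M.tapes + 1) * (2 * ((D + 1) * (X + 1)) + 1) with hE
  have hbig : 2 ^ 2 ^ D ≤ q * g ^ E := le_trans hcl hkey
  have hstep1 : q * g ^ E ≤ 2 ^ (q + A * (2 * ((D + 1) * (X + 1)) + 1)) := by
    have h1 : q * g ^ E ≤ 2 ^ q * (2 ^ g) ^ E :=
      Nat.mul_le_mul (Nat.le_of_lt (Nat.lt_two_pow_self (n := q)))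
        (Nat.pow_le_pow_left (Nat.le_of_lt (Nat.lt_two_pow_self (n := g))) E)
    have h2 : 2 ^ q * ((2:ℕ) ^ g) ^ E = 2 ^ (q + g * E) := by
      rw [← pow_mul, ← pow_add]
    have h3 : q + g * E = q + A * (2 * ((D + 1) * (X + 1)) + 1) := by
      rw [hE, hA]; ring
    rw [← h3]
    exact le_trans h1 (le_of_eq h2)
  have h2D : 2 ^ D ≤ q + A * (2 * ((D + 1) * (X + 1)) + 1) :=
    (Nat.pow_le_pow_iff_right (by norm_num : 1 < 2)).1 (le_trans hbig hstep1)
  have hN2 : 2 ^ D ≤ q + 5 * A * D + 4 * A * D * X := by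
    have hXle : 2 * ((D + 1) * (X + 1)) + 1 ≤ 4 * D * X + 5 * D := by nlinarith
    have h1 : A * (2 * ((D + 1) * (X + 1)) + 1) ≤ A * (4 * D * X + 5 * D) :=
      Nat.mul_le_mul_left A hXle
    have h2 : A * (4 * D * X + 5 * D) = 5 * A * D + 4 * A * D * X := by ring
    omega
  have hsl : 2 ^ D ≤ s * ℓ := by
    have h0 := Rosenberg.numClasses_le_pow L ℓ D
    rw [← hs] at h0
    have h1 : (2:ℕ) ^ 2 ^ D ≤ s ^ ℓ := le_trans hcl h0
    have h2 : s ^ ℓ ≤ ((2:ℕ) ^ s) ^ ℓ :=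
      Nat.pow_le_pow_left (Nat.le_of_lt (Nat.lt_two_pow_self (n := s))) ℓ
    rw [← pow_mul] at h2
    exact (Nat.pow_le_pow_iff_right (by norm_num : 1 < 2)).1 (le_trans h1 h2)
  have hsn : 2 ^ D ≤ s * n := le_trans hsl (Nat.mul_le_mul_left s (by omega))
  have hn0n : n₀ ≤ n := by
    have h1 : s * n₀ ≤ c₁ := by omega
    have h2 : c₁ ≤ c₁ * (D + 1) := Nat.le_mul_of_pos_right c₁ (by omega)
    have h3 : s * n₀ ≤ s * n := by omega
    exact Nat.le_of_mul_le_mul_left h3 (by omega)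
  have hnle : n ≤ (C + 1) * D * 2 ^ D := by
    have h1 : D ≤ D * 2 ^ D := Nat.le_mul_of_pos_right D (by positivity)
    have h2 : (C + 1) * D * 2 ^ D = C * D * 2 ^ D + D * 2 ^ D := by ring
    omega
  -- move to ℝ
  have htn := hn₀ n hn0n
  set Dr := (D : ℝ) with hDr
  set P := (2 : ℝ) ^ D with hP
  set lg := Real.log 2 with hlgdef
  set Ln := Real.log n with hLndef
  set Tn := (X : ℝ) with hTndef
  have hDrpos : (0:ℝ) < Dr := by
    rw [hDr]; exact_mod_cast (by omega : 0 < D)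
  have hPpos : (0:ℝ) < P := by positivity
  have hnpos : (0:ℝ) < (n:ℝ) := by exact_mod_cast (by omega : 0 < n)
  have hspos : (0:ℝ) < (s:ℝ) := by exact_mod_cast (by omega : 0 < s)
  have hApos : (0:ℝ) < (A:ℝ) := by exact_mod_cast (by omega : 0 < A)
  have hTnpos : (0:ℝ) ≤ Tn := Nat.cast_nonneg X
  have r1 : Tn * Ln ^ 2 < ε * n := by
    rw [div_lt_iff₀ hnpos] at htn
    linarith [htn]
  have hPsn : P ≤ (s:ℝ) * n := by rw [hP]; exact_mod_cast hsn
  have hl1 : Real.log (P / s) ≤ Ln := by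
    rw [hLndef]
    apply Real.log_le_log (by positivity)
    rw [div_le_iff₀ hspos]
    linarith
  have hl2 : Real.log (P / s) = Dr * lg - Real.log s := by
    rw [Real.log_div (by positivity) (ne_of_gt hspos), hP, Real.log_pow]
  have hlogs : Real.log s ≤ Dr * lg / 2 := by
    have h1 : 2 * Real.log s / lg ≤ (Dlog:ℝ) := Nat.le_ceil _
    have h2 : (Dlog:ℝ) ≤ Dr := by
      rw [hDr]; exact_mod_cast (by omega : Dlog ≤ D)
    rw [div_le_iff₀ hlg] at h1
    have h3 : (Dlog:ℝ) * lg ≤ Dr * lg := mul_le_mul_of_nonneg_right h2 hlg.le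
    linarith
  have r2 : Dr * lg / 2 ≤ Ln := by
    calc Dr * lg / 2 = Dr * lg - Dr * lg / 2 := by ring
    _ ≤ Dr * lg - Real.log s := by linarith
    _ = Real.log (P / s) := hl2.symm
    _ ≤ Ln := hl1
  have r3 : (n:ℝ) ≤ (C + 1) * Dr * P := by rw [hDr, hP]; exact_mod_cast hnle
  have r4 : 2 * ((q:ℝ) + 5 * A * Dr) ≤ P := by
    have h1 : 2 * q + 10 * A * D ≤ c₁ * (D + 1) := by
      have e1 : 2 * q + 10 * A ≤ c₁ := by omega
      have a1 : 2 * q ≤ 2 * q * (D + 1) := Nat.le_mul_of_pos_right (2 * q) (by omega)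
      have a2 : 10 * A * D ≤ 10 * A * (D + 1) := Nat.mul_le_mul_left (10 * A) (by omega)
      have a3 : (2 * q + 10 * A) * (D + 1) = 2 * q * (D + 1) + 10 * A * (D + 1) := by ring
      have e2 : (2 * q + 10 * A) * (D + 1) ≤ c₁ * (D + 1) := Nat.mul_le_mul_right (D + 1) e1
      exact le_trans (le_trans (Nat.add_le_add a1 a2) (le_of_eq a3.symm)) e2
    have h2 : 2 * q + 10 * A * D ≤ 2 ^ D := le_trans h1 hc₁D
    have h3 : ((2 * q + 10 * A * D : ℕ) : ℝ) ≤ ((2:ℕ) ^ D : ℝ) := by exact_mod_cast h2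
    push_cast at h3
    rw [hP, hDr]
    linarith
  have r5 : P ≤ (q:ℝ) + 5 * A * Dr + 4 * A * Dr * Tn := by
    have h3 : ((2 ^ D : ℕ) : ℝ) ≤ ((q + 5 * A * D + 4 * A * D * X : ℕ) : ℝ) := by
      exact_mod_cast hN2
    push_cast at h3
    rw [hP, hDr, hTndef]
    linarith
  have l1 : Tn * (Dr * lg / 2) ^ 2 ≤ Tn * Ln ^ 2 :=
    mul_le_mul_of_nonneg_left (pow_le_pow_left₀ (by positivity) r2 2) hTnpos
  have l2 : Tn * (Dr * lg / 2) ^ 2 < ε * ((C + 1) * Dr * P) := by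
    have h3 : ε * n ≤ ε * ((C + 1) * Dr * P) := mul_le_mul_of_nonneg_left r3 hεpos.le
    linarith
  have hTnb : Tn < P / (16 * A * Dr) := by
    have hpos : (0:ℝ) < Dr ^ 2 * lg ^ 2 / 4 := by positivity
    have heq : P / (16 * A * Dr) = (ε * ((C + 1) * Dr * P)) / (Dr ^ 2 * lg ^ 2 / 4) := by
      rw [hε]
      field_simp
      ring
    rw [heq, lt_div_iff₀ hpos]
    calc Tn * (Dr ^ 2 * lg ^ 2 / 4) = Tn * (Dr * lg / 2) ^ 2 := by ring
    _ < _ := l2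
  have h4 : 4 * (A:ℝ) * Dr * (P / (16 * A * Dr)) = P / 4 := by
    field_simp
    ring
  have hfin : P < P := by
    calc P ≤ (q:ℝ) + 5 * A * Dr + 4 * A * Dr * Tn := r5
    _ < (q:ℝ) + 5 * A * Dr + 4 * A * Dr * (P / (16 * A * Dr)) := by
        have h5 : 4 * (A:ℝ) * Dr * Tn < 4 * A * Dr * (P / (16 * A * Dr)) :=
          mul_lt_mul_of_pos_left hTnb (by positivity)
        linarith
    _ = (q:ℝ) + 5 * A * Dr + P / 4 := by rw [h4]
    _ ≤ P / 2 + P / 4 := by linarith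
    _ < P := by linarith
  exact lt_irrefl P hfin
end

section
/- There exists a language H ⊆ {0,1,#}* decided by some scaffolding automaton such that for every D ∈ ℕ, E_H(ℓ_D, D) ≥ 2^(2^D), where ℓ_D = D + 1 + Σ_{n=0}^{2^(D+1)−1} (2·|n|₂ + 2) and |n|₂ denotes the length of the shortest binary representation of n (so ℓ_D = O(D·2^D)); consequently, for every function t : ℕ → ℕ with t(n) = o(n/(log n)²), H does not belong to Online(t(n)). -/
/-! ## Scaffolding automata -/

/-- A `(d,Γ)`-scaffold: nodes `0, …, top`, each node `v` carrying
`d` (possibly missing) edges pointing backwards (to nodes `≤ v`)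
and an optional label from `Γ`.  (The data of the functions at indices
beyond `top` is irrelevant.) -/
structure Scaffold (d : ℕ) (Γ : Type) : Type where
  top : ℕ
  edge : ℕ → Fin d → Option ℕ
  label : ℕ → Option Γ
  back : ∀ v i w, edge v i = some w → w ≤ v

/-- The type of `k`-neighbourhoods for `(d,Γ)`-scaffolds:
`N₀ = Γ ∪ {∅}` and `N_{k+1} = (Γ ∪ {∅}) × (N_k ∪ {∅})^d`. -/
def Nbhd (d : ℕ) (Γ : Type) : ℕ → Type
  | 0 => Option Γ
  | k + 1 => Option Γ × (Fin d → Option (Nbhd d Γ k))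

/-- The `k`-neighbourhood of node `v` in a scaffold. -/
def Scaffold.nbhd {d : ℕ} {Γ : Type} (S : Scaffold d Γ) : (k : ℕ) → ℕ → Nbhd d Γ k
  | 0, v => S.label v
  | k + 1, v => (S.label v, fun i => (S.edge v i).map (S.nbhd k))

/-- The specification of an edge of a newly created node: either a path
(a sequence of at most `k` edge indices, to be followed from the old top node),
or `SELF` (the new node itself), or `missing` (no edge, `∅`). -/
inductive PathSpec (d k : ℕ) : Type where
  | path (l : List (Fin d)) (h : l.length ≤ k) : PathSpec d k
  | self : PathSpec d k
  | missing : PathSpec d k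

/-- Following a path (sequence of edge indices) from node `v` in a scaffold;
returns `none` if the path is invalid. -/
def Scaffold.follow {d : ℕ} {Γ : Type} (S : Scaffold d Γ) :
    List (Fin d) → ℕ → Option ℕ
  | [], v => some v
  | i :: l, v => (S.edge v i).bind (S.follow l)

theorem Scaffold.follow_le {d : ℕ} {Γ : Type} (S : Scaffold d Γ) :
    ∀ (l : List (Fin d)) (v w : ℕ), S.follow l v = some w → w ≤ v := by
  intro l
  induction l with
  | nil =>
    intro v w h
    simp only [Scaffold.follow, Option.some_inj] at h
    omega
  | cons i l ih =>
    intro v w h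
    simp only [Scaffold.follow, Option.bind_eq_some_iff] at h
    obtain ⟨u, hu, hw⟩ := h
    exact le_trans (ih u w hw) (S.back v i u hu)

/-- The initial scaffold: a single unlabelled node with all edges missing. -/
def Scaffold.init (d : ℕ) (Γ : Type) : Scaffold d Γ where
  top := 0
  edge := fun _ _ => none
  label := fun _ => none
  back := by intro v i w h; exact absurd h (by simp)

/-- Appending a new top node with label `γ`, whose edges are determined by the
path specifications `ps` (followed from the old top node). -/
def Scaffold.extend {d k : ℕ} {Γ : Type} (S : Scaffold d Γ) (γ : Γ)
    (ps : Fin d → PathSpec d k) : Scaffold d Γ where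
  top := S.top + 1
  edge := fun v j =>
    if v = S.top + 1 then
      match ps j with
      | .missing => none
      | .self => some (S.top + 1)
      | .path l _ => S.follow l S.top
    else if v ≤ S.top then S.edge v j else none
  label := fun v =>
    if v = S.top + 1 then some γ else if v ≤ S.top then S.label v else none
  back := by
    intro v j w h
    try dsimp only at h
    split_ifs at h with h1 h2
    · subst h1
      rcases hps : ps j with ⟨l, hl⟩ | _ | _
      · rw [hps] at h
        have := S.follow_le l S.top w h
        omega
      · rw [hps] at h
        simp only [Option.some_inj] at h
        omega
      · rw [hps] at h
        exact absurd h (by simp)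
    · exact S.back v j w h

/-- A scaffolding automaton with input alphabet `σ`. -/
structure SAutomaton (σ : Type) : Type 1 where
  /-- degree -/
  d : ℕ
  dpos : 1 ≤ d
  /-- working alphabet -/
  Γ : Type
  finΓ : Finite Γ
  /-- distance -/
  k : ℕ
  /-- states -/
  Q : Type
  finQ : Finite Q
  /-- initial state -/
  q0 : Q
  /-- accepting states -/
  F : Set Q
  /-- transition function -/
  δ : Q → σ → Nbhd d Γ k → Q × Γ × (Fin d → PathSpec d k)

/-- A single step of computation of a scaffolding automaton on input symbol `a`. -/
def SAutomaton.step {σ : Type} (A : SAutomaton σ) (a : σ) :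
    A.Q × Scaffold A.d A.Γ → A.Q × Scaffold A.d A.Γ :=
  fun c =>
    let out := A.δ c.1 a (c.2.nbhd A.k c.2.top)
    (out.1, c.2.extend out.2.1 out.2.2)

/-- The state and scaffold reached by a scaffolding automaton after reading `x`. -/
def SAutomaton.run {σ : Type} (A : SAutomaton σ) (x : List σ) :
    A.Q × Scaffold A.d A.Γ :=
  x.foldl (fun c a => A.step a c) (A.q0, Scaffold.init A.d A.Γ)

/-- The language decided by a scaffolding automaton. -/
def SAutomaton.Lang {σ : Type} (A : SAutomaton σ) : Set (List σ) :=
  { x | (A.run x).1 ∈ A.F }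
/-- `|n|₂`: the length of the shortest binary representation of `n`
(with `|0|₂ = 1`). -/
def binLen (n : ℕ) : ℕ := max 1 n.size

/-- The length `ℓ_D = D + 1 + Σ_{n=0}^{2^(D+1)−1} (2·|n|₂ + 2)`. -/
def hardLen (D : ℕ) : ℕ :=
  D + 1 + ∑ n ∈ Finset.range (2 ^ (D + 1)), (2 * binLen n + 2)

namespace HardLang

/-- States of the hard-language automaton. -/
inductive HQ : Type where
  | pend : Option Bool → HQ
  | pend11 : HQ
  | nav : Bool → HQ
  deriving DecidableEq

instance : Finite HQ :=
  Finite.of_injective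
    (fun q : HQ => match q with
      | .pend p => Sum.inl p
      | .pend11 => Sum.inr (Sum.inl ())
      | .nav b => Sum.inr (Sum.inr b) : HQ → (Option Bool ⊕ Unit ⊕ Bool))
    (by intro a b h; cases a <;> cases b <;> simp_all)

/-- label of the node pointed to by edge 0 of the top node. -/
def rootLab (N : Nbhd 4 Bool 3) : Bool :=
  ((N.2 0).bind fun M => M.1).getD false

/-- label of the `j`-child of the node pointed to by edge 0 of the top node. -/
def childLab (N : Nbhd 4 Bool 3) (j : Fin 4) : Bool :=
  (((N.2 0).bind fun M => M.2 j).bind fun M => M.1).getD false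

/-- path spec shorthand -/
def pth (l : List (Fin 4)) (h : l.length ≤ 3 := by decide) : PathSpec 4 3 :=
  .path l h

def trans : HQ → HSym → Nbhd 4 Bool 3 → HQ × Bool × (Fin 4 → PathSpec 4 3)
  | .pend _, .b0, _ => (.pend (some false), false, ![pth [0], .missing, .missing, .missing])
  | .pend p, .b1, _ => (if p = some true then .pend11 else .pend (some true), false,
      ![pth [0], .missing, .missing, .missing])
  | .pend (some b), .hash, _ => (.pend none, b, ![.self, pth [0], .missing, .missing])
  | .pend none, .hash, _ => (.pend none, false, ![.self, pth [0,1,1], pth [0,1], pth [0]])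
  | .pend11, .b0, _ => (.pend (some false), false, ![pth [0], .missing, .missing, .missing])
  | .pend11, .b1, _ => (.pend11, false, ![pth [0], .missing, .missing, .missing])
  | .pend11, .hash, N => (.nav (rootLab N), false, ![pth [0], .missing, .missing, .missing])
  | .nav _, .b0, N => (.nav (childLab N 2), false, ![pth [0,2], .missing, .missing, .missing])
  | .nav _, .b1, N => (.nav (childLab N 3), false, ![pth [0,3], .missing, .missing, .missing])
  | .nav _, .hash, _ => (.nav false, false, ![.missing, .missing, .missing, .missing])

abbrev A : SAutomaton HSym where
  d := 4
  dpos := by norm_num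
  Γ := Bool
  finΓ := inferInstance
  k := 3
  Q := HQ
  finQ := inferInstance
  q0 := .pend none
  F := {q | q = .nav true}
  δ := trans

end HardLang
namespace HardLang

/-! ### Binary trees with boolean leaves, and their command encodings -/

inductive BT : Type where
  | lf : Bool → BT
  | nd : BT → BT → BT

def sym (b : Bool) : HSym := if b then .b1 else .b0

def cmds : BT → List HSym
  | .lf b => [sym b, .hash]
  | .nd l r => cmds l ++ cmds r ++ [.hash]

/-! ### Scaffold extension lemmas -/

@[simp] lemma extend_top (S : Scaffold 4 Bool) (γ : Bool) (ps : Fin 4 → PathSpec 4 3) :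
    (S.extend γ ps).top = S.top + 1 := rfl

lemma extend_edge_new_path (S : Scaffold 4 Bool) (γ : Bool) (ps : Fin 4 → PathSpec 4 3)
    (j : Fin 4) (l : List (Fin 4)) (h : l.length ≤ 3) (hps : ps j = .path l h) :
    (S.extend γ ps).edge (S.top + 1) j = S.follow l S.top := by
  simp [Scaffold.extend, hps]

lemma extend_edge_new_self (S : Scaffold 4 Bool) (γ : Bool) (ps : Fin 4 → PathSpec 4 3)
    (j : Fin 4) (hps : ps j = .self) :
    (S.extend γ ps).edge (S.top + 1) j = some (S.top + 1) := by
  simp [Scaffold.extend, hps]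

lemma extend_label_new (S : Scaffold 4 Bool) (γ : Bool) (ps : Fin 4 → PathSpec 4 3) :
    (S.extend γ ps).label (S.top + 1) = some γ := by
  simp [Scaffold.extend]

/-- `S'` extends `S`: same data on nodes `≤ S.top`. -/
structure Ext (S S' : Scaffold 4 Bool) : Prop where
  top_le : S.top ≤ S'.top
  edge_eq : ∀ v, v ≤ S.top → ∀ j, S'.edge v j = S.edge v j
  label_eq : ∀ v, v ≤ S.top → S'.label v = S.label v

lemma Ext.refl (S : Scaffold 4 Bool) : Ext S S := ⟨le_rfl, fun _ _ _ => rfl, fun _ _ => rfl⟩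

lemma Ext.trans {S1 S2 S3 : Scaffold 4 Bool} (h12 : Ext S1 S2) (h23 : Ext S2 S3) :
    Ext S1 S3 where
  top_le := le_trans h12.top_le h23.top_le
  edge_eq v hv j := by rw [h23.edge_eq v (le_trans hv h12.top_le), h12.edge_eq v hv]
  label_eq v hv := by rw [h23.label_eq v (le_trans hv h12.top_le), h12.label_eq v hv]

lemma ext_extend (S : Scaffold 4 Bool) (γ : Bool) (ps : Fin 4 → PathSpec 4 3) :
    Ext S (S.extend γ ps) where
  top_le := by simp
  edge_eq v hv j := by
    have h1 : v ≠ S.top + 1 := by omega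
    simp [Scaffold.extend, h1, hv]
  label_eq v hv := by
    have h1 : v ≠ S.top + 1 := by omega
    simp [Scaffold.extend, h1, hv]

/-! ### Representation of trees and stacks in scaffolds -/

def Rep (S : Scaffold 4 Bool) : BT → ℕ → Prop
  | .lf b, v => S.label v = some b
  | .nd l r, v => ∃ vl vr, S.edge v 2 = some vl ∧ S.edge v 3 = some vr ∧
      Rep S l vl ∧ Rep S r vr

lemma Rep.mono {S S' : Scaffold 4 Bool} {T : BT} {v : ℕ} (h : Rep S T v)
    (hv : v ≤ S.top) (hE : Ext S S') : Rep S' T v := by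
  induction T generalizing v with
  | lf b => simpa [Rep, hE.label_eq v hv] using h
  | nd l r ihl ihr =>
    obtain ⟨vl, vr, h2, h3, hl, hr⟩ := h
    exact ⟨vl, vr, by rw [hE.edge_eq v hv]; exact h2, by rw [hE.edge_eq v hv]; exact h3,
      ihl hl (le_trans (S.back v 2 vl h2) hv), ihr hr (le_trans (S.back v 3 vr h3) hv)⟩

def StackRep (S : Scaffold 4 Bool) : Option ℕ → List BT → Prop
  | o, [] => o = none
  | o, T :: rest => ∃ v, o = some v ∧ v ≤ S.top ∧ Rep S T v ∧ StackRep S (S.edge v 1) rest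

lemma StackRep.mono {S S' : Scaffold 4 Bool} {o : Option ℕ} {st : List BT}
    (h : StackRep S o st) (hE : Ext S S') : StackRep S' o st := by
  induction st generalizing o with
  | nil => exact h
  | cons T rest ih =>
    obtain ⟨v, rfl, hv, hR, hrest⟩ := h
    refine ⟨v, rfl, le_trans hv hE.top_le, hR.mono hv hE, ?_⟩
    rw [hE.edge_eq v hv]
    exact ih hrest

/-- the stack-top pointer: edge 0 of the top node. -/
def TP (S : Scaffold 4 Bool) : Option ℕ := S.edge S.top 0

end HardLang
namespace HardLang

/-! ### Running the automaton -/

def runFrom (c : A.Q × Scaffold A.d A.Γ) (l : List HSym) : A.Q × Scaffold A.d A.Γ :=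
  l.foldl (fun c a => A.step a c) c

lemma runFrom_append (c : A.Q × Scaffold A.d A.Γ) (l1 l2 : List HSym) :
    runFrom c (l1 ++ l2) = runFrom (runFrom c l1) l2 :=
  List.foldl_append

lemma runFrom_cons (c : A.Q × Scaffold A.d A.Γ) (a : HSym) (l : List HSym) :
    runFrom c (a :: l) = runFrom (A.step a c) l := rfl

lemma runFrom_nil (c : A.Q × Scaffold A.d A.Γ) : runFrom c [] = c := rfl

lemma run_eq (x : List HSym) : A.run x = runFrom (A.q0, Scaffold.init A.d A.Γ) x := rfl

lemma step_eq (q : HQ) (S : Scaffold 4 Bool) (a : HSym) :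
    A.step a (q, S) =
      ((trans q a (S.nbhd 3 S.top)).1,
        S.extend (trans q a (S.nbhd 3 S.top)).2.1 (trans q a (S.nbhd 3 S.top)).2.2) := rfl

/-! ### follow/nbhd computations -/

lemma follow_single (S : Scaffold 4 Bool) (v : ℕ) (i : Fin 4) :
    S.follow [i] v = S.edge v i := by
  cases h : S.edge v i <;> simp [Scaffold.follow, h]

lemma follow_pair (S : Scaffold 4 Bool) (v : ℕ) (i j : Fin 4) :
    S.follow [i, j] v = (S.edge v i).bind (fun u => S.edge u j) := by
  cases h : S.edge v i <;> simp [Scaffold.follow, h, follow_single]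

lemma follow_triple (S : Scaffold 4 Bool) (v : ℕ) (i j k : Fin 4) :
    S.follow [i, j, k] v =
      ((S.edge v i).bind (fun u => S.edge u j)).bind (fun u => S.edge u k) := by
  cases h : S.edge v i <;> simp [Scaffold.follow, h, follow_pair]

lemma rootLab_nbhd (S : Scaffold 4 Bool) (v : ℕ) :
    rootLab (S.nbhd 3 v) = ((S.edge v 0).bind S.label).getD false := by
  cases h : S.edge v 0 <;> simp [rootLab, Scaffold.nbhd, h] <;> rfl

lemma childLab_nbhd (S : Scaffold 4 Bool) (v : ℕ) (j : Fin 4) :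
    childLab (S.nbhd 3 v) j =
      (((S.edge v 0).bind (fun u => S.edge u j)).bind S.label).getD false := by
  cases h : S.edge v 0 with
  | none => simp [childLab, Scaffold.nbhd, h] <;> rfl
  | some u =>
    cases h2 : S.edge u j <;> simp [childLab, Scaffold.nbhd, h, h2] <;> dsimp only [Option.map, Option.bind] <;> simp [h2]

/-! ### edge-spec abbreviations -/

def e0only : Fin 4 → PathSpec 4 3 := ![pth [0], .missing, .missing, .missing]
def ePush : Fin 4 → PathSpec 4 3 := ![.self, pth [0], .missing, .missing]
def eComb : Fin 4 → PathSpec 4 3 := ![.self, pth [0,1,1], pth [0,1], pth [0]]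

lemma TP_extend_e0 (S : Scaffold 4 Bool) (γ : Bool) :
    TP (S.extend γ e0only) = TP S := by
  have h := extend_edge_new_path S γ e0only 0 [0] (by decide) rfl
  simp only [TP, extend_top]
  rw [h, follow_single]

end HardLang
namespace HardLang

def eNav (b : Bool) : Fin 4 → PathSpec 4 3 :=
  ![.path [0, if b then 3 else 2] (by simp), .missing, .missing, .missing]

/-! ### micro-step lemmas -/

lemma step_sym (p : Option Bool) (hp : p ≠ some true) (b : Bool) (S : Scaffold 4 Bool) :
    A.step (sym b) (HQ.pend p, S) = (HQ.pend (some b), S.extend false e0only) := by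
  cases b <;> rw [step_eq] <;> simp [sym, trans, hp, e0only]

lemma step_hash_pend (b : Bool) (S : Scaffold 4 Bool) :
    A.step HSym.hash (HQ.pend (some b), S) = (HQ.pend none, S.extend b ePush) := by
  rw [step_eq]; simp [trans, ePush]

lemma step_hash_comb (S : Scaffold 4 Bool) :
    A.step HSym.hash (HQ.pend none, S) = (HQ.pend none, S.extend false eComb) := by
  rw [step_eq]; simp [trans, eComb]

lemma step_b1_pendtrue (S : Scaffold 4 Bool) :
    A.step HSym.b1 (HQ.pend (some true), S) = (HQ.pend11, S.extend false e0only) := by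
  rw [step_eq]; simp [trans, e0only]

lemma step_hash_pend11 (S : Scaffold 4 Bool) :
    A.step HSym.hash (HQ.pend11, S) =
      (HQ.nav (rootLab (S.nbhd 3 S.top)), S.extend false e0only) := by
  rw [step_eq]; simp [trans, e0only]

lemma step_nav (b0 b : Bool) (S : Scaffold 4 Bool) :
    A.step (sym b) (HQ.nav b0, S) =
      (HQ.nav (childLab (S.nbhd 3 S.top) (if b then 3 else 2)),
        S.extend false (eNav b)) := by
  cases b <;> simp [step_eq, sym, trans, eNav] <;> rfl

/-! ### The build-phase lemma -/

lemma build (T : BT) : ∀ (q : HQ) (S : Scaffold 4 Bool) (st : List BT),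
    (q = .pend none ∨ q = .pend (some false)) →
    StackRep S (TP S) st →
    ∃ S' : Scaffold 4 Bool, runFrom (q, S) (cmds T) = (.pend none, S') ∧ Ext S S' ∧
      StackRep S' (TP S') (T :: st) := by
  induction T with
  | lf b =>
    intro q S st hq hst
    obtain rfl | rfl := hq <;>
    · rw [cmds, runFrom_cons, step_sym _ (by simp) b S]
      set S1 := S.extend false e0only with hS1
      rw [runFrom_cons, step_hash_pend b S1, runFrom_nil]
      set S2 := S1.extend b ePush with hS2
      have hE1 : Ext S S1 := ext_extend _ _ _
      have hE2 : Ext S1 S2 := ext_extend _ _ _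
      have hE : Ext S S2 := hE1.trans hE2
      refine ⟨S2, rfl, hE, ?_⟩
      have htp2 : TP S2 = some S2.top := by
        simp only [TP]
        rw [show S2.top = S1.top + 1 from rfl]
        exact extend_edge_new_self S1 b ePush 0 rfl
      have hedge1 : S2.edge S2.top 1 = TP S := by
        rw [show S2.top = S1.top + 1 from rfl,
          extend_edge_new_path S1 b ePush 1 [0] (by decide) rfl, follow_single]
        exact TP_extend_e0 S false
      refine ⟨S2.top, htp2, le_rfl, ?_, ?_⟩
      · show S2.label S2.top = some b
        rw [show S2.top = S1.top + 1 from rfl]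
        exact extend_label_new S1 b ePush
      · rw [hedge1]; exact hst.mono hE
  | nd l r ihl ihr =>
    intro q S st hq hst
    rw [cmds, runFrom_append, runFrom_append]
    obtain ⟨S1, hrun1, hE1, hst1⟩ := ihl q S st hq hst
    rw [hrun1]
    obtain ⟨S2, hrun2, hE2, hst2⟩ := ihr (.pend none) S1 (l :: st) (Or.inl rfl) hst1
    rw [hrun2, show ([HSym.hash] : List HSym) = HSym.hash :: [] from rfl,
      runFrom_cons, step_hash_comb S2, runFrom_nil]
    set S3 := S2.extend false eComb with hS3
    have hE3 : Ext S2 S3 := ext_extend _ _ _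
    obtain ⟨vr, htp2, hvr, hRr, hrest⟩ := hst2
    obtain ⟨vl, hvl1, hvl, hRl, hrest'⟩ := hrest
    have htop3 : S3.top = S2.top + 1 := rfl
    have htp3 : TP S3 = some S3.top := by
      simp only [TP]; rw [htop3]; exact extend_edge_new_self S2 false eComb 0 rfl
    have he2 : S3.edge S3.top 2 = some vl := by
      rw [htop3, extend_edge_new_path S2 false eComb 2 [0, 1] (by decide) rfl, follow_pair]
      rw [show S2.edge S2.top 0 = some vr from htp2]
      simpa using hvl1
    have he3 : S3.edge S3.top 3 = some vr := by
      rw [htop3, extend_edge_new_path S2 false eComb 3 [0] (by decide) rfl, follow_single]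
      exact htp2
    have he1 : S3.edge S3.top 1 = S2.edge vl 1 := by
      rw [htop3, extend_edge_new_path S2 false eComb 1 [0, 1, 1] (by decide) rfl,
        follow_triple, show S2.edge S2.top 0 = some vr from htp2]
      simpa [hvl1] using rfl
    refine ⟨S3, rfl, (hE1.trans hE2).trans hE3, S3.top, htp3, le_rfl, ?_, ?_⟩
    · exact ⟨vl, vr, he2, he3, hRl.mono hvl hE3, hRr.mono hvr hE3⟩
    · rw [he1]; exact hrest'.mono hE3

end HardLang
namespace HardLang

/-! ### padding, switching and navigation -/

lemma pad (j : ℕ) : ∀ (q : HQ) (S : Scaffold 4 Bool) (st : List BT),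
    (q = .pend none ∨ q = .pend (some false)) →
    StackRep S (TP S) st →
    ∃ (q' : HQ) (S' : Scaffold 4 Bool),
      runFrom (q, S) (List.replicate j .b0) = (q', S') ∧
      (q' = .pend none ∨ q' = .pend (some false)) ∧ Ext S S' ∧ StackRep S' (TP S') st := by
  induction j with
  | zero => intro q S st hq hst; exact ⟨q, S, rfl, hq, Ext.refl S, hst⟩
  | succ j ih =>
    intro q S st hq hst
    rw [List.replicate_succ, runFrom_cons]
    obtain rfl | rfl := hq
    all_goals {
      rw [show (HSym.b0 : HSym) = sym false from rfl, step_sym _ (by simp) false S]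
      obtain ⟨q', S', hrun, hq', hE, hst'⟩ := ih (.pend (some false)) (S.extend false e0only) st
        (Or.inr rfl) (by rw [TP_extend_e0]; exact hst.mono (ext_extend _ _ _))
      exact ⟨q', S', hrun, hq', (ext_extend _ _ _).trans hE, hst'⟩ }

def leafAt : BT → List Bool → Option Bool
  | .lf b, [] => some b
  | .nd l r, b :: p => leafAt (if b then r else l) p
  | _, _ => none

def enc (p : List Bool) : List HSym := p.map sym

lemma navigate : ∀ (p : List Bool) (T : BT) (bit b0 : Bool) (v : ℕ) (S : Scaffold 4 Bool),
    Rep S T v → v ≤ S.top → TP S = some v → b0 = (S.label v).getD false →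
    leafAt T p = some bit →
    ∃ S' : Scaffold 4 Bool, runFrom (.nav b0, S) (enc p) = (.nav bit, S') := by
  intro p
  induction p with
  | nil =>
    intro T bit b0 v S hR hv htp hb0 hleaf
    cases T with
    | nd l r => exact absurd hleaf (by simp [leafAt])
    | lf b =>
      simp only [leafAt, Option.some_inj] at hleaf
      have hlab : S.label v = some b := hR
      refine ⟨S, ?_⟩
      simp only [enc, List.map_nil, runFrom_nil, hb0, hlab, Option.getD_some, hleaf]
  | cons b rest ih =>
    intro T bit b0 v S hR hv htp hb0 hleaf
    cases T with
    | lf c => exact absurd hleaf (by simp [leafAt])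
    | nd l r =>
      obtain ⟨vl, vr, hel, her, hRl, hRr⟩ := hR
      simp only [leafAt] at hleaf
      rw [show enc (b :: rest) = sym b :: enc rest from rfl, runFrom_cons, step_nav]
      set j : Fin 4 := if b then 3 else 2 with hj
      set vc : ℕ := if b then vr else vl with hvc
      have hedge : S.edge v j = some vc := by cases b <;> simp [hj, hvc, hel, her]
      have hvcle : vc ≤ v := S.back v j vc hedge
      have hcl : childLab (S.nbhd 3 S.top) j = (S.label vc).getD false := by
        rw [childLab_nbhd, show S.edge S.top 0 = some v from htp]
        simp [hedge]
      set S1 : Scaffold 4 Bool := S.extend false (eNav b) with hS1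
      have hE : Ext S S1 := ext_extend _ _ _
      have htp1 : TP S1 = some vc := by
        simp only [TP]
        rw [show S1.top = S.top + 1 from rfl,
          extend_edge_new_path S false (eNav b) 0 [0, j] (by simp) (by cases b <;> rfl),
          follow_pair, show S.edge S.top 0 = some v from htp]
        simpa using hedge
      have hRc : Rep S1 (if b then r else l) vc := by
        cases b
        · exact hRl.mono (le_trans hvcle hv) hE
        · exact hRr.mono (le_trans hvcle hv) hE
      obtain ⟨S', hrun⟩ := ih (if b then r else l) bit _ vc S1 hRc
        (le_trans (le_trans hvcle hv) hE.top_le) htp1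
        (by rw [hE.label_eq vc (le_trans hvcle hv)]) hleaf
      exact ⟨S', by rw [hcl, hrun]⟩

lemma switch (S : Scaffold 4 Bool) (T : BT) (hst : StackRep S (TP S) [T]) :
    ∃ (S' : Scaffold 4 Bool) (v : ℕ),
      runFrom (.pend none, S) [.b1, .b1, .hash] = (.nav ((S'.label v).getD false), S') ∧
      Rep S' T v ∧ v ≤ S'.top ∧ TP S' = some v := by
  obtain ⟨v, htp, hv, hR, -⟩ := hst
  rw [runFrom_cons, show (HSym.b1 : HSym) = sym true from rfl, step_sym none (by simp) true S]
  rw [runFrom_cons, show A.step (sym true) (HQ.pend (some true), S.extend false e0only) =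
      (HQ.pend11, (S.extend false e0only).extend false e0only) from step_b1_pendtrue _]
  rw [runFrom_cons, step_hash_pend11, runFrom_nil]
  set S1 : Scaffold 4 Bool := S.extend false e0only with hS1
  set S2 : Scaffold 4 Bool := S1.extend false e0only with hS2
  set S3 : Scaffold 4 Bool := S2.extend false e0only with hS3
  have hE1 : Ext S S1 := ext_extend _ _ _
  have hE2 : Ext S1 S2 := ext_extend _ _ _
  have hE3 : Ext S2 S3 := ext_extend _ _ _
  have htp2 : TP S2 = some v := by rw [TP_extend_e0, TP_extend_e0]; exact htp
  have hvle2 : v ≤ S2.top := le_trans hv (le_trans hE1.top_le hE2.top_le)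
  have hroot : rootLab (S2.nbhd 3 S2.top) = (S3.label v).getD false := by
    rw [rootLab_nbhd, show S2.edge S2.top 0 = some v from htp2]
    simp [hE3.label_eq v hvle2]
  refine ⟨S3, v, by rw [hroot], hR.mono hv ((hE1.trans hE2).trans hE3), ?_, ?_⟩
  · exact le_trans hvle2 hE3.top_le
  · rw [TP_extend_e0]; exact htp2

/-! ### full trees and the hard strings -/

def mkTree : ℕ → (List Bool → Bool) → BT
  | 0, f => .lf (f [])
  | D + 1, f => .nd (mkTree D (fun p => f (false :: p))) (mkTree D (fun p => f (true :: p)))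

lemma leafAt_mkTree : ∀ (D : ℕ) (f : List Bool → Bool) (p : List Bool), p.length = D →
    leafAt (mkTree D f) p = some (f p) := by
  intro D
  induction D with
  | zero =>
    intro f p hp
    rw [List.length_eq_zero_iff] at hp
    subst hp; rfl
  | succ D ih =>
    intro f p hp
    cases p with
    | nil => simp at hp
    | cons b rest =>
      simp only [List.length_cons, Nat.add_right_cancel_iff] at hp
      cases b
      · simpa [mkTree, leafAt] using ih _ rest hp
      · simpa [mkTree, leafAt] using ih _ rest hp

def padN (D : ℕ) : ℕ := hardLen D - (3 * 2 ^ D + 2)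

def yStr (D : ℕ) (f : List Bool → Bool) : List HSym :=
  List.replicate (padN D) .b0 ++ cmds (mkTree D f) ++ [.b1, .b1, .hash]

/-- the key characterization: membership of `yStr D f ++ enc p` in the language. -/
lemma mem_lang (D : ℕ) (f : List Bool → Bool) (p : List Bool) (hp : p.length = D) :
    (yStr D f ++ enc p ∈ A.Lang) ↔ f p = true := by
  have hinit : StackRep (Scaffold.init A.d A.Γ) (TP (Scaffold.init A.d A.Γ)) [] := rfl
  obtain ⟨q1, S1, hrun1, hq1, hE1, hst1⟩ :=
    pad (padN D) A.q0 (Scaffold.init A.d A.Γ) [] (Or.inl rfl) hinit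
  obtain ⟨S2, hrun2, hE2, hst2⟩ := build (mkTree D f) q1 S1 [] hq1 hst1
  obtain ⟨S3, v, hrun3, hR3, hv3, htp3⟩ := switch S2 (mkTree D f) hst2
  obtain ⟨S4, hrun4⟩ := navigate p (mkTree D f) (f p) _ v S3 hR3 hv3 htp3 rfl
    (leafAt_mkTree D f p hp)
  have : (A.run (yStr D f ++ enc p)).1 = .nav (f p) := by
    rw [run_eq, yStr, runFrom_append, runFrom_append, runFrom_append,
      hrun1, hrun2, hrun3, hrun4]
  rw [SAutomaton.Lang, Set.mem_setOf_eq, this]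
  show (HQ.nav (f p) ∈ {q : HQ | q = HQ.nav true}) ↔ _
  rw [Set.mem_setOf_eq]
  simp

end HardLang
namespace HardLang

/-! ### lengths -/

lemma cmds_length (T : BT) : 1 ≤ (cmds T).length := by
  cases T <;> simp [cmds] <;> omega

lemma cmds_mkTree_length (D : ℕ) : ∀ f, (cmds (mkTree D f)).length = 3 * 2 ^ D - 1 := by
  induction D with
  | zero => intro f; rfl
  | succ D ih =>
    intro f
    have h1 : (1:ℕ) ≤ 2 ^ D := Nat.one_le_two_pow
    simp only [mkTree, cmds, List.length_append, ih, List.length_cons, List.length_nil]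
    ring_nf
    omega

lemma hardLen_ge (D : ℕ) : 3 * 2 ^ D + 2 + (D + 1) ≤ hardLen D := by
  have h : ∀ n ∈ Finset.range (2 ^ (D + 1)), 4 ≤ 2 * binLen n + 2 := by
    intro n _
    have : 1 ≤ binLen n := le_max_left _ _
    omega
  have hsum : 4 * 2 ^ (D + 1) ≤ ∑ n ∈ Finset.range (2 ^ (D + 1)), (2 * binLen n + 2) := by
    calc 4 * 2 ^ (D + 1) = ∑ _n ∈ Finset.range (2 ^ (D + 1)), 4 := by
          rw [Finset.sum_const, Finset.card_range]; ring
      _ ≤ _ := Finset.sum_le_sum h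
  have h1 : (1:ℕ) ≤ 2 ^ D := Nat.one_le_two_pow
  have : 4 * 2 ^ (D + 1) = 8 * 2 ^ D := by ring
  rw [hardLen]
  omega

lemma yStr_length (D : ℕ) (f : List Bool → Bool) : (yStr D f).length = hardLen D := by
  have h1 : (1:ℕ) ≤ 2 ^ D := Nat.one_le_two_pow
  have h2 := hardLen_ge D
  simp only [yStr, List.length_append, List.length_replicate, cmds_mkTree_length,
    List.length_cons, List.length_nil, padN]
  omega

lemma enc_length (p : List Bool) : (enc p).length = p.length := List.length_map _

/-! ### the lower bound on the number of equivalence classes -/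

instance finiteFixLen (σ : Type) [Finite σ] (ℓ : ℕ) : Finite {y : List σ // y.length = ℓ} :=
  Finite.of_injective (fun y => (fun i : Fin ℓ => y.1.get (Fin.cast y.2.symm i)))
    (by
      rintro ⟨y1, h1⟩ ⟨y2, h2⟩ h
      ext1
      apply List.ext_get (h1.trans h2.symm)
      intro i hi1 hi2
      have := congrFun h ⟨i, by omega⟩
      simpa using this)

lemma numClasses_lower (D : ℕ) : 2 ^ 2 ^ D ≤ numClasses A.Lang (hardLen D) D := by
  classical
  set r := fun y₁ y₂ : {y : List HSym // y.length = hardLen D} =>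
    LEquiv A.Lang D y₁.1 y₂.1 with hr
  -- the functions we encode
  let G := (Fin D → Bool) → Bool
  let fOf : G → List Bool → Bool := fun g p =>
    if hp : p.length = D then g (fun i : Fin D => p.get (Fin.cast hp.symm i)) else false
  let Φ : G → Quot r := fun g => Quot.mk r ⟨yStr D (fOf g), yStr_length D _⟩
  have hΦ : Function.Injective Φ := by
    intro g1 g2 hg
    funext v
    set p : List Bool := List.ofFn v with hp
    have hplen : p.length = D := List.length_ofFn
    have hfg : ∀ g : G, fOf g p = g v := by
      intro g
      simp only [fOf, dif_pos hplen]
      congr 1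
      funext i
      simp [hp, List.get_ofFn]
    -- evaluation map on the quotient
    let ev : Quot r → Prop := Quot.lift (fun y => (y.1 ++ enc p ∈ A.Lang))
      (by
        intro y1 y2 hy
        exact propext (hy (enc p) (by rw [enc_length, hplen])))
    have hev := congrArg ev hg
    simp only [ev, Φ] at hev
    have h1 := mem_lang D (fOf g1) p hplen
    have h2 := mem_lang D (fOf g2) p hplen
    rw [hfg g1] at h1
    rw [hfg g2] at h2
    have : (g1 v = true) ↔ (g2 v = true) := by
      rw [← h1, ← h2, hev]
    cases hv1 : g1 v <;> cases hv2 : g2 v <;> simp_all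
  have hcard : Nat.card G = 2 ^ 2 ^ D := by
    simp [G, Nat.card_eq_fintype_card]
  calc 2 ^ 2 ^ D = Nat.card G := hcard.symm
    _ ≤ Nat.card (Quot r) := Nat.card_le_card_of_injective Φ hΦ
    _ = numClasses A.Lang (hardLen D) D := rfl

end HardLang
namespace OnlineTMFacts

variable {σ : Type} (M : OnlineTM σ)

lemma runCfg_succ (z : List σ) (i : ℕ) :
    M.runCfg z (i + 1) = M.stepCfg z (M.runCfg z i) :=
  Function.iterate_succ_apply' _ _ _

lemma runCfg_add (z : List σ) (a b : ℕ) :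
    M.runCfg z (a + b) = (M.stepCfg z)^[b] (M.runCfg z a) := by
  rw [OnlineTM.runCfg, Nat.add_comm, Function.iterate_add_apply]
  rfl

lemma halt_absorb (z : List σ) (c : OCfg M) (h : c.q ∈ M.Halt) : M.stepCfg z c = c := by
  unfold OnlineTM.stepCfg
  exact if_pos h

lemma step_ipos (z : List σ) (c : OCfg M) :
    c.ipos ≤ (M.stepCfg z c).ipos ∧ (M.stepCfg z c).ipos ≤ c.ipos + 1 := by
  by_cases h : c.q ∈ M.Halt
  · rw [halt_absorb M z c h]; omega
  · have heq : (M.stepCfg z c).ipos =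
        if (M.δ c.q z[c.ipos]? fun i => c.tape i (c.hd i)).2.1 then c.ipos + 1 else c.ipos := by
      unfold OnlineTM.stepCfg
      rw [if_neg h]
    rw [heq]
    split_ifs <;> omega

lemma ipos_mono (z : List σ) {i j : ℕ} (h : i ≤ j) :
    (M.runCfg z i).ipos ≤ (M.runCfg z j).ipos := by
  induction j with
  | zero =>
    have : i = 0 := by omega
    subst this; exact le_rfl
  | succ j ih =>
    rcases Nat.lt_or_ge i (j + 1) with hj | hj
    · have := (step_ipos M z (M.runCfg z j)).1
      rw [← runCfg_succ] at this
      exact le_trans (ih (by omega)) this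
    · have : i = j + 1 := by omega
      subst this; rfl

lemma halt_frozen (z : List σ) {N : ℕ} (h : (M.runCfg z N).q ∈ M.Halt) :
    ∀ j, N ≤ j → M.runCfg z j = M.runCfg z N := by
  intro j hj
  induction j with
  | zero => have : N = 0 := by omega
            subst this; rfl
  | succ j ih =>
    rcases Nat.lt_or_ge N (j + 1) with hj' | hj'
    · have hje := ih (by omega)
      rw [runCfg_succ, hje, halt_absorb M z _ h]
    · have : N = j + 1 := by omega
      subst this; rfl

lemma exists_first_ipos (z : List σ) (ℓ N : ℕ) (h : ℓ ≤ (M.runCfg z N).ipos) :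
    ∃ τ ≤ N, (M.runCfg z τ).ipos = ℓ ∧ ∀ j < τ, (M.runCfg z j).ipos < ℓ := by
  classical
  have hex : ∃ i, ℓ ≤ (M.runCfg z i).ipos := ⟨N, h⟩
  set τ := Nat.find hex with hτ
  have hτle : ℓ ≤ (M.runCfg z τ).ipos := Nat.find_spec hex
  have hmin : ∀ j < τ, (M.runCfg z j).ipos < ℓ := by
    intro j hj
    have := Nat.find_min hex hj
    omega
  have hτN : τ ≤ N := Nat.find_le h
  refine ⟨τ, hτN, ?_, hmin⟩
  rcases Nat.eq_zero_or_pos τ with h0 | h0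
  · rw [h0]
    rw [h0] at hτle
    have : (M.runCfg z 0).ipos = 0 := rfl
    omega
  · have h1 : (M.runCfg z (τ - 1)).ipos < ℓ := hmin _ (by omega)
    have h2 : (M.runCfg z τ).ipos ≤ (M.runCfg z (τ - 1)).ipos + 1 := by
      have := (step_ipos M z (M.runCfg z (τ - 1))).2
      rw [← runCfg_succ] at this
      have heq : τ - 1 + 1 = τ := by omega
      rw [heq] at this
      exact this
    omega

lemma stepCfg_congr (z1 z2 : List σ) (c : OCfg M) (h : z1[c.ipos]? = z2[c.ipos]?) :
    M.stepCfg z1 c = M.stepCfg z2 c := by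
  unfold OnlineTM.stepCfg
  rw [h]

lemma run_agree (z1 z2 : List σ) (hlen : z1.length = z2.length) (ℓ : ℕ)
    (hagree : ∀ p, p < ℓ → z1[p]? = z2[p]?) :
    ∀ i, (∀ j, j < i → (M.runCfg z1 j).ipos < ℓ) → M.runCfg z1 i = M.runCfg z2 i := by
  intro i
  induction i with
  | zero =>
    intro _
    show M.initCfg z1.length = M.initCfg z2.length
    rw [hlen]
  | succ i ih =>
    intro hj
    rw [runCfg_succ, runCfg_succ, ih (fun j hj' => hj j (by omega))]
    have hip : (M.runCfg z2 i).ipos < ℓ := by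
      rw [← ih (fun j hj' => hj j (by omega))]
      exact hj i (by omega)
    exact stepCfg_congr M z1 z2 _ (hagree _ (by rwa [← ih (fun j hj' => hj j (by omega))] at hip ⊢))

lemma steps_bound (z : List σ) (N t : ℕ)
    (hseg : ∀ i j, i ≤ j → j ≤ N → (M.runCfg z i).ipos = (M.runCfg z j).ipos → j - i ≤ t) :
    ∀ d i, i ≤ N → (M.runCfg z N).ipos - (M.runCfg z i).ipos = d →
      N - i ≤ (d + 1) * (t + 1) := by
  intro d
  induction d with
  | zero =>
    intro i hi hd
    have hle := ipos_mono M z hi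
    have heq : (M.runCfg z i).ipos = (M.runCfg z N).ipos := by omega
    have := hseg i N hi le_rfl heq
    nlinarith
  | succ d ih =>
    intro i hi hd
    classical
    have hlt : (M.runCfg z i).ipos + 1 ≤ (M.runCfg z N).ipos := by omega
    have hex : ∃ j, (M.runCfg z i).ipos + 1 ≤ (M.runCfg z j).ipos := ⟨N, hlt⟩
    set i' := Nat.find hex with hi'
    have hspec : (M.runCfg z i).ipos + 1 ≤ (M.runCfg z i').ipos := Nat.find_spec hex
    have hi'N : i' ≤ N := Nat.find_le hlt
    have hii' : i < i' := by
      rcases Nat.lt_or_ge i i' with h | h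
      · exact h
      · exact absurd (ipos_mono M z h) (by omega)
    have hprev : (M.runCfg z (i' - 1)).ipos ≤ (M.runCfg z i).ipos := by
      have := Nat.find_min hex (show i' - 1 < i' by omega)
      omega
    have hprev' : (M.runCfg z i).ipos ≤ (M.runCfg z (i' - 1)).ipos :=
      ipos_mono M z (by omega)
    have hstep : (M.runCfg z i').ipos ≤ (M.runCfg z (i' - 1)).ipos + 1 := by
      have := (step_ipos M z (M.runCfg z (i' - 1))).2
      rw [← runCfg_succ] at this
      have heq : i' - 1 + 1 = i' := by omega
      rwa [heq] at this
    have hipos' : (M.runCfg z i').ipos = (M.runCfg z i).ipos + 1 := by omega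
    have hseg1 : i' - 1 - i ≤ t := by
      apply hseg i (i' - 1) (by omega) (by omega)
      omega
    have hIH := ih i' hi'N (by omega)
    have hmul : (d + 1 + 1) * (t + 1) = (d + 1) * (t + 1) + (t + 1) := by ring
    omega

end OnlineTMFacts
namespace OnlineTMFacts

variable {σ : Type} (M : OnlineTM σ)

/-- two configurations agree on state, input position, and all tape cells within
distance `r` of the (respective) heads. -/
def SimAt (r : ℕ) (c1 c2 : OCfg M) : Prop :=
  c1.q = c2.q ∧ c1.ipos = c2.ipos ∧
  ∀ (i : Fin (M.tapes + 1)) (o : ℤ), o.natAbs ≤ r →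
    c1.tape i (c1.hd i + o) = c2.tape i (c2.hd i + o)

lemma SimAt.mono {r r' : ℕ} (h : r' ≤ r) {c1 c2 : OCfg M} (hs : SimAt M r c1 c2) :
    SimAt M r' c1 c2 :=
  ⟨hs.1, hs.2.1, fun i o ho => hs.2.2 i o (le_trans ho h)⟩

lemma offset_abs (m : TMMove) : m.offset.natAbs ≤ 1 := by
  cases m <;> simp [TMMove.offset]

lemma sim_step (z1 z2 : List σ) (ℓ : ℕ)
    (hagree : ∀ p, ℓ ≤ p → z1[p]? = z2[p]?) (r : ℕ) (c1 c2 : OCfg M)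
    (hsim : SimAt M (r + 1) c1 c2) (hip : ℓ ≤ c1.ipos) :
    SimAt M r (M.stepCfg z1 c1) (M.stepCfg z2 c2) := by
  obtain ⟨hq, hipos, htape⟩ := hsim
  by_cases hh : c1.q ∈ M.Halt
  · rw [halt_absorb M z1 c1 hh, halt_absorb M z2 c2 (hq ▸ hh)]
    exact SimAt.mono M (by omega) ⟨hq, hipos, htape⟩
  · have hh2 : c2.q ∉ M.Halt := hq ▸ hh
    have hinput : z1[c1.ipos]? = z2[c2.ipos]? := by
      rw [← hipos]; exact hagree _ hip
    have hread : (fun i => c1.tape i (c1.hd i)) = (fun i => c2.tape i (c2.hd i)) := by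
      funext i
      have := htape i 0 (by simp)
      simpa using this
    have hδ : M.δ c1.q z1[c1.ipos]? (fun i => c1.tape i (c1.hd i)) =
        M.δ c2.q z2[c2.ipos]? (fun i => c2.tape i (c2.hd i)) := by
      rw [hq, hinput, hread]
    have hs1 : M.stepCfg z1 c1 =
        (let t := M.δ c1.q z1[c1.ipos]? (fun i => c1.tape i (c1.hd i))
         { q := t.1
           ipos := if t.2.1 then c1.ipos + 1 else c1.ipos
           hd := fun i => c1.hd i + (t.2.2 i).2.offset
           tape := fun i p => if p = c1.hd i then (t.2.2 i).1 else c1.tape i p }) := by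
      unfold OnlineTM.stepCfg; rw [if_neg hh]
    have hs2 : M.stepCfg z2 c2 =
        (let t := M.δ c2.q z2[c2.ipos]? (fun i => c2.tape i (c2.hd i))
         { q := t.1
           ipos := if t.2.1 then c2.ipos + 1 else c2.ipos
           hd := fun i => c2.hd i + (t.2.2 i).2.offset
           tape := fun i p => if p = c2.hd i then (t.2.2 i).1 else c2.tape i p }) := by
      unfold OnlineTM.stepCfg; rw [if_neg hh2]
    rw [hs1, hs2]
    set t := M.δ c1.q z1[c1.ipos]? (fun i => c1.tape i (c1.hd i)) with ht
    rw [← hδ]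
    refine ⟨rfl, by simp [hipos], ?_⟩
    intro i o ho
    show (if c1.hd i + (t.2.2 i).2.offset + o = c1.hd i then (t.2.2 i).1
          else c1.tape i (c1.hd i + (t.2.2 i).2.offset + o)) =
        (if c2.hd i + (t.2.2 i).2.offset + o = c2.hd i then (t.2.2 i).1
          else c2.tape i (c2.hd i + (t.2.2 i).2.offset + o))
    have hcond : (c1.hd i + (t.2.2 i).2.offset + o = c1.hd i) ↔
        (c2.hd i + (t.2.2 i).2.offset + o = c2.hd i) := by
      constructor <;> intro h <;> omega
    by_cases hc : c1.hd i + (t.2.2 i).2.offset + o = c1.hd i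
    · rw [if_pos hc, if_pos (hcond.mp hc)]
    · rw [if_neg hc, if_neg (fun h => hc (hcond.mpr h))]
      have habs : ((t.2.2 i).2.offset + o).natAbs ≤ r + 1 := by
        have h1 := offset_abs (t.2.2 i).2
        omega
      have := htape i ((t.2.2 i).2.offset + o) habs
      rw [← add_assoc, ← add_assoc] at this
      exact this

lemma step_ipos_ge (z : List σ) (c : OCfg M) (ℓ : ℕ) (h : ℓ ≤ c.ipos) :
    ℓ ≤ (M.stepCfg z c).ipos :=
  le_trans h (step_ipos M z c).1

lemma sim_iter (z1 z2 : List σ) (ℓ : ℕ)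
    (hagree : ∀ p, ℓ ≤ p → z1[p]? = z2[p]?) (R : ℕ) (c1 c2 : OCfg M)
    (hsim : SimAt M R c1 c2) (hip : ℓ ≤ c1.ipos) :
    ∀ j, j ≤ R → SimAt M (R - j) ((M.stepCfg z1)^[j] c1) ((M.stepCfg z2)^[j] c2) ∧
      ℓ ≤ ((M.stepCfg z1)^[j] c1).ipos := by
  intro j
  induction j with
  | zero => intro _; exact ⟨by simpa using hsim, hip⟩
  | succ j ih =>
    intro hj
    obtain ⟨hs, hp⟩ := ih (by omega)
    rw [Function.iterate_succ_apply', Function.iterate_succ_apply']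
    constructor
    · have : R - j = (R - (j + 1)) + 1 := by omega
      rw [this] at hs
      exact sim_step M z1 z2 ℓ hagree _ _ _ hs hp
    · exact step_ipos_ge M z1 _ ℓ hp

end OnlineTMFacts
namespace OnlineTMFacts

lemma numClasses_upper {σ : Type} [Finite σ] (s0 : σ) (M : OnlineTM σ) (L : Set (List σ))
    (t : ℕ → ℕ) (hM : M.DecidesIn L t) (ℓ m : ℕ) (hm : 1 ≤ m) :
    numClasses L ℓ m ≤
      Nat.card M.Q *
        Nat.card M.Γ ^ ((M.tapes + 1) * (2 * ((m + 1) * (t (ℓ + m) + 1)) + 1)) := by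
  classical
  haveI := M.finQ
  haveI := M.finΓ
  set n := ℓ + m with hn
  set R := (m + 1) * (t n + 1) with hRdef
  set α := {y : List σ // y.length = ℓ} with hα
  have hz0len : ∀ y : α, (y.1 ++ List.replicate m s0).length = n := by
    intro y; simp [y.2, hn]
  have hdata : ∀ y : α, ∃ τ, (M.runCfg (y.1 ++ List.replicate m s0) τ).ipos = ℓ ∧
      ∀ j, j < τ → (M.runCfg (y.1 ++ List.replicate m s0) j).ipos < ℓ := by
    intro y
    obtain ⟨N, _, _, hNipos, _, _⟩ := hM (y.1 ++ List.replicate m s0)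
    have hle : ℓ ≤ (M.runCfg (y.1 ++ List.replicate m s0) N).ipos := by
      rw [hNipos, hz0len y]; omega
    obtain ⟨τ, _, hτ, hmin⟩ := exists_first_ipos M _ ℓ N hle
    exact ⟨τ, hτ, hmin⟩
  choose τ hτ hτmin using hdata
  set cfg : α → OCfg M := fun y => M.runCfg (y.1 ++ List.replicate m s0) (τ y) with hcfg
  set W := M.Q × (Fin (M.tapes + 1) × Fin (2 * R + 1) → M.Γ) with hW
  set w : α → W := fun y => ((cfg y).q,
    fun io => (cfg y).tape io.1 ((cfg y).hd io.1 + ((io.2.val : ℤ) - R))) with hw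
  -- the run on `y ++ x` agrees with the run on `y ++ 0^m` up to time `τ y`
  have hagree_pre : ∀ (y : α) (x : List σ), x.length = m →
      ∀ i, i ≤ τ y → M.runCfg (y.1 ++ List.replicate m s0) i = M.runCfg (y.1 ++ x) i := by
    intro y x hx i hi
    apply run_agree M _ _ (by simp [hz0len y, y.2, hx, hn]) ℓ
    · intro p hp
      rw [List.getElem?_append_left (by rw [y.2]; exact hp),
        List.getElem?_append_left (by rw [y.2]; exact hp)]
    · intro j hj
      exact hτmin y j (by omega)
  -- the crucial claim: equal windows imply `L`-equivalence
  have key : ∀ y1 y2 : α, w y1 = w y2 → LEquiv L m y1.1 y2.1 := by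
    intro y1 y2 hweq x hx
    set z1 := y1.1 ++ x with hz1
    set z2 := y2.1 ++ x with hz2
    have hz1len : z1.length = n := by simp [hz1, y1.2, hx, hn]
    have hz2len : z2.length = n := by simp [hz2, y2.2, hx, hn]
    obtain ⟨N1, h1halt, h1first, h1ipos, h1acc, h1seg⟩ := hM z1
    obtain ⟨N2, h2halt, h2first, h2ipos, h2acc, h2seg⟩ := hM z2
    have hc1 : M.runCfg z1 (τ y1) = cfg y1 := (hagree_pre y1 x hx (τ y1) le_rfl).symm
    have hc2 : M.runCfg z2 (τ y2) = cfg y2 := (hagree_pre y2 x hx (τ y2) le_rfl).symm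
    have hip1 : (M.runCfg z1 (τ y1)).ipos = ℓ := by rw [hc1]; exact hτ y1
    have hip2 : (M.runCfg z2 (τ y2)).ipos = ℓ := by rw [hc2]; exact hτ y2
    -- τ ≤ N
    have hτN1 : τ y1 ≤ N1 := by
      by_contra hcon
      have := halt_frozen M z1 h1halt (τ y1) (by omega)
      rw [this] at hip1
      rw [h1ipos, hz1len] at hip1
      omega
    have hτN2 : τ y2 ≤ N2 := by
      by_contra hcon
      have := halt_frozen M z2 h2halt (τ y2) (by omega)
      rw [this] at hip2
      rw [h2ipos, hz2len] at hip2
      omega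
    -- remaining steps bounded by R
    have hj1 : N1 - τ y1 ≤ R := by
      have := steps_bound M z1 N1 (t n)
        (by intro i j hij hjN hipos; rw [← hz1len]; exact h1seg i j hij hjN hipos)
        m (τ y1) hτN1 (by rw [h1ipos, hip1, hz1len]; omega)
      rw [hRdef]; exact this
    have hj2 : N2 - τ y2 ≤ R := by
      have := steps_bound M z2 N2 (t n)
        (by intro i j hij hjN hipos; rw [← hz2len]; exact h2seg i j hij hjN hipos)
        m (τ y2) hτN2 (by rw [h2ipos, hip2, hz2len]; omega)
      rw [hRdef]; exact this
    -- initial simulation from equal windows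
    have hsim0 : SimAt M R (cfg y1) (cfg y2) := by
      refine ⟨congrArg Prod.fst hweq, ?_, ?_⟩
      · rw [← hc1, ← hc2, hip1, hip2]
      · intro i o ho
        have hcf := congrArg Prod.snd hweq
        have := congrFun hcf (i, ⟨(o + R).toNat, by omega⟩)
        have hcast : (((o + (R:ℤ)).toNat : ℤ)) - R = o := by
          rw [Int.toNat_of_nonneg (by omega)]; ring
        simp only [hw] at this
        rwa [hcast] at this
    -- iterate the simulation
    have hagree_suf : ∀ p, ℓ ≤ p → z1[p]? = z2[p]? := by
      intro p hp
      rw [hz1, hz2, List.getElem?_append_right (by rw [y1.2]; exact hp),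
        List.getElem?_append_right (by rw [y2.2]; exact hp), y1.2, y2.2]
    have hiter := sim_iter M z1 z2 ℓ hagree_suf R (cfg y1) (cfg y2) hsim0
      (by rw [← hc1, hip1])
    set J := max (N1 - τ y1) (N2 - τ y2) with hJ
    obtain ⟨hsJ, -⟩ := hiter J (by omega)
    -- identify the iterates with the full runs
    have hrun1 : (M.stepCfg z1)^[J] (cfg y1) = M.runCfg z1 N1 := by
      rw [← hc1, ← runCfg_add]
      exact (halt_frozen M z1 h1halt (τ y1 + J) (by omega)).symm ▸
        (halt_frozen M z1 h1halt (τ y1 + J) (by omega))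
    have hrun2 : (M.stepCfg z2)^[J] (cfg y2) = M.runCfg z2 N2 := by
      rw [← hc2, ← runCfg_add]
      exact halt_frozen M z2 h2halt (τ y2 + J) (by omega)
    have hqeq : (M.runCfg z1 N1).q = (M.runCfg z2 N2).q := by
      rw [← hrun1, ← hrun2]; exact hsJ.1
    rw [← h1acc, ← h2acc, hqeq]
  -- counting windows
  have hαne : Nonempty α := ⟨⟨List.replicate ℓ s0, by simp⟩⟩
  set rel := fun y₁ y₂ : α => LEquiv L m y₁.1 y₂.1 with hrel
  set g : W → Quot rel := fun wv =>
    if h : ∃ y : α, w y = wv then Quot.mk rel h.choose else Quot.mk rel hαne.some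
    with hg
  have hgsurj : Function.Surjective g := by
    intro qc
    induction qc using Quot.ind with
    | _ y =>
      refine ⟨w y, ?_⟩
      have h : ∃ y' : α, w y' = w y := ⟨y, rfl⟩
      simp only [hg, dif_pos h]
      exact Quot.sound (key _ _ h.choose_spec)
  have hcount : numClasses L ℓ m ≤ Nat.card W :=
    Nat.card_le_card_of_surjective g hgsurj
  have hcard : Nat.card W = Nat.card M.Q * Nat.card M.Γ ^ ((M.tapes + 1) * (2 * R + 1)) := by
    rw [hW, Nat.card_prod, Nat.card_fun, Nat.card_prod]
    simp [Nat.card_eq_fintype_card]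
  rw [hcard] at hcount
  exact hcount

end OnlineTMFacts
namespace Asymp

lemma lin_lt_two_pow (c : ℕ) : ∀ D, 4 * c + 8 ≤ D → c * (D + 1) < 2 ^ D := by
  intro D
  induction D with
  | zero => omega
  | succ D ih =>
    intro hD
    rcases Nat.lt_or_ge (4 * c + 8) (D + 1) with h | h
    · have h1 := ih (by omega)
      have h2 : c ≤ D := by omega
      have h3 : D < 2 ^ D := (Nat.lt_two_pow_self (n := D))
      have h4 : 2 ^ (D + 1) = 2 ^ D + 2 ^ D := by ring
      nlinarith
    · have hD1 : D + 1 = 4 * c + 8 := by omega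
      rw [hD1]
      have h1 : c + 1 ≤ 2 ^ c := (Nat.lt_two_pow_self (n := c))
      have h2 : (2:ℕ) ^ (4 * c + 8) = ((2:ℕ) ^ c) ^ 4 * 256 := by
        rw [pow_add, ← pow_mul, Nat.mul_comm 4 c]
        norm_num
      rw [h2]
      have h6 : 1 ≤ (2:ℕ) ^ c := Nat.one_le_two_pow
      have hx2 : (c + 1) * (c + 1) ≤ 2 ^ c * 2 ^ c := Nat.mul_le_mul h1 h1
      have hx4 : 2 ^ c * 2 ^ c ≤ ((2:ℕ) ^ c) ^ 4 := by
        have : 1 ≤ 2 ^ c * 2 ^ c := Nat.mul_le_mul h6 h6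
        calc 2 ^ c * 2 ^ c = 2 ^ c * 2 ^ c * 1 := by ring
          _ ≤ 2 ^ c * 2 ^ c * (2 ^ c * 2 ^ c) := Nat.mul_le_mul_left _ this
          _ = ((2:ℕ) ^ c) ^ 4 := by ring
      nlinarith [hx2, hx4]

lemma hardLen_upper (D : ℕ) : hardLen D + D ≤ 2 ^ (D + 4) * (D + 1) := by
  have hterm : ∀ n ∈ Finset.range (2 ^ (D + 1)), 2 * binLen n + 2 ≤ 2 * D + 6 := by
    intro n hn
    rw [Finset.mem_range] at hn
    have hsize : n.size ≤ D + 1 := Nat.size_le.2 hn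
    have : binLen n ≤ D + 2 := by
      rw [binLen]
      omega
    omega
  have hsum : ∑ n ∈ Finset.range (2 ^ (D + 1)), (2 * binLen n + 2) ≤
      2 ^ (D + 1) * (2 * D + 6) := by
    calc ∑ n ∈ Finset.range (2 ^ (D + 1)), (2 * binLen n + 2)
        ≤ ∑ _n ∈ Finset.range (2 ^ (D + 1)), (2 * D + 6) := Finset.sum_le_sum hterm
      _ = 2 ^ (D + 1) * (2 * D + 6) := by rw [Finset.sum_const, Finset.card_range]; ring
  have h1 : D + 1 ≤ 2 ^ D := (Nat.lt_two_pow_self (n := D))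
  have h2 : (2:ℕ) ^ (D + 1) = 2 * 2 ^ D := by ring
  have h3 : (2:ℕ) ^ (D + 4) = 16 * 2 ^ D := by ring
  rw [hardLen] at *
  nlinarith [hsum]

lemma hardLen_lower (D : ℕ) : 2 ^ D ≤ hardLen D + D := by
  have := HardLang.hardLen_ge D
  omega

end Asymp
namespace Asymp

open Real Filter

set_option maxHeartbeats 1000000 in
lemma exists_good_D (t : ℕ → ℕ) (ht : LittleOOfNOverLogSq t) (a g T : ℕ)
    (ha : 1 ≤ a) (hg : 1 ≤ g) (hT : 1 ≤ T) :
    ∃ D, 1 ≤ D ∧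
      a * g ^ (T * (2 * ((D + 1) * (t (hardLen D + D) + 1)) + 1)) < 2 ^ 2 ^ D := by
  classical
  set ε : ℝ := 1 / (3840 * g * T) with hε
  have hgpos : (0:ℝ) < g := by exact_mod_cast hg
  have hTpos : (0:ℝ) < T := by exact_mod_cast hT
  have hεpos : 0 < ε := by positivity
  have hev : ∀ᶠ n in atTop, (t n : ℝ) * (Real.log n) ^ 2 / n < ε :=
    ht.eventually_lt_const hεpos
  obtain ⟨n₀, hn₀⟩ := eventually_atTop.1 hev
  set c' := a + 6 * g * T with hc'
  refine ⟨max (max n₀ (8 * c' + 8)) 1, le_max_right _ _, ?_⟩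
  set D := max (max n₀ (8 * c' + 8)) 1 with hD
  have hD1 : 1 ≤ D := le_max_right _ _
  have hDn₀ : n₀ ≤ D := le_trans (le_max_left _ _) (le_max_left _ _)
  have hDc : 4 * (2 * c') + 8 ≤ D := by
    have := le_trans (le_max_right n₀ (8 * c' + 8)) (le_max_left _ 1)
    omega
  set n := hardLen D + D with hn
  have hn2D : 2 ^ D ≤ n := hardLen_lower D
  have hnD : D ≤ n := le_trans (Nat.le_of_lt ((Nat.lt_two_pow_self (n := D)))) hn2D
  have hlin : 2 * c' * (D + 1) < 2 ^ D := lin_lt_two_pow (2 * c') D hDc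
  -- real-number abbreviations
  have hnpos : (0:ℝ) < n := by
    have : 1 ≤ n := le_trans hD1 hnD
    exact_mod_cast Nat.lt_of_lt_of_le Nat.zero_lt_one this
  have hDposR : (0:ℝ) < D := by exact_mod_cast hD1
  have hl2pos : 0 < Real.log 2 := Real.log_pos (by norm_num)
  have hlog : (D : ℝ) * Real.log 2 ≤ Real.log n := by
    have h2 : ((2:ℝ)) ^ D ≤ (n:ℝ) := by exact_mod_cast hn2D
    calc (D:ℝ) * Real.log 2 = Real.log ((2:ℝ) ^ D) := (Real.log_pow 2 D).symm
      _ ≤ Real.log n := Real.log_le_log (by positivity) h2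
  -- step 1 : t(n) · (log n)² < ε n
  have ht1 : (t n : ℝ) * (Real.log n) ^ 2 < ε * n := by
    have := hn₀ n (le_trans hDn₀ hnD)
    rw [div_lt_iff₀ hnpos] at this
    linarith
  -- step 2 : t(n) · D² (log 2)² < ε n
  have ht2 : (t n : ℝ) * ((D:ℝ) ^ 2 * (Real.log 2) ^ 2) < ε * n := by
    have hsq : ((D:ℝ) * Real.log 2) ^ 2 ≤ (Real.log n) ^ 2 :=
      pow_le_pow_left₀ (by positivity) hlog 2
    have hle : (t n : ℝ) * ((D:ℝ) * Real.log 2) ^ 2 ≤ (t n : ℝ) * (Real.log n) ^ 2 := by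
      apply mul_le_mul_of_nonneg_left hsq (by positivity)
    calc (t n : ℝ) * ((D:ℝ) ^ 2 * (Real.log 2) ^ 2)
        = (t n : ℝ) * ((D:ℝ) * Real.log 2) ^ 2 := by ring
      _ ≤ (t n : ℝ) * (Real.log n) ^ 2 := hle
      _ < ε * n := ht1
  -- step 3 : (log 2)² ≥ 1/5, so t(n) · D² < 5 ε n
  have hl5 : (1:ℝ)/5 ≤ (Real.log 2) ^ 2 := by
    nlinarith [Real.log_two_gt_d9]
  have ht3 : (t n : ℝ) * (D:ℝ) ^ 2 < 5 * (ε * n) := by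
    nlinarith [ht2, hl5, sq_nonneg ((D:ℝ)), mul_nonneg (Nat.cast_nonneg (t n)) (sq_nonneg ((D:ℝ)))]
  -- step 4 : n ≤ 32 · 2^D · D
  have hnup : (n:ℝ) ≤ 32 * (2:ℝ) ^ D * D := by
    have h1 : (n:ℝ) ≤ (2:ℝ) ^ (D + 4) * ((D:ℝ) + 1) := by
      exact_mod_cast hardLen_upper D
    have h2 : ((D:ℝ) + 1) ≤ 2 * D := by
      have : (1:ℝ) ≤ D := by exact_mod_cast hD1
      linarith
    have h3 : (2:ℝ) ^ (D + 4) = 16 * 2 ^ D := by rw [pow_add]; ring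
    calc (n:ℝ) ≤ (2:ℝ) ^ (D + 4) * ((D:ℝ) + 1) := h1
      _ ≤ (2:ℝ) ^ (D + 4) * (2 * D) := by
          apply mul_le_mul_of_nonneg_left h2 (by positivity)
      _ = 32 * (2:ℝ) ^ D * D := by rw [h3]; ring
  -- step 5 : t(n) · D < 160 ε 2^D
  have ht5 : (t n : ℝ) * D < 160 * ε * 2 ^ D := by
    have h1 : (t n : ℝ) * (D:ℝ) ^ 2 < 5 * (ε * (32 * (2:ℝ) ^ D * D)) := by
      calc (t n : ℝ) * (D:ℝ) ^ 2 < 5 * (ε * n) := ht3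
        _ ≤ 5 * (ε * (32 * (2:ℝ) ^ D * D)) := by
            apply mul_le_mul_of_nonneg_left _ (by norm_num)
            exact mul_le_mul_of_nonneg_left hnup (le_of_lt hεpos)
    have h2 : ((t n : ℝ) * D) * D < (160 * ε * 2 ^ D) * D := by nlinarith [h1]
    exact lt_of_mul_lt_mul_right h2 (le_of_lt hDposR)
  -- step 6 : 6 g T D · t(n) < 2^D / 4
  have hεval : (960:ℝ) * g * T * ε = 1/4 := by
    rw [hε]
    field_simp
    ring
  have ht6 : 6 * (g:ℝ) * T * D * (t n) < (2:ℝ) ^ D / 4 := by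
    have h1 : 6 * (g:ℝ) * T * ((t n : ℝ) * D) < 6 * (g:ℝ) * T * (160 * ε * 2 ^ D) := by
      apply mul_lt_mul_of_pos_left ht5 (by positivity)
    have h2 : 6 * (g:ℝ) * T * (160 * ε * 2 ^ D) = (960 * g * T * ε) * 2 ^ D := by ring
    rw [h2, hεval] at h1
    calc 6 * (g:ℝ) * T * D * (t n) = 6 * (g:ℝ) * T * ((t n : ℝ) * D) := by ring
      _ < 1/4 * 2 ^ D := h1
      _ = (2:ℝ) ^ D / 4 := by ring
  -- step 7 : a + 6 g T D < 2^D / 2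
  have ht7 : (a:ℝ) + 6 * g * T * D < (2:ℝ) ^ D / 2 := by
    have h1 : (2:ℝ) * c' * ((D:ℝ) + 1) < (2:ℝ) ^ D := by exact_mod_cast hlin
    have h2 : (a:ℝ) + 6 * g * T * D ≤ c' * ((D:ℝ) + 1) := by
      have : (c' : ℝ) = (a:ℝ) + 6 * g * T := by rw [hc']; push_cast; ring
      rw [this]
      have haR : (1:ℝ) ≤ a := by exact_mod_cast ha
      have hD1R : (1:ℝ) ≤ D := by exact_mod_cast hD1
      have expand : ((a:ℝ) + 6*g*T) * ((D:ℝ)+1)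
          = (a:ℝ) + 6*(g:ℝ)*T*D + ((a:ℝ)*D + 6*(g:ℝ)*T) := by ring
      have hnn1 : 0 ≤ (a:ℝ)*D := by positivity
      have hnn2 : 0 ≤ 6*(g:ℝ)*T := by positivity
      linarith
    linarith
  -- conclusion in ℕ
  have hfinal : a + 6 * g * T * D * (t n + 1) < 2 ^ D := by
    have hR : (a:ℝ) + 6 * g * T * D * ((t n : ℝ) + 1) < (2:ℝ) ^ D := by
      have expand : (a:ℝ) + 6 * g * T * D * ((t n : ℝ) + 1)
          = ((a:ℝ) + 6 * g * T * D) + 6 * g * T * D * (t n) := by ring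
      rw [expand]
      have h3 : (2:ℝ) ^ D / 2 + (2:ℝ) ^ D / 4 ≤ 2 ^ D := by
        have : (0:ℝ) < (2:ℝ) ^ D := by positivity
        linarith
      linarith [ht6, ht7]
    exact_mod_cast hR
  -- a * g ^ E ≤ 2 ^ (a + g E) with g E ≤ 6 g T D (t+1)
  set E := T * (2 * ((D + 1) * (t n + 1)) + 1) with hE
  have hgE : g * E ≤ 6 * g * T * D * (t n + 1) := by
    have hRge : 1 ≤ (D + 1) * (t n + 1) := Nat.one_le_iff_ne_zero.2 (by
      have h1 : 0 < (D + 1) * (t n + 1) := Nat.mul_pos (by omega) (by omega)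
      omega)
    have h1 : E ≤ 3 * T * ((D + 1) * (t n + 1)) := by
      rw [hE]; nlinarith [hRge]
    have h2 : (D + 1) * (t n + 1) ≤ 2 * D * (t n + 1) := by nlinarith [hD1]
    calc g * E ≤ g * (3 * T * ((D + 1) * (t n + 1))) := Nat.mul_le_mul_left g h1
      _ ≤ g * (3 * T * (2 * D * (t n + 1))) := by
          apply Nat.mul_le_mul_left
          exact Nat.mul_le_mul_left _ h2
      _ = 6 * g * T * D * (t n + 1) := by ring
  have hexp : a + g * E < 2 ^ D := by omega
  have hag : a * g ^ E ≤ 2 ^ (a + g * E) := by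
    have h1 : a ≤ 2 ^ a := le_of_lt ((Nat.lt_two_pow_self (n := a)))
    have h2 : g ^ E ≤ (2 ^ g) ^ E := Nat.pow_le_pow_left (le_of_lt ((Nat.lt_two_pow_self (n := g)))) E
    calc a * g ^ E ≤ 2 ^ a * (2 ^ g) ^ E := Nat.mul_le_mul h1 h2
      _ = 2 ^ (a + g * E) := by rw [← pow_mul, ← pow_add]
  calc a * g ^ E ≤ 2 ^ (a + g * E) := hag
    _ < 2 ^ 2 ^ D := Nat.pow_lt_pow_right (by norm_num) hexp
  -- done

end Asymp

/-- There is a language `H ⊆ {0,1,#}*` decided by some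
scaffolding automaton with `E_H(ℓ_D, D) ≥ 2^(2^D)` for every `D`, where
`ℓ_D = D + 1 + Σ_{n=0}^{2^(D+1)−1} (2·|n|₂ + 2) = O(D·2^D)`; consequently `H`
is not in `Online(t(n))` for any `t(n) = o(n/(log n)²)`. -/
theorem exists_hard_scaffolding_language :
    ∃ H : Set (List HSym),
      (∃ A : SAutomaton HSym, A.Lang = H) ∧
      (∀ D : ℕ, 2 ^ 2 ^ D ≤ numClasses H (hardLen D) D) ∧
      (∀ t : ℕ → ℕ, LittleOOfNOverLogSq t → H ∉ OnlineClass HSym t) := by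
  refine ⟨HardLang.A.Lang, ⟨HardLang.A, rfl⟩, HardLang.numClasses_lower, ?_⟩
  intro t ht hmem
  obtain ⟨M, hM⟩ := hmem
  haveI := M.finQ
  haveI := M.finΓ
  haveI : Nonempty M.Q := ⟨M.q0⟩
  haveI : Nonempty M.Γ := ⟨M.blank⟩
  have ha : 1 ≤ Nat.card M.Q := Nat.card_pos
  have hg : 1 ≤ Nat.card M.Γ := Nat.card_pos
  obtain ⟨D, hD1, hDlt⟩ := Asymp.exists_good_D t ht (Nat.card M.Q) (Nat.card M.Γ)
    (M.tapes + 1) ha hg (by omega)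
  have hup := OnlineTMFacts.numClasses_upper HSym.b0 M HardLang.A.Lang t hM (hardLen D) D hD1
  have hlow := HardLang.numClasses_lower D
  exact absurd hDlt (not_lt.2 (le_trans hlow hup))
end
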